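/- arXiv:2501.07573 — 4 statements merged into one kernel-verified Lean document; each statement's English description precedes it below -/
import Mathlib

section
/- For all integers k,n ≥ 1, there exists an involution Ψ : SYT(n^k) → SYT(n^k) (i.e. Ψ∘Ψ is the identity) such that for every T ∈ SYT(n^k), asc(T) + asc(Ψ(T)) = (k−1)(n−1). -/
open Finset

/-- The set of cells of the Young diagram with row lengths `lam`
(rows and columns are 0-indexed). -/
def ydCells (lam : List ℕ) : Finset (ℕ × ℕ) :=
  (Finset.range lam.length).biUnion
    (fun r => (Finset.range (lam.getD r 0)).image (fun c => (r, c)))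

/-- `lam` is a partition: a weakly decreasing list of positive integers. -/
def IsPartition (lam : List ℕ) : Prop :=
  lam.Pairwise (· ≥ ·) ∧ ∀ x ∈ lam, 0 < x

/-- A standard Young tableau of shape `lam`: a filling of the cells of `lam` with the
numbers `1, …, lam.sum`, each used exactly once, increasing along rows and columns. -/
structure SYT (lam : List ℕ) where
  entry : ℕ × ℕ → ℕ
  zero_outside : ∀ p, p ∉ ydCells lam → entry p = 0
  bijOn : Set.BijOn entry (ydCells lam : Set (ℕ × ℕ)) (Set.Icc 1 lam.sum)
  row_incr : ∀ r c : ℕ, (r, c + 1) ∈ ydCells lam → entry (r, c) < entry (r, c + 1)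
  col_incr : ∀ r c : ℕ, (r + 1, c) ∈ ydCells lam → entry (r, c) < entry (r + 1, c)

open Classical in
/-- The descent set of a standard Young tableau: those `1 ≤ i ≤ N-1` such that the row of
`i` is strictly above (smaller index than) the row of `i+1`. -/
noncomputable def desSet (lam : List ℕ) (T : SYT lam) : Finset ℕ :=
  (Finset.Icc 1 (lam.sum - 1)).filter (fun i =>
    ∃ p ∈ ydCells lam, ∃ q ∈ ydCells lam,
      T.entry p = i ∧ T.entry q = i + 1 ∧ p.1 < q.1)

open Classical in
/-- The ascent set of a standard Young tableau: those `1 ≤ i ≤ N-1` such that the row of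
`i` is strictly below (larger index than) the row of `i+1`. -/
noncomputable def ascSet (lam : List ℕ) (T : SYT lam) : Finset ℕ :=
  (Finset.Icc 1 (lam.sum - 1)).filter (fun i =>
    ∃ p ∈ ydCells lam, ∃ q ∈ ydCells lam,
      T.entry p = i ∧ T.entry q = i + 1 ∧ q.1 < p.1)

open Classical in
/-- The high descent set: descents `i` such that moreover `i+1` lies strictly to the left
of `i`. -/
noncomputable def hdesSet (lam : List ℕ) (T : SYT lam) : Finset ℕ :=
  (Finset.Icc 1 (lam.sum - 1)).filter (fun i =>
    ∃ p ∈ ydCells lam, ∃ q ∈ ydCells lam,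
      T.entry p = i ∧ T.entry q = i + 1 ∧ p.1 < q.1 ∧ q.2 < p.2)

/-- The number of descents. -/
noncomputable def desNum (lam : List ℕ) (T : SYT lam) : ℕ := (desSet lam T).card

/-- The number of ascents. -/
noncomputable def ascNum (lam : List ℕ) (T : SYT lam) : ℕ := (ascSet lam T).card

/-- The number of high descents. -/
noncomputable def hdesNum (lam : List ℕ) (T : SYT lam) : ℕ := (hdesSet lam T).card

open Classical in
/-- `bounce lam T r s` is the number of `1 ≤ i ≤ N-1` such that `i` lies in (0-indexed)
row `r` and `i+1` lies in (0-indexed) row `s` of `T`. -/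
noncomputable def bounce (lam : List ℕ) (T : SYT lam) (r s : ℕ) : ℕ :=
  ((Finset.Icc 1 (lam.sum - 1)).filter (fun i =>
    ∃ p ∈ ydCells lam, ∃ q ∈ ydCells lam,
      T.entry p = i ∧ T.entry q = i + 1 ∧ p.1 = r ∧ q.1 = s)).card

-- ============ auxiliary development ============
attribute [local instance] Classical.propDecidable

namespace AscWork

theorem syt_ext {lam : List ℕ} {T S : SYT lam} (h : T.entry = S.entry) : T = S := by
  cases T; cases S; simpa using h

theorem repl_sum (k n : ℕ) : (List.replicate k n).sum = k * n := by
  simp [List.sum_replicate]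

theorem getD_replicate {k n r : ℕ} (hr : r < k) :
    (List.replicate k n).getD r 0 = n := by
  rw [List.getD_eq_getElem?_getD, List.getElem?_replicate, if_pos hr]
  rfl

theorem mem_cells {k n : ℕ} {p : ℕ × ℕ} :
    p ∈ ydCells (List.replicate k n) ↔ p.1 < k ∧ p.2 < n := by
  unfold ydCells
  simp only [Finset.mem_biUnion, Finset.mem_range, Finset.mem_image,
    List.length_replicate]
  constructor
  · rintro ⟨r, hr, c, hc, rfl⟩
    rw [getD_replicate hr] at hc
    exact ⟨hr, hc⟩
  · rintro ⟨h1, h2⟩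
    exact ⟨p.1, h1, p.2, by rw [getD_replicate h1]; exact h2, rfl⟩

theorem cells_eq (k n : ℕ) :
    ydCells (List.replicate k n) = (Finset.range k) ×ˢ (Finset.range n) := by
  ext p; simp [mem_cells, Finset.mem_product]

theorem card_cells (k n : ℕ) : (ydCells (List.replicate k n)).card = k * n := by
  simp [cells_eq]

section KN

variable {k n : ℕ}

local notation "lam" => List.replicate k n
local notation "cells" => ydCells (List.replicate k n)
local notation "N" => k * n

theorem entry_mem {T : SYT lam} {p : ℕ × ℕ} (hp : p ∈ cells) :
    T.entry p ∈ Finset.Icc 1 N := by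
  have := T.bijOn.mapsTo hp
  rw [repl_sum] at this
  simpa [Finset.mem_Icc] using this

/-- the cell with a given entry -/
noncomputable def pos (T : SYT lam) (i : ℕ) : ℕ × ℕ :=
  if h : ∃ p ∈ cells, T.entry p = i then h.choose else (0, 0)

theorem pos_spec {T : SYT lam} {i : ℕ} (hi : i ∈ Finset.Icc 1 N) :
    pos T i ∈ cells ∧ T.entry (pos T i) = i := by
  have hsurj := T.bijOn.surjOn
  rw [repl_sum] at hsurj
  have hi' : i ∈ Set.Icc 1 N := by simpa [Finset.mem_Icc] using hi
  obtain ⟨p, hp, hpe⟩ := hsurj hi'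
  have h : ∃ p ∈ cells, T.entry p = i := ⟨p, hp, hpe⟩
  rw [pos, dif_pos h]
  exact ⟨h.choose_spec.1, h.choose_spec.2⟩

theorem pos_mem {T : SYT lam} {i : ℕ} (hi : i ∈ Finset.Icc 1 N) : pos T i ∈ cells :=
  (pos_spec hi).1

theorem entry_pos {T : SYT lam} {i : ℕ} (hi : i ∈ Finset.Icc 1 N) :
    T.entry (pos T i) = i := (pos_spec hi).2

theorem pos_entry {T : SYT lam} {p : ℕ × ℕ} (hp : p ∈ cells) :
    pos T (T.entry p) = p := by
  have h1 := entry_mem (T := T) hp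
  exact T.bijOn.injOn (pos_mem h1) hp (entry_pos h1)

theorem cells_mono_row {p : ℕ × ℕ} {c : ℕ} (hp : p ∈ cells) (hc : c ≤ p.2) :
    (p.1, c) ∈ cells := by
  rw [mem_cells] at hp ⊢; exact ⟨hp.1, lt_of_le_of_lt hc hp.2⟩

theorem cells_mono_col {p : ℕ × ℕ} {r : ℕ} (hp : p ∈ cells) (hr : r ≤ p.1) :
    (r, p.2) ∈ cells := by
  rw [mem_cells] at hp ⊢; exact ⟨lt_of_le_of_lt hr hp.1, hp.2⟩

theorem entry_lt_row {T : SYT lam} {r c c' : ℕ} (hlt : c < c')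
    (h' : (r, c') ∈ cells) : T.entry (r, c) < T.entry (r, c') := by
  induction c' with
  | zero => omega
  | succ d ih =>
    rcases Nat.lt_or_ge c d with h | h
    · have hd : (r, d) ∈ cells := cells_mono_row h' (by simp)
      exact lt_trans (ih h hd) (T.row_incr r d h')
    · have : c = d := by omega
      subst this
      exact T.row_incr r c h'

theorem entry_lt_col {T : SYT lam} {r r' c : ℕ} (hlt : r < r')
    (h' : (r', c) ∈ cells) : T.entry (r, c) < T.entry (r', c) := by
  induction r' with
  | zero => omega
  | succ d ih =>
    rcases Nat.lt_or_ge r d with h | h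
    · have hd : (d, c) ∈ cells := cells_mono_col h' (by simp)
      exact lt_trans (ih h hd) (T.col_incr d c h')
    · have : r = d := by omega
      subst this
      exact T.col_incr r c h'

/-- same row, smaller entry implies smaller column -/
theorem same_row_col {T : SYT lam} {p q : ℕ × ℕ} (hp : p ∈ cells) (hq : q ∈ cells)
    (hrow : p.1 = q.1) (hlt : T.entry p < T.entry q) : p.2 < q.2 := by
  rcases Nat.lt_trichotomy p.2 q.2 with h | h | h
  · exact h
  · exfalso
    have hpq : p = q := Prod.ext hrow h
    rw [hpq] at hlt
    exact lt_irrefl _ hlt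
  · exfalso
    have hpp : (p.1, p.2) ∈ cells := by rw [Prod.mk.eta]; exact hp
    have h2 := entry_lt_row (T := T) (r := p.1) h hpp
    rw [Prod.mk.eta] at h2
    have hq2 : (p.1, q.2) = q := by rw [hrow, Prod.mk.eta]
    rw [hq2] at h2
    omega

theorem ascSet_iff {T : SYT lam} {i : ℕ} :
    i ∈ ascSet lam T ↔
      i ∈ Finset.Icc 1 (N - 1) ∧ (pos T (i + 1)).1 < (pos T i).1 := by
  rw [ascSet, Finset.mem_filter, repl_sum]
  constructor
  · rintro ⟨hmem, p, hp, q, hq, hpe, hqe, hlt⟩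
    refine ⟨hmem, ?_⟩
    have hip : pos T i = p := by rw [← hpe, pos_entry hp]
    have hiq : pos T (i + 1) = q := by rw [← hqe, pos_entry hq]
    rw [hip, hiq]; exact hlt
  · rintro ⟨hmem, hlt⟩
    have hi1 : i ∈ Finset.Icc 1 N := by
      simp only [Finset.mem_Icc] at hmem ⊢; omega
    have hi2 : i + 1 ∈ Finset.Icc 1 N := by
      simp only [Finset.mem_Icc] at hmem ⊢; omega
    exact ⟨hmem, pos T i, pos_mem hi1, pos T (i + 1), pos_mem hi2,
      entry_pos hi1, entry_pos hi2, hlt⟩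

/-- for an ascent, the column strictly increases -/
theorem asc_col_lt {T : SYT lam} {i : ℕ} (hi : i ∈ ascSet lam T) :
    (pos T i).2 < (pos T (i + 1)).2 := by
  obtain ⟨hmem, hrow⟩ := ascSet_iff.mp hi
  simp only [Finset.mem_Icc] at hmem
  have hi1 : i ∈ Finset.Icc 1 N := by simp only [Finset.mem_Icc]; omega
  have hi2 : i + 1 ∈ Finset.Icc 1 N := by simp only [Finset.mem_Icc]; omega
  have hp : pos T i ∈ cells := pos_mem hi1
  have hq : pos T (i + 1) ∈ cells := pos_mem hi2
  have hep : T.entry (pos T i) = i := entry_pos hi1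
  have heqq : T.entry (pos T (i + 1)) = i + 1 := entry_pos hi2
  by_contra hcol
  push_neg at hcol
  have hx : ((pos T (i+1)).1, (pos T i).2) ∈ cells := by
    rw [mem_cells] at hp hq ⊢; exact ⟨hq.1, hp.2⟩
  have h1 : T.entry ((pos T (i+1)).1, (pos T i).2) < T.entry (pos T i) := by
    have hpp : ((pos T i).1, (pos T i).2) ∈ cells := by rw [Prod.mk.eta]; exact hp
    have := entry_lt_col (T := T) hrow hpp
    rwa [Prod.mk.eta] at this
  have h2 : i + 1 ≤ T.entry ((pos T (i+1)).1, (pos T i).2) := by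
    rcases Nat.lt_or_ge (pos T (i+1)).2 (pos T i).2 with h | h
    · have hlt := entry_lt_row (T := T) (r := (pos T (i+1)).1) h hx
      rw [Prod.mk.eta] at hlt
      omega
    · have hc : (pos T (i+1)).2 = (pos T i).2 := by omega
      rw [← hc, Prod.mk.eta, heqq]
  omega

theorem ascSet_subset {T : SYT lam} : ascSet lam T ⊆ Finset.Icc 1 (N - 1) := by
  intro i hi; exact (ascSet_iff.mp hi).1

theorem ascNum_le {T : SYT lam} (hk : 1 ≤ k) (hn : 1 ≤ n) :
    ascNum lam T ≤ (k - 1) * (n - 1) := by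
  rw [ascNum]
  have : (ascSet lam T).card ≤ ((Finset.range (k-1)) ×ˢ (Finset.Icc 1 (n-1))).card := by
    apply Finset.card_le_card_of_injOn (fun i => pos T (i + 1))
    · intro i hi
      obtain ⟨hmem, hrow⟩ := ascSet_iff.mp hi
      simp only [Finset.mem_Icc] at hmem
      have hi1 : i ∈ Finset.Icc 1 N := by simp only [Finset.mem_Icc]; omega
      have hi2 : i + 1 ∈ Finset.Icc 1 N := by simp only [Finset.mem_Icc]; omega
      have hcol := asc_col_lt hi
      have h1 := pos_mem (T := T) hi1
      have h2 := pos_mem (T := T) hi2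
      rw [mem_cells] at h1 h2
      simp only [Finset.mem_coe, Finset.mem_product, Finset.mem_range, Finset.mem_Icc]
      constructor
      · omega
      · omega
    · intro i hi j hj heq
      have heq' : pos T (i + 1) = pos T (j + 1) := heq
      have hi' := (ascSet_iff.mp (Finset.mem_coe.mp hi)).1
      have hj' := (ascSet_iff.mp (Finset.mem_coe.mp hj)).1
      simp only [Finset.mem_Icc] at hi' hj'
      have hi1 : i + 1 ∈ Finset.Icc 1 N := by simp only [Finset.mem_Icc]; omega
      have hj1 : j + 1 ∈ Finset.Icc 1 N := by simp only [Finset.mem_Icc]; omega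
      have := entry_pos (T := T) hi1
      rw [heq', entry_pos hj1] at this
      omega
  simpa [Nat.card_Icc] using this

end KN

/-- row-major order key -/
def om (n : ℕ) (p : ℕ × ℕ) : ℕ := p.1 * n + p.2

theorem lex_lt {a b x y B : ℕ} (hx : x < B) (hy : y < B) :
    a * B + x < b * B + y ↔ a < b ∨ (a = b ∧ x < y) := by
  constructor
  · intro h
    rcases Nat.lt_trichotomy a b with h1 | h1 | h1
    · exact Or.inl h1
    · subst h1; right; exact ⟨rfl, by omega⟩
    · exfalso
      have h2 : (b + 1) * B ≤ a * B := Nat.mul_le_mul_right B h1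
      rw [Nat.succ_mul] at h2; omega
  · rintro (h | ⟨rfl, h⟩)
    · have h2 : (a + 1) * B ≤ b * B := Nat.mul_le_mul_right B h
      rw [Nat.succ_mul] at h2; omega
    · omega

theorem om_lt_row {n : ℕ} {p q : ℕ × ℕ} (h : p.1 < q.1) (hp : p.2 < n) :
    om n p < om n q := by
  unfold om
  have h2 : (p.1 + 1) * n ≤ q.1 * n := Nat.mul_le_mul_right n h
  rw [Nat.succ_mul] at h2; omega

theorem om_row_le {n : ℕ} {p q : ℕ × ℕ} (hq : q.2 < n) (h : om n p < om n q) :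
    p.1 ≤ q.1 := by
  by_contra hc
  push_neg at hc
  have := om_lt_row hc hq
  omega

theorem om_lt_same {n : ℕ} {p q : ℕ × ℕ} (h : p.1 = q.1) (h2 : p.2 < q.2) :
    om n p < om n q := by
  unfold om; rw [h]; omega

theorem om_lt_N {k n : ℕ} {p : ℕ × ℕ} (h1 : p.1 < k) (h2 : p.2 < n) :
    om n p < k * n := by
  unfold om
  have h3 : (p.1 + 1) * n ≤ k * n := Nat.mul_le_mul_right n h1
  rw [Nat.succ_mul] at h3; omega

theorem om_inj {n : ℕ} {p q : ℕ × ℕ} (hp : p.2 < n) (hq : q.2 < n)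
    (h : om n p = om n q) : p = q := by
  rcases Nat.lt_trichotomy p.1 q.1 with h1 | h1 | h1
  · have := om_lt_row h1 hp; omega
  · unfold om at h
    rw [h1] at h
    have : p.2 = q.2 := by omega
    exact Prod.ext h1 this
  · have := om_lt_row h1 hq; omega

/-- rank of a cell w.r.t. an injective key -/
noncomputable def rk (k n : ℕ) (K : ℕ × ℕ → ℕ) (p : ℕ × ℕ) : ℕ :=
  if p ∈ ydCells (List.replicate k n) then
    ((ydCells (List.replicate k n)).filter (fun q => K q ≤ K p)).card else 0

section RK

variable {k n : ℕ} {K : ℕ × ℕ → ℕ}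

local notation "lam" => List.replicate k n
local notation "cells" => ydCells (List.replicate k n)
local notation "N" => k * n

variable (hinj : ∀ p ∈ ydCells (List.replicate k n), ∀ q ∈ ydCells (List.replicate k n), K p = K q → p = q)

theorem rk_lt_of_K_lt {p q : ℕ × ℕ} (hp : p ∈ cells) (hq : q ∈ cells)
    (h : K p < K q) : rk k n K p < rk k n K q := by
  rw [rk, if_pos hp, rk, if_pos hq]
  apply Finset.card_lt_card
  constructor
  · intro x hx
    rw [Finset.mem_filter] at hx ⊢
    exact ⟨hx.1, by omega⟩
  · intro hsub
    have : q ∈ Finset.filter (fun x => K x ≤ K q) (ydCells (List.replicate k n)) := by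
      rw [Finset.mem_filter]; exact ⟨hq, le_rfl⟩
    have := hsub this
    rw [Finset.mem_filter] at this
    omega

include hinj in
theorem rk_lt_iff {p q : ℕ × ℕ} (hp : p ∈ cells) (hq : q ∈ cells) :
    rk k n K p < rk k n K q ↔ K p < K q := by
  constructor
  · intro h
    rcases Nat.lt_trichotomy (K p) (K q) with h1 | h1 | h1
    · exact h1
    · exfalso; rw [hinj p hp q hq h1] at h; omega
    · exfalso; have := rk_lt_of_K_lt hq hp h1; omega
  · exact rk_lt_of_K_lt hp hq

theorem rk_mem {p : ℕ × ℕ} (hp : p ∈ cells) : rk k n K p ∈ Finset.Icc 1 N := by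
  rw [rk, if_pos hp, Finset.mem_Icc]
  constructor
  · rw [Nat.one_le_iff_ne_zero, ← Nat.pos_iff_ne_zero, Finset.card_pos]
    exact ⟨p, by rw [Finset.mem_filter]; exact ⟨hp, le_rfl⟩⟩
  · calc (Finset.filter (fun q => K q ≤ K p) (ydCells (List.replicate k n))).card
        ≤ (ydCells (List.replicate k n)).card := Finset.card_le_card (Finset.filter_subset _ _)
      _ = N := card_cells k n

include hinj in
theorem rk_injOn : Set.InjOn (rk k n K) (cells : Set (ℕ × ℕ)) := by
  intro p hp q hq h
  rcases Nat.lt_trichotomy (K p) (K q) with h1 | h1 | h1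
  · have := rk_lt_of_K_lt (Finset.mem_coe.mp hp) (Finset.mem_coe.mp hq) h1; omega
  · exact hinj p (Finset.mem_coe.mp hp) q (Finset.mem_coe.mp hq) h1
  · have := rk_lt_of_K_lt (Finset.mem_coe.mp hq) (Finset.mem_coe.mp hp) h1; omega

include hinj in
theorem rk_bijOn : Set.BijOn (rk k n K) (cells : Set (ℕ × ℕ)) (Set.Icc 1 N) := by
  refine ⟨?_, rk_injOn hinj, ?_⟩
  · intro p hp
    have := rk_mem (K := K) (Finset.mem_coe.mp hp)
    simpa [Finset.mem_Icc, Set.mem_Icc] using this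
  · -- surjective
    have himg : Finset.image (rk k n K) (ydCells (List.replicate k n)) = Finset.Icc 1 N := by
      apply Finset.eq_of_subset_of_card_le
      · intro x hx
        rw [Finset.mem_image] at hx
        obtain ⟨p, hp, rfl⟩ := hx
        exact rk_mem hp
      · rw [Finset.card_image_of_injOn (rk_injOn hinj), card_cells, Nat.card_Icc]
        omega
    intro x hx
    have hx' : x ∈ Finset.Icc 1 N := by simpa [Finset.mem_Icc, Set.mem_Icc] using hx
    rw [← himg, Finset.mem_image] at hx'
    obtain ⟨p, hp, hpe⟩ := hx'
    exact ⟨p, Finset.mem_coe.mpr hp, hpe⟩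

end RK

/-- build an SYT from a key that increases along rows and columns -/
noncomputable def buildSYT (k n : ℕ) (K : ℕ × ℕ → ℕ)
    (hinj : ∀ p ∈ ydCells (List.replicate k n), ∀ q ∈ ydCells (List.replicate k n),
      K p = K q → p = q)
    (hrow : ∀ r c, (r, c + 1) ∈ ydCells (List.replicate k n) → K (r, c) < K (r, c + 1))
    (hcol : ∀ r c, (r + 1, c) ∈ ydCells (List.replicate k n) → K (r, c) < K (r + 1, c)) :
    SYT (List.replicate k n) where
  entry := rk k n K
  zero_outside := by
    intro p hp
    rw [rk, if_neg hp]
  bijOn := by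
    rw [repl_sum]
    exact rk_bijOn hinj
  row_incr := by
    intro r c hc
    have h1 : (r, c) ∈ ydCells (List.replicate k n) := by
      rw [mem_cells] at hc ⊢; exact ⟨hc.1, by omega⟩
    exact rk_lt_of_K_lt h1 hc (hrow r c hc)
  col_incr := by
    intro r c hc
    have h1 : (r, c) ∈ ydCells (List.replicate k n) := by
      rw [mem_cells] at hc ⊢; exact ⟨by omega, hc.2⟩
    exact rk_lt_of_K_lt h1 hc (hcol r c hc)

section KN2

variable {k n : ℕ}

local notation "lam" => List.replicate k n
local notation "cells" => ydCells (List.replicate k n)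
local notation "N" => k * n

/-- if a key is strictly increasing along the entry order of T, then the built SYT is T -/
theorem buildSYT_eq {T : SYT lam} {K : ℕ × ℕ → ℕ}
    (hinj : ∀ p ∈ cells, ∀ q ∈ cells, K p = K q → p = q)
    (hrow : ∀ r c, (r, c + 1) ∈ cells → K (r, c) < K (r, c + 1))
    (hcol : ∀ r c, (r + 1, c) ∈ cells → K (r, c) < K (r + 1, c))
    (hconsec : ∀ i, 1 ≤ i → i + 1 ≤ N → K (pos T i) < K (pos T (i + 1))) :
    buildSYT k n K hinj hrow hcol = T := by
  -- chain: entry order matches K order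
  have chain : ∀ j i, 1 ≤ i → i < j → j ≤ N → K (pos T i) < K (pos T j) := by
    intro j
    induction j with
    | zero => intro i h1 h2 h3; omega
    | succ j ih =>
      intro i h1 h2 h3
      rcases Nat.lt_or_ge i j with h | h
      · have h4 : 1 ≤ j := by omega
        exact lt_trans (ih i h1 h (by omega)) (hconsec j h4 h3)
      · have : i = j := by omega
        subst this
        exact hconsec i h1 h3
  have key : ∀ p ∈ cells, ∀ q ∈ cells, (K q ≤ K p ↔ T.entry q ≤ T.entry p) := by
    intro p hp q hq
    have hep := entry_mem (T := T) hp
    have heq := entry_mem (T := T) hq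
    rw [Finset.mem_Icc] at hep heq
    constructor
    · intro h
      by_contra hc
      push_neg at hc
      have := chain (T.entry q) (T.entry p) hep.1 hc heq.2
      rw [pos_entry hp, pos_entry hq] at this
      omega
    · intro h
      rcases Nat.lt_or_ge (T.entry q) (T.entry p) with h1 | h1
      · have := chain (T.entry p) (T.entry q) heq.1 h1 hep.2
        rw [pos_entry hp, pos_entry hq] at this
        omega
      · have h2 : T.entry q = T.entry p := by omega
        have : q = p := by
          have := pos_entry (T := T) hq
          rw [h2, pos_entry hp] at this
          exact this.symm
        rw [this]
  apply syt_ext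
  funext p
  show rk k n K p = T.entry p
  by_cases hp : p ∈ cells
  · rw [rk, if_pos hp]
    have hfeq : Finset.filter (fun q => K q ≤ K p) (ydCells (List.replicate k n)) =
        Finset.filter (fun q => T.entry q ≤ T.entry p) (ydCells (List.replicate k n)) := by
      apply Finset.filter_congr
      intro q hq
      exact key p hp q hq
    rw [hfeq]
    have hep := entry_mem (T := T) hp
    rw [Finset.mem_Icc] at hep
    have : (Finset.filter (fun q => T.entry q ≤ T.entry p) (ydCells (List.replicate k n))).card =
        (Finset.Icc 1 (T.entry p)).card := by
      apply Finset.card_nbij (i := T.entry)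
      · intro q hq
        rw [Finset.mem_coe, Finset.mem_filter] at hq
        have := entry_mem (T := T) hq.1
        rw [Finset.mem_Icc] at this
        rw [Finset.mem_coe, Finset.mem_Icc]
        exact ⟨this.1, hq.2⟩
      · intro q hq q' hq' h
        simp only [Finset.coe_filter, Set.mem_setOf_eq] at hq hq'
        have h1 := pos_entry (T := T) hq.1
        rw [h, pos_entry hq'.1] at h1
        exact h1.symm
      · intro j hj
        simp only [Finset.coe_Icc, Set.mem_Icc] at hj
        have hj' : j ∈ Finset.Icc 1 N := by
          rw [Finset.mem_Icc]; omega
        refine ⟨pos T j, ?_, entry_pos hj'⟩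
        simp only [Finset.coe_filter, Set.mem_setOf_eq]
        refine ⟨pos_mem hj', ?_⟩
        rw [entry_pos hj']
        exact hj.2
    rw [this, Nat.card_Icc]
    omega
  · rw [rk, if_neg hp, T.zero_outside p hp]

end KN2


/-- monotone sequences on [1,N] with values in [1,t], strict at S -/
def GCond (N : ℕ) (S : Finset ℕ) (t : ℕ) (a : ℕ → ℕ) : Prop :=
  (∀ i, i ∉ Finset.Icc 1 N → a i = 0) ∧
  (∀ i, i ∈ Finset.Icc 1 N → 1 ≤ a i ∧ a i ≤ t) ∧
  (∀ i, 1 ≤ i → i + 1 ≤ N → a i ≤ a (i + 1)) ∧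
  (∀ i ∈ S, a i < a (i + 1))

instance gcond_finite (N t : ℕ) (SS : Finset ℕ) : Finite {a : ℕ → ℕ // GCond N SS t a} := by
  apply Finite.of_injective
    (fun a => (fun i : (Finset.Icc 1 N : Finset ℕ) =>
      (⟨min (a.1 i.1) t, by omega⟩ : Fin (t + 1))))
  intro a b heq
  apply Subtype.ext
  funext i
  by_cases hi : i ∈ Finset.Icc 1 N
  · have hcong := congrFun heq ⟨i, hi⟩
    simp only [Fin.mk.injEq] at hcong
    obtain ⟨-, ab, -, -⟩ := a.2
    obtain ⟨-, bb, -, -⟩ := b.2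
    have h1 := ab i hi
    have h2 := bb i hi
    omega
  · rw [a.2.1 i hi, b.2.1 i hi]

theorem gcond_mono {N t : ℕ} {S : Finset ℕ} {a : ℕ → ℕ} (h : GCond N S t a) :
    ∀ i j, 1 ≤ i → i ≤ j → j ≤ N → a i ≤ a j := by
  intro i j h1 h2 h3
  induction j with
  | zero => omega
  | succ j ih =>
    rcases Nat.lt_or_ge i (j + 1) with hle | hle
    · have h4 : a i ≤ a j := ih (by omega) (by omega)
      have h5 : a j ≤ a (j + 1) := h.2.2.1 j (by omega) h3
      omega
    · have : i = j + 1 := by omega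
      rw [this]

def cnt (S : Finset ℕ) (i : ℕ) : ℕ := (S.filter (· < i)).card

def dnt (S : Finset ℕ) (i : ℕ) : ℕ := (S.filter (fun s => i ≤ s)).card

theorem cnt_add_dnt (S : Finset ℕ) (i : ℕ) : cnt S i + dnt S i = S.card := by
  rw [cnt, dnt]
  have : S.filter (fun s => i ≤ s) = S.filter (fun s => ¬ (s < i)) := by
    apply Finset.filter_congr; intro x _; constructor <;> (intro; omega)
  rw [this]
  exact Finset.card_filter_add_card_filter_not _

theorem cnt_succ (S : Finset ℕ) (i : ℕ) :
    cnt S (i + 1) = cnt S i + (if i ∈ S then 1 else 0) := by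
  rw [cnt, cnt]
  have h1 : S.filter (· < i + 1) = S.filter (fun x => x < i ∨ x = i) := by
    apply Finset.filter_congr; intro x _; constructor <;> (intro; omega)
  rw [h1, Finset.filter_or, Finset.card_union_of_disjoint]
  · congr 1
    rw [Finset.filter_eq']
    split <;> simp
  · rw [Finset.disjoint_filter]
    intro x _ h1 h2
    omega

theorem dnt_succ (S : Finset ℕ) (i : ℕ) :
    dnt S i = dnt S (i + 1) + (if i ∈ S then 1 else 0) := by
  rw [dnt, dnt]
  have h1 : S.filter (fun s => i ≤ s) = S.filter (fun x => i + 1 ≤ x ∨ x = i) := by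
    apply Finset.filter_congr; intro x _; constructor <;> (intro; omega)
  rw [h1, Finset.filter_or, Finset.card_union_of_disjoint]
  · congr 1
    rw [Finset.filter_eq']
    split <;> simp
  · rw [Finset.disjoint_filter]
    intro x _ h1 h2
    omega

theorem cnt_one {N : ℕ} {S : Finset ℕ} (hS : S ⊆ Finset.Icc 1 (N - 1)) : cnt S 1 = 0 := by
  rw [cnt, Finset.card_eq_zero, Finset.filter_eq_empty_iff]
  intro x hx
  have := hS hx
  rw [Finset.mem_Icc] at this
  omega

theorem dnt_N {N : ℕ} {S : Finset ℕ} (hN : 1 ≤ N) (hS : S ⊆ Finset.Icc 1 (N - 1)) :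
    dnt S N = 0 := by
  rw [dnt, Finset.card_eq_zero, Finset.filter_eq_empty_iff]
  intro x hx
  have := hS hx
  rw [Finset.mem_Icc] at this
  omega

theorem cnt_le_card (S : Finset ℕ) (i : ℕ) : cnt S i ≤ S.card :=
  Finset.card_le_card (Finset.filter_subset _ _)

theorem gcond_lower {N t : ℕ} {S : Finset ℕ} {a : ℕ → ℕ}
    (hS : S ⊆ Finset.Icc 1 (N - 1)) (h : GCond N S t a) :
    ∀ i, 1 ≤ i → i ≤ N → cnt S i + 1 ≤ a i := by
  intro i
  induction i with
  | zero => omega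
  | succ i ih =>
    intro _ hle
    by_cases hi : i = 0
    · subst hi
      simp only [Nat.zero_add]
      rw [cnt_one hS]
      have := (h.2.1 1 (by rw [Finset.mem_Icc]; omega)).1
      omega
    · have h4 := ih (by omega) (by omega)
      rw [cnt_succ]
      by_cases hiS : i ∈ S
      · have := h.2.2.2 i hiS
        rw [if_pos hiS]
        omega
      · have := h.2.2.1 i (by omega) hle
        rw [if_neg hiS]
        omega

theorem gcond_upper {N t : ℕ} {S : Finset ℕ} {a : ℕ → ℕ} (hN : 1 ≤ N)
    (hS : S ⊆ Finset.Icc 1 (N - 1)) (h : GCond N S t a) :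
    ∀ j i, 1 ≤ i → i + j = N → a i + dnt S i ≤ t := by
  intro j
  induction j with
  | zero =>
    intro i h1 h2
    have h3 : i = N := by omega
    subst h3
    rw [dnt_N hN hS]
    have := (h.2.1 i (by rw [Finset.mem_Icc]; omega)).2
    omega
  | succ j ih =>
    intro i h1 h2
    have h5 := ih (i + 1) (by omega) (by omega)
    rw [dnt_succ S i]
    by_cases hiS : i ∈ S
    · have := h.2.2.2 i hiS
      rw [if_pos hiS]
      omega
    · have := h.2.2.1 i (by omega) (by omega)
      rw [if_neg hiS]
      omega

/-- the strip equivalence: remove the required strict jumps -/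
noncomputable def stripEquiv (N : ℕ) (hN : 1 ≤ N) (S : Finset ℕ)
    (hS : S ⊆ Finset.Icc 1 (N - 1)) (t : ℕ) :
    {a : ℕ → ℕ // GCond N S t a} ≃ {b : ℕ → ℕ // GCond N ∅ (t - S.card) b} where
  toFun a := ⟨fun i => if i ∈ Finset.Icc 1 N then a.1 i - cnt S i else 0, by
    obtain ⟨az, ab, am, as⟩ := a.2
    refine ⟨fun i hi => by simp only [if_neg hi], fun i hi => ?_, fun i h1 h2 => ?_, by simp⟩
    · simp only [if_pos hi]
      rw [Finset.mem_Icc] at hi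
      have hl := gcond_lower hS a.2 i hi.1 hi.2
      have hu := gcond_upper hN hS a.2 (N - i) i hi.1 (by omega)
      have hcd := cnt_add_dnt S i
      omega
    · have hi1 : i ∈ Finset.Icc 1 N := by rw [Finset.mem_Icc]; omega
      have hi2 : i + 1 ∈ Finset.Icc 1 N := by rw [Finset.mem_Icc]; omega
      simp only [if_pos hi1, if_pos hi2, cnt_succ]
      have hl := gcond_lower hS a.2 i h1 (by omega)
      by_cases hiS : i ∈ S
      · have := as i hiS
        rw [if_pos hiS]
        omega
      · have := am i h1 h2
        rw [if_neg hiS]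
        omega⟩
  invFun b := ⟨fun i => if i ∈ Finset.Icc 1 N then b.1 i + cnt S i else 0, by
    obtain ⟨bz, bb, bm, bs⟩ := b.2
    have h1N : (1 : ℕ) ∈ Finset.Icc 1 N := by rw [Finset.mem_Icc]; omega
    have htS : S.card + 1 ≤ t := by
      have := bb 1 h1N
      omega
    refine ⟨fun i hi => by simp only [if_neg hi], fun i hi => ?_, fun i h1 h2 => ?_,
      fun i hiS => ?_⟩
    · simp only [if_pos hi]
      have := bb i hi
      have := cnt_le_card S i
      omega
    · have hi1 : i ∈ Finset.Icc 1 N := by rw [Finset.mem_Icc]; omega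
      have hi2 : i + 1 ∈ Finset.Icc 1 N := by rw [Finset.mem_Icc]; omega
      simp only [if_pos hi1, if_pos hi2, cnt_succ]
      have := bm i h1 h2
      split <;> omega
    · have hiI := hS hiS
      rw [Finset.mem_Icc] at hiI
      have hi1 : i ∈ Finset.Icc 1 N := by rw [Finset.mem_Icc]; omega
      have hi2 : i + 1 ∈ Finset.Icc 1 N := by rw [Finset.mem_Icc]; omega
      simp only [if_pos hi1, if_pos hi2, cnt_succ, if_pos hiS]
      have := bm i hiI.1 (by omega)
      omega⟩
  left_inv a := by
    apply Subtype.ext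
    funext i
    by_cases hi : i ∈ Finset.Icc 1 N
    · simp only [if_pos hi]
      rw [Finset.mem_Icc] at hi
      have hl := gcond_lower hS a.2 i hi.1 hi.2
      omega
    · simp only [if_neg hi]
      exact (a.2.1 i hi).symm
  right_inv b := by
    apply Subtype.ext
    funext i
    by_cases hi : i ∈ Finset.Icc 1 N
    · simp only [if_pos hi]
      omega
    · simp only [if_neg hi]
      exact (b.2.1 i hi).symm

/-- number of weakly monotone sequences on [1,N] with values in [1,m] -/
noncomputable def Hcnt (N m : ℕ) : ℕ := Nat.card {a : ℕ → ℕ // GCond N ∅ m a}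

theorem Hcnt_zero {N : ℕ} (hN : 1 ≤ N) : Hcnt N 0 = 0 := by
  rw [Hcnt, Nat.card_eq_zero]
  left
  constructor
  intro a
  obtain ⟨-, ab, -, -⟩ := a.2
  have := ab 1 (by rw [Finset.mem_Icc]; omega)
  omega

theorem Hcnt_one {N : ℕ} (hN : 1 ≤ N) : Hcnt N 1 = 1 := by
  rw [Hcnt, Nat.card_eq_one_iff_unique]
  constructor
  · constructor
    intro a b
    apply Subtype.ext
    funext i
    by_cases hi : i ∈ Finset.Icc 1 N
    · obtain ⟨-, ab, -, -⟩ := a.2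
      obtain ⟨-, bb, -, -⟩ := b.2
      have h1 := ab i hi
      have h2 := bb i hi
      omega
    · rw [a.2.1 i hi, b.2.1 i hi]
  · refine ⟨⟨fun i => if i ∈ Finset.Icc 1 N then 1 else 0, ?_⟩⟩
    refine ⟨fun i hi => by simp only [if_neg hi], fun i hi => by simp only [if_pos hi]; omega,
      fun i h1 h2 => ?_, by simp⟩
    have hi1 : i ∈ Finset.Icc 1 N := by rw [Finset.mem_Icc]; omega
    have hi2 : i + 1 ∈ Finset.Icc 1 N := by rw [Finset.mem_Icc]; omega
    simp only [if_pos hi1, if_pos hi2]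
    omega

theorem card_gcond {N : ℕ} (hN : 1 ≤ N) {S : Finset ℕ}
    (hS : S ⊆ Finset.Icc 1 (N - 1)) (t : ℕ) :
    Nat.card {a : ℕ → ℕ // GCond N S t a} = Hcnt N (t - S.card) :=
  Nat.card_congr (stripEquiv N hN S hS t)


theorem lex_eq {a b x y B : ℕ} (hx : x < B) (hy : y < B)
    (h : a * B + x = b * B + y) : a = b ∧ x = y := by
  rcases Nat.lt_trichotomy a b with h1 | h1 | h1
  · have := (lex_lt hx hy).mpr (Or.inl h1); omega
  · subst h1
    exact ⟨rfl, by omega⟩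
  · have := (lex_lt hy hx).mpr (Or.inl h1); omega

theorem Klt_of_le_lt {a b x y B : ℕ} (h1 : a ≤ b) (h2 : x < y) (hx : x < B)
    (hy : y < B) : a * B + x < b * B + y := by
  refine (lex_lt hx hy).mpr ?_
  rcases Nat.eq_or_lt_of_le h1 with h | h
  · exact Or.inr ⟨h, h2⟩
  · exact Or.inl h

theorem Klt_of_lt {a b x y B : ℕ} (h1 : a < b) (hx : x < B) (hy : y < B) :
    a * B + x < b * B + y :=
  (lex_lt hx hy).mpr (Or.inl h1)

section BIG

variable {k n : ℕ}

local notation "lam" => List.replicate k n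
local notation "cells" => ydCells (List.replicate k n)
local notation "N" => k * n

/-- weakly increasing fillings with values in [1,t] -/
def WkCond (k n t : ℕ) (σ : ℕ × ℕ → ℕ) : Prop :=
  (∀ p, p ∉ ydCells (List.replicate k n) → σ p = 0) ∧
  (∀ p ∈ ydCells (List.replicate k n), 1 ≤ σ p ∧ σ p ≤ t) ∧
  (∀ r c, (r, c + 1) ∈ ydCells (List.replicate k n) → σ (r, c) ≤ σ (r, c + 1)) ∧
  (∀ r c, (r + 1, c) ∈ ydCells (List.replicate k n) → σ (r, c) ≤ σ (r + 1, c))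

/-- strictly increasing fillings with values in [1,t] -/
def StCond (k n t : ℕ) (σ : ℕ × ℕ → ℕ) : Prop :=
  (∀ p, p ∉ ydCells (List.replicate k n) → σ p = 0) ∧
  (∀ p ∈ ydCells (List.replicate k n), 1 ≤ σ p ∧ σ p ≤ t) ∧
  (∀ r c, (r, c + 1) ∈ ydCells (List.replicate k n) → σ (r, c) < σ (r, c + 1)) ∧
  (∀ r c, (r + 1, c) ∈ ydCells (List.replicate k n) → σ (r, c) < σ (r + 1, c))

def Kw (k n : ℕ) (σ : ℕ × ℕ → ℕ) (p : ℕ × ℕ) : ℕ := σ p * (k * n) + om n p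

def Ks (k n : ℕ) (σ : ℕ × ℕ → ℕ) (p : ℕ × ℕ) : ℕ :=
  σ p * (k * n) + (k * n - 1 - om n p)

theorem om_mem_lt {p : ℕ × ℕ} (hp : p ∈ cells) : om n p < N := by
  rw [mem_cells] at hp
  exact om_lt_N hp.1 hp.2

theorem omb_mem_lt {p : ℕ × ℕ} (hp : p ∈ cells) : N - 1 - om n p < N := by
  have := om_mem_lt hp
  omega

theorem Kw_inj {σ : ℕ × ℕ → ℕ} :
    ∀ p ∈ cells, ∀ q ∈ cells, Kw k n σ p = Kw k n σ q → p = q := by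
  intro p hp q hq h
  have h2 := lex_eq (om_mem_lt hp) (om_mem_lt hq) h
  exact om_inj (mem_cells.mp hp).2 (mem_cells.mp hq).2 h2.2

theorem Ks_inj {σ : ℕ × ℕ → ℕ} :
    ∀ p ∈ cells, ∀ q ∈ cells, Ks k n σ p = Ks k n σ q → p = q := by
  intro p hp q hq h
  have h2 := lex_eq (omb_mem_lt hp) (omb_mem_lt hq) h
  have h3 := om_mem_lt hp
  have h4 := om_mem_lt hq
  have h5 : om n p = om n q := by omega
  exact om_inj (mem_cells.mp hp).2 (mem_cells.mp hq).2 h5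

theorem Kw_row {t : ℕ} {σ : ℕ × ℕ → ℕ} (h : WkCond k n t σ) :
    ∀ r c, (r, c + 1) ∈ cells → Kw k n σ (r, c) < Kw k n σ (r, c + 1) := by
  intro r c hc
  have h1 : (r, c) ∈ cells := cells_mono_row hc (by simp)
  exact Klt_of_le_lt (h.2.2.1 r c hc) (om_lt_same rfl (by simp))
    (om_mem_lt h1) (om_mem_lt hc)

theorem Kw_col {t : ℕ} {σ : ℕ × ℕ → ℕ} (h : WkCond k n t σ) :
    ∀ r c, (r + 1, c) ∈ cells → Kw k n σ (r, c) < Kw k n σ (r + 1, c) := by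
  intro r c hc
  have h1 : (r, c) ∈ cells := cells_mono_col hc (by simp)
  exact Klt_of_le_lt (h.2.2.2 r c hc) (om_lt_row (by simp) (mem_cells.mp h1).2)
    (om_mem_lt h1) (om_mem_lt hc)

theorem Ks_row {t : ℕ} {σ : ℕ × ℕ → ℕ} (h : StCond k n t σ) :
    ∀ r c, (r, c + 1) ∈ cells → Ks k n σ (r, c) < Ks k n σ (r, c + 1) := by
  intro r c hc
  have h1 : (r, c) ∈ cells := cells_mono_row hc (by simp)
  exact Klt_of_lt (h.2.2.1 r c hc) (omb_mem_lt h1) (omb_mem_lt hc)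

theorem Ks_col {t : ℕ} {σ : ℕ × ℕ → ℕ} (h : StCond k n t σ) :
    ∀ r c, (r + 1, c) ∈ cells → Ks k n σ (r, c) < Ks k n σ (r + 1, c) := by
  intro r c hc
  have h1 : (r, c) ∈ cells := cells_mono_col hc (by simp)
  exact Klt_of_lt (h.2.2.2 r c hc) (omb_mem_lt h1) (omb_mem_lt hc)

/-- the standardization tableau of a weakly increasing filling -/
noncomputable def wkT {t : ℕ} (σ : ℕ × ℕ → ℕ) (h : WkCond k n t σ) : SYT lam :=
  buildSYT k n (Kw k n σ) Kw_inj (Kw_row h) (Kw_col h)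

/-- the standardization tableau of a strictly increasing filling -/
noncomputable def stT {t : ℕ} (σ : ℕ × ℕ → ℕ) (h : StCond k n t σ) : SYT lam :=
  buildSYT k n (Ks k n σ) Ks_inj (Ks_row h) (Ks_col h)

theorem wkT_consec {t : ℕ} {σ : ℕ × ℕ → ℕ} (h : WkCond k n t σ) {i : ℕ}
    (h1 : 1 ≤ i) (h2 : i + 1 ≤ N) :
    Kw k n σ (pos (wkT σ h) i) < Kw k n σ (pos (wkT σ h) (i + 1)) := by
  have hi1 : i ∈ Finset.Icc 1 N := by rw [Finset.mem_Icc]; omega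
  have hi2 : i + 1 ∈ Finset.Icc 1 N := by rw [Finset.mem_Icc]; omega
  have e1 : rk k n (Kw k n σ) (pos (wkT σ h) i) = i :=
    entry_pos (T := wkT σ h) hi1
  have e2 : rk k n (Kw k n σ) (pos (wkT σ h) (i + 1)) = i + 1 :=
    entry_pos (T := wkT σ h) hi2
  refine (rk_lt_iff Kw_inj (pos_mem hi1) (pos_mem hi2)).mp ?_
  rw [e1, e2]
  omega

theorem stT_consec {t : ℕ} {σ : ℕ × ℕ → ℕ} (h : StCond k n t σ) {i : ℕ}
    (h1 : 1 ≤ i) (h2 : i + 1 ≤ N) :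
    Ks k n σ (pos (stT σ h) i) < Ks k n σ (pos (stT σ h) (i + 1)) := by
  have hi1 : i ∈ Finset.Icc 1 N := by rw [Finset.mem_Icc]; omega
  have hi2 : i + 1 ∈ Finset.Icc 1 N := by rw [Finset.mem_Icc]; omega
  have e1 : rk k n (Ks k n σ) (pos (stT σ h) i) = i :=
    entry_pos (T := stT σ h) hi1
  have e2 : rk k n (Ks k n σ) (pos (stT σ h) (i + 1)) = i + 1 :=
    entry_pos (T := stT σ h) hi2
  refine (rk_lt_iff Ks_inj (pos_mem hi1) (pos_mem hi2)).mp ?_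
  rw [e1, e2]
  omega

theorem wkT_gcond {t : ℕ} (σ : ℕ × ℕ → ℕ) (h : WkCond k n t σ) :
    GCond N (ascSet lam (wkT σ h)) t
      (fun i => if i ∈ Finset.Icc 1 N then σ (pos (wkT σ h) i) else 0) := by
  refine ⟨fun i hi => by simp only [if_neg hi], fun i hi => ?_, fun i h1 h2 => ?_,
    fun i hiS => ?_⟩
  · simp only [if_pos hi]
    exact h.2.1 _ (pos_mem hi)
  · have hi1 : i ∈ Finset.Icc 1 N := by rw [Finset.mem_Icc]; omega
    have hi2 : i + 1 ∈ Finset.Icc 1 N := by rw [Finset.mem_Icc]; omega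
    simp only [if_pos hi1, if_pos hi2]
    have hK := wkT_consec h h1 h2
    rw [Kw, Kw] at hK
    have := (lex_lt (om_mem_lt (pos_mem hi1)) (om_mem_lt (pos_mem hi2))).mp hK
    omega
  · have hmem := (ascSet_iff.mp hiS).1
    rw [Finset.mem_Icc] at hmem
    have h1 : 1 ≤ i := hmem.1
    have h2 : i + 1 ≤ N := by omega
    have hi1 : i ∈ Finset.Icc 1 N := by rw [Finset.mem_Icc]; omega
    have hi2 : i + 1 ∈ Finset.Icc 1 N := by rw [Finset.mem_Icc]; omega
    simp only [if_pos hi1, if_pos hi2]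
    have hK := wkT_consec h h1 h2
    rw [Kw, Kw] at hK
    have hlex := (lex_lt (om_mem_lt (pos_mem hi1)) (om_mem_lt (pos_mem hi2))).mp hK
    rcases hlex with hlt | ⟨heq, hom⟩
    · exact hlt
    · exfalso
      have hrow := (ascSet_iff.mp hiS).2
      have := om_row_le (mem_cells.mp (pos_mem hi2)).2 hom
      omega

/-- the filling determined by a tableau and a monotone sequence -/
def fillOf (T : SYT lam) (a : ℕ → ℕ) : ℕ × ℕ → ℕ :=
  fun p => if p ∈ cells then a (T.entry p) else 0

theorem fillOf_wkCond {t : ℕ} {T : SYT lam} {a : ℕ → ℕ}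
    (h : GCond N (ascSet lam T) t a) : WkCond k n t (fillOf T a) := by
  refine ⟨fun p hp => by rw [fillOf, if_neg hp], fun p hp => ?_, fun r c hc => ?_,
    fun r c hc => ?_⟩
  · simp only [fillOf]
    rw [if_pos hp]
    exact h.2.1 _ (entry_mem hp)
  · have h1 : (r, c) ∈ cells := cells_mono_row hc (by simp)
    simp only [fillOf]
    rw [if_pos h1, if_pos hc]
    have he1 := entry_mem (T := T) h1
    have he2 := entry_mem (T := T) hc
    rw [Finset.mem_Icc] at he1 he2
    exact gcond_mono h _ _ he1.1 (le_of_lt (T.row_incr r c hc)) he2.2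
  · have h1 : (r, c) ∈ cells := cells_mono_col hc (by simp)
    simp only [fillOf]
    rw [if_pos h1, if_pos hc]
    have he1 := entry_mem (T := T) h1
    have he2 := entry_mem (T := T) hc
    rw [Finset.mem_Icc] at he1 he2
    exact gcond_mono h _ _ he1.1 (le_of_lt (T.col_incr r c hc)) he2.2

theorem fillOf_pos {T : SYT lam} {a : ℕ → ℕ} {i : ℕ} (hi : i ∈ Finset.Icc 1 N) :
    fillOf T a (pos T i) = a i := by
  simp only [fillOf]
  rw [if_pos (pos_mem hi), entry_pos hi]

/-- the key consecutivity for reconstruction, weak case -/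
theorem fillOf_consec_wk {t : ℕ} {T : SYT lam} {a : ℕ → ℕ}
    (h : GCond N (ascSet lam T) t a) :
    ∀ i, 1 ≤ i → i + 1 ≤ N → Kw k n (fillOf T a) (pos T i) < Kw k n (fillOf T a) (pos T (i + 1)) := by
  intro i h1 h2
  have hi1 : i ∈ Finset.Icc 1 N := by rw [Finset.mem_Icc]; omega
  have hi2 : i + 1 ∈ Finset.Icc 1 N := by rw [Finset.mem_Icc]; omega
  have e1 : fillOf T a (pos T i) = a i := fillOf_pos hi1
  have e2 : fillOf T a (pos T (i + 1)) = a (i + 1) := fillOf_pos hi2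
  rw [Kw, Kw, e1, e2]
  have hmono : a i ≤ a (i + 1) := h.2.2.1 i h1 h2
  rcases Nat.eq_or_lt_of_le hmono with heq | hlt
  · -- equal values: i is not an ascent, row-major order increases
    have hnotasc : i ∉ ascSet lam T := by
      intro hc
      have := h.2.2.2 i hc
      omega
    have homlt : om n (pos T i) < om n (pos T (i + 1)) := by
      have hrow : ¬ ((pos T (i + 1)).1 < (pos T i).1) := by
        intro hc
        exact hnotasc (ascSet_iff.mpr ⟨by rw [Finset.mem_Icc]; omega, hc⟩)
      rcases Nat.lt_or_ge (pos T i).1 (pos T (i + 1)).1 with hr | hr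
      · exact om_lt_row hr (mem_cells.mp (pos_mem hi1)).2
      · have hreq : (pos T i).1 = (pos T (i + 1)).1 := by omega
        have hcol : (pos T i).2 < (pos T (i + 1)).2 := by
          apply same_row_col (pos_mem hi1) (pos_mem hi2) hreq
          rw [entry_pos hi1, entry_pos hi2]
          omega
        exact om_lt_same hreq hcol
    rw [heq]
    exact Klt_of_le_lt le_rfl homlt (om_mem_lt (pos_mem hi1)) (om_mem_lt (pos_mem hi2))
  · exact Klt_of_lt hlt (om_mem_lt (pos_mem hi1)) (om_mem_lt (pos_mem hi2))

/-- the weak standardization equivalence -/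
noncomputable def wkEquiv (t : ℕ) :
    {σ : ℕ × ℕ → ℕ // WkCond k n t σ} ≃
      {Ta : SYT (List.replicate k n) × (ℕ → ℕ) //
        GCond (k * n) (ascSet (List.replicate k n) Ta.1) t Ta.2} where
  toFun σ := ⟨(wkT σ.1 σ.2,
      fun i => if i ∈ Finset.Icc 1 (k * n) then σ.1 (pos (wkT σ.1 σ.2) i) else 0),
    wkT_gcond σ.1 σ.2⟩
  invFun Ta := ⟨fillOf Ta.1.1 Ta.1.2, fillOf_wkCond Ta.2⟩
  left_inv σ := by
    apply Subtype.ext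
    funext p
    by_cases hp : p ∈ cells
    · have hep := entry_mem (T := wkT σ.1 σ.2) hp
      simp only [fillOf, if_pos hp, if_pos hep]
      rw [pos_entry hp]
    · simp only [fillOf, if_neg hp]
      exact (σ.2.1 p hp).symm
  right_inv Ta := by
    apply Subtype.ext
    have hTeq : wkT (fillOf Ta.1.1 Ta.1.2) (fillOf_wkCond Ta.2) = Ta.1.1 := by
      rw [wkT]
      apply buildSYT_eq
      exact fun i h1 h2 => fillOf_consec_wk Ta.2 i h1 h2
    refine Prod.ext hTeq ?_
    funext i
    simp only
    by_cases hi : i ∈ Finset.Icc 1 (k * n)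
    · rw [if_pos hi, hTeq, fillOf_pos hi]
    · rw [if_neg hi]
      exact (Ta.2.1 i hi).symm

/-- the non-ascent set -/
noncomputable def nonAsc (T : SYT lam) : Finset ℕ :=
  (Finset.Icc 1 (N - 1)) \ ascSet lam T

theorem mem_nonAsc {T : SYT lam} {i : ℕ} :
    i ∈ nonAsc T ↔ i ∈ Finset.Icc 1 (N - 1) ∧ i ∉ ascSet lam T := by
  rw [nonAsc, Finset.mem_sdiff]

theorem nonAsc_subset {T : SYT lam} : nonAsc T ⊆ Finset.Icc 1 (N - 1) := by
  intro i hi; exact (mem_nonAsc.mp hi).1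

theorem stT_gcond {t : ℕ} (σ : ℕ × ℕ → ℕ) (h : StCond k n t σ) :
    GCond N (nonAsc (stT σ h)) t
      (fun i => if i ∈ Finset.Icc 1 N then σ (pos (stT σ h) i) else 0) := by
  refine ⟨fun i hi => by simp only [if_neg hi], fun i hi => ?_, fun i h1 h2 => ?_,
    fun i hiS => ?_⟩
  · simp only [if_pos hi]
    exact h.2.1 _ (pos_mem hi)
  · have hi1 : i ∈ Finset.Icc 1 N := by rw [Finset.mem_Icc]; omega
    have hi2 : i + 1 ∈ Finset.Icc 1 N := by rw [Finset.mem_Icc]; omega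
    simp only [if_pos hi1, if_pos hi2]
    have hK := stT_consec h h1 h2
    rw [Ks, Ks] at hK
    have := (lex_lt (omb_mem_lt (pos_mem hi1)) (omb_mem_lt (pos_mem hi2))).mp hK
    omega
  · obtain ⟨hmem, hnot⟩ := mem_nonAsc.mp hiS
    rw [Finset.mem_Icc] at hmem
    have h1 : 1 ≤ i := hmem.1
    have h2 : i + 1 ≤ N := by omega
    have hi1 : i ∈ Finset.Icc 1 N := by rw [Finset.mem_Icc]; omega
    have hi2 : i + 1 ∈ Finset.Icc 1 N := by rw [Finset.mem_Icc]; omega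
    simp only [if_pos hi1, if_pos hi2]
    have hK := stT_consec h h1 h2
    rw [Ks, Ks] at hK
    have hlex := (lex_lt (omb_mem_lt (pos_mem hi1)) (omb_mem_lt (pos_mem hi2))).mp hK
    rcases hlex with hlt | ⟨heq, homb⟩
    · exact hlt
    · exfalso
      have hb1 := om_mem_lt (pos_mem (T := stT σ h) hi1)
      have hb2 := om_mem_lt (pos_mem (T := stT σ h) hi2)
      have hom : om n (pos (stT σ h) (i + 1)) < om n (pos (stT σ h) i) := by omega
      have hrowle : (pos (stT σ h) (i + 1)).1 ≤ (pos (stT σ h) i).1 :=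
        om_row_le (mem_cells.mp (pos_mem hi1)).2 hom
      have hrownot : ¬ ((pos (stT σ h) (i + 1)).1 < (pos (stT σ h) i).1) := by
        intro hc
        exact hnot (ascSet_iff.mpr ⟨by rw [Finset.mem_Icc]; omega, hc⟩)
      have hreq : (pos (stT σ h) i).1 = (pos (stT σ h) (i + 1)).1 := by omega
      have hcol : (pos (stT σ h) i).2 < (pos (stT σ h) (i + 1)).2 := by
        apply same_row_col (pos_mem hi1) (pos_mem hi2) hreq
        rw [entry_pos hi1, entry_pos hi2]
        omega
      have := om_lt_same (n := n) hreq hcol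
      omega

/-- if all the intermediate steps are ascents, the row strictly decreases -/
theorem row_desc {T : SYT lam} :
    ∀ j i, 1 ≤ i → i < j → j ≤ N → (∀ l, i ≤ l → l < j → l ∈ ascSet lam T) →
      (pos T j).1 < (pos T i).1 := by
  intro j
  induction j with
  | zero => omega
  | succ j ih =>
    intro i h1 h2 h3 hall
    rcases Nat.lt_or_ge i j with hij | hij
    · have hstep : j ∈ ascSet lam T := hall j (by omega) (by omega)
      have := (ascSet_iff.mp hstep).2
      have := ih i h1 hij (by omega) (fun l hl1 hl2 => hall l hl1 (by omega))
      omega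
    · have : i = j := by omega
      subst this
      exact (ascSet_iff.mp (hall i (by omega) (by omega))).2

theorem fillOf_stCond {t : ℕ} {T : SYT lam} {a : ℕ → ℕ}
    (h : GCond N (nonAsc T) t a) : StCond k n t (fillOf T a) := by
  have hstrict : ∀ p ∈ cells, ∀ q ∈ cells, T.entry p < T.entry q →
      ¬ ((pos T (T.entry q)).1 < (pos T (T.entry p)).1) →
      a (T.entry p) < a (T.entry q) := by
    intro p hp q hq hlt hnrow
    have he1 := entry_mem (T := T) hp
    have he2 := entry_mem (T := T) hq
    rw [Finset.mem_Icc] at he1 he2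
    have hmono : a (T.entry p) ≤ a (T.entry q) :=
      gcond_mono h _ _ he1.1 (le_of_lt hlt) he2.2
    rcases Nat.eq_or_lt_of_le hmono with heq | hlt2
    · exfalso
      apply hnrow
      apply row_desc (T := T) (T.entry q) (T.entry p) he1.1 hlt he2.2
      intro l hl1 hl2
      have hflat : a l = a (l + 1) := by
        have g1 : a (T.entry p) ≤ a l := gcond_mono h _ _ he1.1 hl1 (by omega)
        have g2 : a l ≤ a (l + 1) := h.2.2.1 l (by omega) (by omega)
        have g3 : a (l + 1) ≤ a (T.entry q) := gcond_mono h _ _ (by omega) (by omega) he2.2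
        omega
      by_contra hlnot
      have hlmem : l ∈ nonAsc T := mem_nonAsc.mpr
        ⟨by rw [Finset.mem_Icc]; omega, hlnot⟩
      have := h.2.2.2 l hlmem
      omega
    · exact hlt2
  refine ⟨fun p hp => by simp only [fillOf]; rw [if_neg hp], fun p hp => ?_,
    fun r c hc => ?_, fun r c hc => ?_⟩
  · simp only [fillOf]
    rw [if_pos hp]
    exact h.2.1 _ (entry_mem hp)
  · have h1 : (r, c) ∈ cells := cells_mono_row hc (by simp)
    simp only [fillOf]
    rw [if_pos h1, if_pos hc]
    apply hstrict _ h1 _ hc (T.row_incr r c hc)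
    rw [pos_entry h1, pos_entry hc]
    omega
  · have h1 : (r, c) ∈ cells := cells_mono_col hc (by simp)
    simp only [fillOf]
    rw [if_pos h1, if_pos hc]
    apply hstrict _ h1 _ hc (T.col_incr r c hc)
    rw [pos_entry h1, pos_entry hc]
    omega

theorem fillOf_consec_st {t : ℕ} {T : SYT lam} {a : ℕ → ℕ}
    (h : GCond N (nonAsc T) t a) :
    ∀ i, 1 ≤ i → i + 1 ≤ N → Ks k n (fillOf T a) (pos T i) < Ks k n (fillOf T a) (pos T (i + 1)) := by
  intro i h1 h2
  have hi1 : i ∈ Finset.Icc 1 N := by rw [Finset.mem_Icc]; omega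
  have hi2 : i + 1 ∈ Finset.Icc 1 N := by rw [Finset.mem_Icc]; omega
  have e1 : fillOf T a (pos T i) = a i := fillOf_pos hi1
  have e2 : fillOf T a (pos T (i + 1)) = a (i + 1) := fillOf_pos hi2
  rw [Ks, Ks, e1, e2]
  have hmono : a i ≤ a (i + 1) := h.2.2.1 i h1 h2
  rcases Nat.eq_or_lt_of_le hmono with heq | hlt
  · -- equal values: i must be an ascent, so reverse row-major order increases
    have hasc : i ∈ ascSet lam T := by
      by_contra hnot
      have : i ∈ nonAsc T := mem_nonAsc.mpr ⟨by rw [Finset.mem_Icc]; omega, hnot⟩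
      have := h.2.2.2 i this
      omega
    have hrow := (ascSet_iff.mp hasc).2
    have hom : om n (pos T (i + 1)) < om n (pos T i) :=
      om_lt_row hrow (mem_cells.mp (pos_mem hi2)).2
    have hb1 := om_mem_lt (pos_mem (T := T) hi1)
    have hb2 := om_mem_lt (pos_mem (T := T) hi2)
    rw [heq]
    exact Klt_of_le_lt le_rfl (by omega) (omb_mem_lt (pos_mem hi1)) (omb_mem_lt (pos_mem hi2))
  · exact Klt_of_lt hlt (omb_mem_lt (pos_mem hi1)) (omb_mem_lt (pos_mem hi2))

/-- the strict standardization equivalence -/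
noncomputable def stEquiv (t : ℕ) :
    {σ : ℕ × ℕ → ℕ // StCond k n t σ} ≃
      {Ta : SYT (List.replicate k n) × (ℕ → ℕ) //
        GCond (k * n) (nonAsc Ta.1) t Ta.2} where
  toFun σ := ⟨(stT σ.1 σ.2,
      fun i => if i ∈ Finset.Icc 1 (k * n) then σ.1 (pos (stT σ.1 σ.2) i) else 0),
    stT_gcond σ.1 σ.2⟩
  invFun Ta := ⟨fillOf Ta.1.1 Ta.1.2, fillOf_stCond Ta.2⟩
  left_inv σ := by
    apply Subtype.ext
    funext p
    by_cases hp : p ∈ cells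
    · have hep := entry_mem (T := stT σ.1 σ.2) hp
      simp only [fillOf, if_pos hp, if_pos hep]
      rw [pos_entry hp]
    · simp only [fillOf, if_neg hp]
      exact (σ.2.1 p hp).symm
  right_inv Ta := by
    apply Subtype.ext
    have hTeq : stT (fillOf Ta.1.1 Ta.1.2) (fillOf_stCond Ta.2) = Ta.1.1 := by
      rw [stT]
      apply buildSYT_eq
      exact fun i h1 h2 => fillOf_consec_st Ta.2 i h1 h2
    refine Prod.ext hTeq ?_
    funext i
    simp only
    by_cases hi : i ∈ Finset.Icc 1 (k * n)
    · rw [if_pos hi, hTeq, fillOf_pos hi]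
    · rw [if_neg hi]
      exact (Ta.2.1 i hi).symm

theorem st_lower {u : ℕ} {σ : ℕ × ℕ → ℕ} (h : StCond k n u σ) :
    ∀ r c, (r, c) ∈ cells → r + c + 1 ≤ σ (r, c) := by
  intro r
  induction r with
  | zero =>
    intro c
    induction c with
    | zero =>
      intro hc
      have := (h.2.1 _ hc).1
      omega
    | succ c ih =>
      intro hc
      have h1 : (0, c) ∈ cells := cells_mono_row hc (by simp)
      have h2 := h.2.2.1 0 c hc
      have h3 := ih h1
      omega
  | succ r ih =>
    intro c hc
    have h1 : (r, c) ∈ cells := cells_mono_col hc (by simp)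
    have h2 := h.2.2.2 r c hc
    have h3 := ih c h1
    omega

theorem st_upper {u : ℕ} {σ : ℕ × ℕ → ℕ} (h : StCond k n u σ) :
    ∀ i j r c, (r, c) ∈ cells → r + 1 + i = k → c + 1 + j = n →
      σ (r, c) + i + j ≤ u := by
  intro i
  induction i with
  | zero =>
    intro j
    induction j with
    | zero =>
      intro r c hc h1 h2
      have := (h.2.1 _ hc).2
      omega
    | succ j ih =>
      intro r c hc h1 h2
      have hc2 : (r, c + 1) ∈ cells := by
        rw [mem_cells] at hc ⊢
        exact ⟨hc.1, by omega⟩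
      have h3 := h.2.2.1 r c hc2
      have h4 := ih r (c + 1) hc2 h1 (by omega)
      omega
  | succ i ihi =>
    intro j r c hc h1 h2
    have hc2 : (r + 1, c) ∈ cells := by
      rw [mem_cells] at hc ⊢
      exact ⟨by omega, hc.2⟩
    have h3 := h.2.2.2 r c hc2
    have h4 := ihi j (r + 1) c hc2 (by omega) h2
    omega

/-- subtracting the rank function turns strict fillings into weak ones -/
noncomputable def shiftEquiv (hk : 1 ≤ k) (hn : 1 ≤ n) (t : ℕ) :
    {σ : ℕ × ℕ → ℕ // StCond k n (t + (k + n - 2)) σ} ≃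
      {σ : ℕ × ℕ → ℕ // WkCond k n t σ} where
  toFun σ := ⟨fun p => if p ∈ cells then σ.1 p - (p.1 + p.2) else 0, by
    refine ⟨fun p hp => by simp only [if_neg hp], fun p hp => ?_, fun r c hc => ?_,
      fun r c hc => ?_⟩
    · simp only [if_pos hp]
      have hl := st_lower σ.2 p.1 p.2 (by rwa [Prod.mk.eta])
      have hu := st_upper σ.2 (k - 1 - p.1) (n - 1 - p.2) p.1 p.2
        (by rwa [Prod.mk.eta]) (by rw [mem_cells] at hp; omega)
        (by rw [mem_cells] at hp; omega)
      rw [Prod.mk.eta] at hl hu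
      rw [mem_cells] at hp
      omega
    · have h1 : (r, c) ∈ cells := cells_mono_row hc (by simp)
      simp only [if_pos h1, if_pos hc]
      have h2 := σ.2.2.2.1 r c hc
      have hl := st_lower σ.2 r c h1
      omega
    · have h1 : (r, c) ∈ cells := cells_mono_col hc (by simp)
      simp only [if_pos h1, if_pos hc]
      have h2 := σ.2.2.2.2 r c hc
      have hl := st_lower σ.2 r c h1
      omega⟩
  invFun τ := ⟨fun p => if p ∈ cells then τ.1 p + p.1 + p.2 else 0, by
    refine ⟨fun p hp => by simp only [if_neg hp], fun p hp => ?_, fun r c hc => ?_,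
      fun r c hc => ?_⟩
    · simp only [if_pos hp]
      have hb := τ.2.2.1 p hp
      rw [mem_cells] at hp
      omega
    · have h1 : (r, c) ∈ cells := cells_mono_row hc (by simp)
      simp only [if_pos h1, if_pos hc]
      have h2 := τ.2.2.2.1 r c hc
      omega
    · have h1 : (r, c) ∈ cells := cells_mono_col hc (by simp)
      simp only [if_pos h1, if_pos hc]
      have h2 := τ.2.2.2.2 r c hc
      omega⟩
  left_inv σ := by
    apply Subtype.ext
    funext p
    by_cases hp : p ∈ cells
    · simp only [if_pos hp]
      have hl := st_lower σ.2 p.1 p.2 (by rwa [Prod.mk.eta])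
      rw [Prod.mk.eta] at hl
      omega
    · simp only [if_neg hp]
      exact (σ.2.1 p hp).symm
  right_inv τ := by
    apply Subtype.ext
    funext p
    by_cases hp : p ∈ cells
    · simp only [if_pos hp]
      omega
    · simp only [if_neg hp]
      exact (τ.2.1 p hp).symm

/-- SYT is a finite type -/
instance : Finite (SYT lam) := by
  apply Finite.of_injective
    (fun T => (fun p : (ydCells (List.replicate k n) : Finset (ℕ × ℕ)) =>
      (⟨T.entry p, by
        have := entry_mem (T := T) p.2
        rw [Finset.mem_Icc] at this
        omega⟩ : Fin (k * n + 1))))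
  intro T S heq
  apply syt_ext
  funext p
  by_cases hp : p ∈ cells
  · have := congrFun heq ⟨p, hp⟩
    simpa [Fin.mk.injEq] using this
  · rw [T.zero_outside p hp, S.zero_outside p hp]

noncomputable instance : Fintype (SYT lam) := Fintype.ofFinite _

theorem nat_card_sigma {ι : Type*} [Fintype ι] (f : ι → Type*) [∀ i, Finite (f i)] :
    Nat.card ((i : ι) × f i) = ∑ i, Nat.card (f i) := by
  letI : ∀ i, Fintype (f i) := fun i => Fintype.ofFinite _
  simp only [Nat.card_eq_fintype_card]
  exact Fintype.card_sigma

theorem count_weak (hk : 1 ≤ k) (hn : 1 ≤ n) (t : ℕ) :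
    Nat.card {σ : ℕ × ℕ → ℕ // WkCond k n t σ} =
      ∑ T : SYT lam, Hcnt (k * n) (t - ascNum lam T) := by
  have hN : 1 ≤ k * n := Nat.one_le_iff_ne_zero.mpr (by positivity)
  rw [Nat.card_congr (wkEquiv (k := k) (n := n) t)]
  rw [Nat.card_congr (Equiv.subtypeProdEquivSigmaSubtype
    (fun (T : SYT lam) (a : ℕ → ℕ) => GCond (k * n) (ascSet lam T) t a))]
  rw [nat_card_sigma]
  apply Finset.sum_congr rfl
  intro T _
  rw [card_gcond hN (ascSet_subset (T := T)) t]
  rfl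

theorem count_strict (hk : 1 ≤ k) (hn : 1 ≤ n) (u : ℕ) :
    Nat.card {σ : ℕ × ℕ → ℕ // StCond k n u σ} =
      ∑ T : SYT lam, Hcnt (k * n) (u - (k * n - 1 - ascNum lam T)) := by
  have hN : 1 ≤ k * n := Nat.one_le_iff_ne_zero.mpr (by positivity)
  rw [Nat.card_congr (stEquiv (k := k) (n := n) u)]
  rw [Nat.card_congr (Equiv.subtypeProdEquivSigmaSubtype
    (fun (T : SYT lam) (a : ℕ → ℕ) => GCond (k * n) (nonAsc T) u a))]
  rw [nat_card_sigma]
  apply Finset.sum_congr rfl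
  intro T _
  rw [card_gcond hN (nonAsc_subset (T := T)) u]
  have hcard : (nonAsc T).card = k * n - 1 - ascNum lam T := by
    rw [nonAsc, Finset.card_sdiff_of_subset (ascSet_subset (T := T)), Nat.card_Icc]
    rfl
  rw [hcard]

theorem MN_arith (hk : 1 ≤ k) (hn : 1 ≤ n) :
    (k - 1) * (n - 1) + (k + n - 2) = k * n - 1 := by
  obtain ⟨k', rfl⟩ : ∃ k', k = k' + 1 := ⟨k - 1, by omega⟩
  obtain ⟨n', rfl⟩ : ∃ n', n = n' + 1 := ⟨n - 1, by omega⟩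
  have h1 : (k' + 1) * (n' + 1) = k' * n' + k' + n' + 1 := by ring
  simp only [Nat.add_sub_cancel]
  omega

/-- the master counting identity -/
theorem master_identity (hk : 1 ≤ k) (hn : 1 ≤ n) (t : ℕ) :
    ∑ T : SYT lam, Hcnt (k * n) (t - ((k - 1) * (n - 1) - ascNum lam T)) =
      ∑ T : SYT lam, Hcnt (k * n) (t - ascNum lam T) := by
  have h1 := count_strict hk hn (t + (k + n - 2))
  have h2 := count_weak hk hn t
  have h3 := Nat.card_congr (shiftEquiv hk hn t)
  rw [h1, h2] at h3
  rw [← h3]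
  apply Finset.sum_congr rfl
  intro T _
  congr 1
  have ha := ascNum_le (T := T) hk hn
  have harith := MN_arith hk hn
  omega

/-- fiber of the ascent statistic -/
noncomputable def fib (x : ℕ) : Finset (SYT lam) :=
  Finset.univ.filter (fun T => ascNum lam T = x)

theorem mem_fib {T : SYT lam} {x : ℕ} : T ∈ fib x ↔ ascNum lam T = x := by
  simp [fib]

/-- number of tableaux with a given number of ascents -/
noncomputable def Wc (x : ℕ) : ℕ := (fib (k := k) (n := n) x).card

theorem group_sum (hk : 1 ≤ k) (hn : 1 ≤ n) (f : ℕ → ℕ) :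
    ∑ T : SYT lam, f (ascNum lam T) =
      ∑ x ∈ Finset.range ((k - 1) * (n - 1) + 1), Wc (k := k) (n := n) x * f x := by
  rw [← Finset.sum_fiberwise_of_maps_to (g := fun T : SYT lam => ascNum lam T)
    (t := Finset.range ((k - 1) * (n - 1) + 1))
    (fun T _ => Finset.mem_range.mpr (by
      show ascNum lam T < (k - 1) * (n - 1) + 1
      have := ascNum_le (T := T) hk hn; omega))
    (fun T => f (ascNum lam T))]
  apply Finset.sum_congr rfl
  intro x _
  have h1 : ∑ T ∈ Finset.filter (fun T : SYT lam => ascNum lam T = x) Finset.univ,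
      f (ascNum lam T) =
      (Finset.filter (fun T : SYT lam => ascNum lam T = x) Finset.univ).card * f x :=
    Finset.sum_const_nat (fun T hT => by rw [(Finset.mem_filter.mp hT).2])
  rw [h1]
  congr 1

theorem star_identity (hk : 1 ≤ k) (hn : 1 ≤ n) (t : ℕ) :
    ∑ x ∈ Finset.range ((k - 1) * (n - 1) + 1),
        Wc (k := k) (n := n) ((k - 1) * (n - 1) - x) * Hcnt (k * n) (t - x) =
      ∑ x ∈ Finset.range ((k - 1) * (n - 1) + 1),
        Wc (k := k) (n := n) x * Hcnt (k * n) (t - x) := by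
  have h1 := master_identity hk hn t
  rw [group_sum hk hn (fun a => Hcnt (k * n) (t - ((k - 1) * (n - 1) - a))),
    group_sum hk hn (fun a => Hcnt (k * n) (t - a))] at h1
  have hr := Finset.sum_range_reflect
    (fun x => Wc (k := k) (n := n) ((k - 1) * (n - 1) - x) * Hcnt (k * n) (t - x))
    ((k - 1) * (n - 1) + 1)
  rw [← hr]
  rw [← h1]
  apply Finset.sum_congr rfl
  intro x hx
  rw [Finset.mem_range] at hx
  have e1 : (k - 1) * (n - 1) + 1 - 1 - x = (k - 1) * (n - 1) - x := by omega
  have e2 : (k - 1) * (n - 1) - ((k - 1) * (n - 1) - x) = x := by omega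
  rw [e1, e2]

theorem Wsymm (hk : 1 ≤ k) (hn : 1 ≤ n) :
    ∀ a, a ≤ (k - 1) * (n - 1) →
      Wc (k := k) (n := n) ((k - 1) * (n - 1) - a) = Wc (k := k) (n := n) a := by
  have hN : 1 ≤ k * n := Nat.one_le_iff_ne_zero.mpr (by positivity)
  intro a
  induction a using Nat.strong_induction_on with
  | _ a ih =>
    intro ha
    have hstar := star_identity hk hn (a + 1)
    have hsub : Finset.range (a + 1) ⊆ Finset.range ((k - 1) * (n - 1) + 1) := by
      apply Finset.range_subset_range.mpr; omega
    have hz1 : ∀ x ∈ Finset.range ((k - 1) * (n - 1) + 1), x ∉ Finset.range (a + 1) →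
        Wc (k := k) (n := n) ((k - 1) * (n - 1) - x) * Hcnt (k * n) (a + 1 - x) = 0 := by
      intro x _ hx2
      rw [Finset.mem_range] at hx2
      have : a + 1 - x = 0 := by omega
      rw [this, Hcnt_zero hN, Nat.mul_zero]
    have hz2 : ∀ x ∈ Finset.range ((k - 1) * (n - 1) + 1), x ∉ Finset.range (a + 1) →
        Wc (k := k) (n := n) x * Hcnt (k * n) (a + 1 - x) = 0 := by
      intro x _ hx2
      rw [Finset.mem_range] at hx2
      have : a + 1 - x = 0 := by omega
      rw [this, Hcnt_zero hN, Nat.mul_zero]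
    rw [← Finset.sum_subset hsub hz1, ← Finset.sum_subset hsub hz2] at hstar
    rw [Finset.sum_range_succ, Finset.sum_range_succ] at hstar
    have hhead : ∑ x ∈ Finset.range a,
        Wc (k := k) (n := n) ((k - 1) * (n - 1) - x) * Hcnt (k * n) (a + 1 - x) =
        ∑ x ∈ Finset.range a, Wc (k := k) (n := n) x * Hcnt (k * n) (a + 1 - x) := by
      apply Finset.sum_congr rfl
      intro x hx
      rw [Finset.mem_range] at hx
      rw [ih x hx (by omega)]
    rw [hhead] at hstar
    have hone : a + 1 - a = 1 := by omega
    rw [hone, Hcnt_one hN] at hstar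
    omega

/-- the chosen equivalence between opposite fibers -/
noncomputable def fibEquiv (hk : 1 ≤ k) (hn : 1 ≤ n) (a : ℕ) (ha : a ≤ (k - 1) * (n - 1)) :
    {T // T ∈ fib (k := k) (n := n) a} ≃
      {T // T ∈ fib (k := k) (n := n) ((k - 1) * (n - 1) - a)} :=
  Finset.equivOfCardEq (Wsymm hk hn a ha).symm

/-- the involution -/
noncomputable def Psi (hk : 1 ≤ k) (hn : 1 ≤ n) (T : SYT lam) : SYT lam :=
  if h1 : 2 * ascNum lam T < (k - 1) * (n - 1) then
    (fibEquiv hk hn (ascNum lam T) (ascNum_le hk hn) ⟨T, mem_fib.mpr rfl⟩).1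
  else if h2 : (k - 1) * (n - 1) < 2 * ascNum lam T then
    ((fibEquiv hk hn ((k - 1) * (n - 1) - ascNum lam T) (by omega)).symm
      ⟨T, mem_fib.mpr (by have := ascNum_le (T := T) hk hn; omega)⟩).1
  else T

theorem fibEquiv_val_congr (hk : 1 ≤ k) (hn : 1 ≤ n) {a c : ℕ} (hac : a = c)
    (pa : a ≤ (k - 1) * (n - 1)) (pc : c ≤ (k - 1) * (n - 1)) (T : SYT lam)
    (hTa : T ∈ fib (k := k) (n := n) a) (hTc : T ∈ fib (k := k) (n := n) c) :
    (fibEquiv hk hn a pa ⟨T, hTa⟩).1 = (fibEquiv hk hn c pc ⟨T, hTc⟩).1 := by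
  subst hac
  rfl

theorem fibEquiv_symm_val_congr (hk : 1 ≤ k) (hn : 1 ≤ n) {a c : ℕ} (hac : a = c)
    (pa : a ≤ (k - 1) * (n - 1)) (pc : c ≤ (k - 1) * (n - 1)) (T : SYT lam)
    (hTa : T ∈ fib (k := k) (n := n) ((k - 1) * (n - 1) - a))
    (hTc : T ∈ fib (k := k) (n := n) ((k - 1) * (n - 1) - c)) :
    ((fibEquiv hk hn a pa).symm ⟨T, hTa⟩).1 = ((fibEquiv hk hn c pc).symm ⟨T, hTc⟩).1 := by
  subst hac
  rfl

theorem Psi_asc (hk : 1 ≤ k) (hn : 1 ≤ n) (T : SYT lam) :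
    ascNum lam T + ascNum lam (Psi hk hn T) = (k - 1) * (n - 1) := by
  have ha := ascNum_le (T := T) hk hn
  rw [Psi]
  split_ifs with h1 h2
  · have := mem_fib.mp
      (fibEquiv hk hn (ascNum lam T) (ascNum_le hk hn) ⟨T, mem_fib.mpr rfl⟩).2
    rw [this]
    omega
  · have := mem_fib.mp
      ((fibEquiv hk hn ((k - 1) * (n - 1) - ascNum lam T) (by omega)).symm
        ⟨T, mem_fib.mpr (by omega)⟩).2
    rw [this]
    omega
  · omega

theorem Psi_invol (hk : 1 ≤ k) (hn : 1 ≤ n) (T : SYT lam) :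
    Psi hk hn (Psi hk hn T) = T := by
  have ha := ascNum_le (T := T) hk hn
  by_cases h1 : 2 * ascNum lam T < (k - 1) * (n - 1)
  · have hPsi1 : Psi hk hn T =
        (fibEquiv hk hn (ascNum lam T) (ascNum_le hk hn) ⟨T, mem_fib.mpr rfl⟩).1 := by
      rw [Psi, dif_pos h1]
    have hA2 : ascNum lam (Psi hk hn T) = (k - 1) * (n - 1) - ascNum lam T := by
      rw [hPsi1]
      exact mem_fib.mp
        (fibEquiv hk hn (ascNum lam T) (ascNum_le hk hn) ⟨T, mem_fib.mpr rfl⟩).2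
    have h1' : ¬ (2 * ascNum lam (Psi hk hn T) < (k - 1) * (n - 1)) := by omega
    have h2' : (k - 1) * (n - 1) < 2 * ascNum lam (Psi hk hn T) := by omega
    rw [Psi, dif_neg h1', dif_pos h2']
    -- reduce the index (k-1)(n-1) - asc(Psi T) to asc T
    rw [fibEquiv_symm_val_congr hk hn
      (show (k - 1) * (n - 1) - ascNum lam (Psi hk hn T) = ascNum lam T by omega)
      (by omega) (ascNum_le hk hn) (Psi hk hn T)
      (mem_fib.mpr (by omega))
      (by rw [hPsi1]; exact (fibEquiv hk hn (ascNum lam T) (ascNum_le hk hn)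
        ⟨T, mem_fib.mpr rfl⟩).2)]
    have hsub : (⟨Psi hk hn T, by rw [hPsi1]; exact (fibEquiv hk hn (ascNum lam T)
        (ascNum_le hk hn) ⟨T, mem_fib.mpr rfl⟩).2⟩ :
        {S // S ∈ fib (k := k) (n := n) ((k - 1) * (n - 1) - ascNum lam T)}) =
        fibEquiv hk hn (ascNum lam T) (ascNum_le hk hn) ⟨T, mem_fib.mpr rfl⟩ :=
      Subtype.ext hPsi1
    rw [hsub, Equiv.symm_apply_apply]
  · by_cases h2 : (k - 1) * (n - 1) < 2 * ascNum lam T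
    · have hPsi1 : Psi hk hn T =
          ((fibEquiv hk hn ((k - 1) * (n - 1) - ascNum lam T) (by omega)).symm
            ⟨T, mem_fib.mpr (by omega)⟩).1 := by
        rw [Psi, dif_neg h1, dif_pos h2]
      have hA2 : ascNum lam (Psi hk hn T) = (k - 1) * (n - 1) - ascNum lam T := by
        rw [hPsi1]
        exact mem_fib.mp
          ((fibEquiv hk hn ((k - 1) * (n - 1) - ascNum lam T) (by omega)).symm
            ⟨T, mem_fib.mpr (by omega)⟩).2
      have h1' : 2 * ascNum lam (Psi hk hn T) < (k - 1) * (n - 1) := by omega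
      rw [Psi, dif_pos h1']
      rw [fibEquiv_val_congr hk hn
        (show ascNum lam (Psi hk hn T) = (k - 1) * (n - 1) - ascNum lam T from hA2)
        (ascNum_le hk hn) (by omega) (Psi hk hn T)
        (mem_fib.mpr rfl) (mem_fib.mpr hA2)]
      have hsub : (⟨Psi hk hn T, mem_fib.mpr hA2⟩ :
          {S // S ∈ fib (k := k) (n := n) ((k - 1) * (n - 1) - ascNum lam T)}) =
          (fibEquiv hk hn ((k - 1) * (n - 1) - ascNum lam T) (by omega)).symm
            ⟨T, mem_fib.mpr (by omega)⟩ :=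
        Subtype.ext hPsi1
      rw [hsub, Equiv.apply_symm_apply]
    · have hPsi1 : Psi hk hn T = T := by
        rw [Psi, dif_neg h1, dif_neg h2]
      rw [hPsi1, Psi, dif_neg h1, dif_neg h2]

end BIG

end AscWork

/-- Theorem: there is an involution on `SYT(n^k)` complementing the number of ascents
to `(k-1)(n-1)`. -/
theorem exists_involution_asc (k n : ℕ) (hk : 1 ≤ k) (hn : 1 ≤ n) :
    ∃ Ψ : SYT (List.replicate k n) → SYT (List.replicate k n),
      (∀ T, Ψ (Ψ T) = T) ∧
      (∀ T, ascNum (List.replicate k n) T + ascNum (List.replicate k n) (Ψ T) =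
        (k - 1) * (n - 1)) := by
  exact ⟨AscWork.Psi hk hn, AscWork.Psi_invol hk hn, AscWork.Psi_asc hk hn⟩
end

section
/- For all integers k,n ≥ 1 and 0 ≤ h ≤ (k−1)(n−1), the generalized Narayana numbers satisfy N(k,n,h) = N(n,k,h); that is, the number of standard Young tableaux of shape (n^k) with h ascents equals the number of standard Young tableaux of shape (k^n) with h ascents. -/
open Finset

namespace Nara

theorem getD_replicate' (k n r : ℕ) (hr : r < k) : (List.replicate k n).getD r 0 = n := by
  rw [List.getD_eq_getElem?_getD]
  simp [List.getElem?_replicate, hr]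

theorem mem_ydCells_replicate (k n : ℕ) (p : ℕ × ℕ) :
    p ∈ ydCells (List.replicate k n) ↔ p.1 < k ∧ p.2 < n := by
  rcases p with ⟨r, c⟩
  simp only [ydCells, Finset.mem_biUnion, Finset.mem_range, Finset.mem_image,
    List.length_replicate]
  constructor
  · rintro ⟨a, ha, b, hb, hab⟩
    rw [getD_replicate' k n a ha] at hb
    injection hab with h1 h2
    subst h1; subst h2
    exact ⟨ha, hb⟩
  · rintro ⟨hr, hc⟩
    exact ⟨r, hr, c, by rw [getD_replicate' k n r hr]; exact hc, rfl⟩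

theorem ydCells_replicate (k n : ℕ) :
    ydCells (List.replicate k n) = Finset.range k ×ˢ Finset.range n := by
  ext p; rw [mem_ydCells_replicate]; simp [Finset.mem_product]

theorem card_ydCells_replicate (k n : ℕ) :
    (ydCells (List.replicate k n)).card = k * n := by
  rw [ydCells_replicate]; simp

theorem sum_replicate' (k n : ℕ) : (List.replicate k n).sum = k * n := by
  simp [List.sum_replicate, smul_eq_mul]

theorem SYT.ext' {lam : List ℕ} {T T' : SYT lam} (h : T.entry = T'.entry) : T = T' := by
  cases T; cases T'; simp_all

instance instFiniteSYT (lam : List ℕ) : Finite (SYT lam) := by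
  have : ∀ (T : SYT lam) (p : ℕ × ℕ), T.entry p ≤ lam.sum := by
    intro T p
    by_cases hp : p ∈ ydCells lam
    · exact (T.bijOn.mapsTo hp).2
    · rw [T.zero_outside p hp]; exact Nat.zero_le _
  apply Finite.of_injective
    (fun (T : SYT lam) => (fun p : (ydCells lam : Finset (ℕ × ℕ)) =>
      (⟨T.entry p, Nat.lt_succ_of_le (this T p)⟩ : Fin (lam.sum + 1))))
  intro T T' h
  apply SYT.ext'
  funext p
  by_cases hp : p ∈ ydCells lam
  · have h2 := congrArg Fin.val (congrFun h ⟨p, hp⟩)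
    simpa using h2
  · rw [T.zero_outside p hp, T'.zero_outside p hp]


/-- Admissible weight functions: `f : [1,N] → [1,m]` weakly increasing, strictly
increasing at each element of `A`, and `0` outside `[1,N]`. -/
def IsAdm (N : ℕ) (A : Finset ℕ) (m : ℕ) (f : ℕ → ℕ) : Prop :=
  (∀ i, 1 ≤ i → i ≤ N → 1 ≤ f i ∧ f i ≤ m) ∧
  (∀ i, 1 ≤ i → i + 1 ≤ N → f i ≤ f (i + 1)) ∧
  (∀ i ∈ A, f i < f (i + 1)) ∧
  (∀ i, ¬(1 ≤ i ∧ i ≤ N) → f i = 0)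

def Adm (N : ℕ) (A : Finset ℕ) (m : ℕ) : Type := {f : ℕ → ℕ // IsAdm N A m f}

theorem IsAdm.mono {N : ℕ} {A : Finset ℕ} {m : ℕ} {f : ℕ → ℕ} (hf : IsAdm N A m f)
    {a b : ℕ} (ha : 1 ≤ a) (hab : a ≤ b) (hb : b ≤ N) : f a ≤ f b := by
  induction b with
  | zero => omega
  | succ d ih =>
    rcases Nat.lt_or_ge a (d + 1) with h | h
    · exact le_trans (ih (by omega) (by omega)) (hf.2.1 d (by omega) hb)
    · have : a = d + 1 := by omega
      subst this; exact le_rfl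

instance instFiniteAdm (N : ℕ) (A : Finset ℕ) (m : ℕ) : Finite (Adm N A m) := by
  have key : ∀ f : Adm N A m, ∀ i : ℕ, f.1 i ≤ m := by
    intro f i
    by_cases h : 1 ≤ i ∧ i ≤ N
    · exact (f.2.1 i h.1 h.2).2
    · rw [f.2.2.2.2 i h]; exact Nat.zero_le m
  apply Finite.of_injective (fun (f : Adm N A m) =>
    (fun i : Fin (N + 1) => (⟨f.1 i, Nat.lt_succ_of_le (key f i)⟩ : Fin (m + 1))))
  intro f g h
  apply Subtype.ext; funext i
  by_cases hi : i ≤ N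
  · have h2 := congrArg Fin.val (congrFun h ⟨i, Nat.lt_succ_of_le hi⟩)
    simpa using h2
  · rw [f.2.2.2.2 i (by omega), g.2.2.2.2 i (by omega)]

/-- Monotone matrices (plane-partition-like fillings of the `k × n` rectangle
with values in `[1,m]`). -/
def IsMon (k n m : ℕ) (M : ℕ × ℕ → ℕ) : Prop :=
  (∀ p : ℕ × ℕ, p.1 < k → p.2 < n → 1 ≤ M p ∧ M p ≤ m) ∧
  (∀ r c, r < k → c + 1 < n → M (r, c) ≤ M (r, c + 1)) ∧
  (∀ r c, r + 1 < k → c < n → M (r, c) ≤ M (r + 1, c)) ∧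
  (∀ p : ℕ × ℕ, ¬(p.1 < k ∧ p.2 < n) → M p = 0)

def Mon (k n m : ℕ) : Type := {M : ℕ × ℕ → ℕ // IsMon k n m M}

theorem mon_card_symm (k n m : ℕ) : Nat.card (Mon k n m) = Nat.card (Mon n k m) := by
  apply Nat.card_congr
  refine ⟨fun M => ⟨fun p => M.1 (p.2, p.1), ?_⟩, fun M => ⟨fun p => M.1 (p.2, p.1), ?_⟩,
    ?_, ?_⟩
  · obtain ⟨M, h1, h2, h3, h4⟩ := M
    exact ⟨fun p hp1 hp2 => h1 (p.2, p.1) hp2 hp1,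
      fun r c hr hc => h3 c r hc hr, fun r c hr hc => h2 c r hc hr,
      fun p hp => h4 (p.2, p.1) (by tauto)⟩
  · obtain ⟨M, h1, h2, h3, h4⟩ := M
    exact ⟨fun p hp1 hp2 => h1 (p.2, p.1) hp2 hp1,
      fun r c hr hc => h3 c r hc hr, fun r c hr hc => h2 c r hc hr,
      fun p hp => h4 (p.2, p.1) (by tauto)⟩
  · intro M; apply Subtype.ext; funext p; rfl
  · intro M; apply Subtype.ext; funext p; rfl

/-- The lexicographic key used for standardization. -/
def key (k n : ℕ) (M : ℕ × ℕ → ℕ) (p : ℕ × ℕ) : ℕ := (M p * k + p.1) * n + p.2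

theorem base_lt {x y c d nn : ℕ} (hc : c < nn) (h : x < y) :
    x * nn + c < y * nn + d := by
  have h1 : x * nn + c < (x + 1) * nn := by
    have : (x + 1) * nn = x * nn + nn := by ring
    omega
  have h2 : (x + 1) * nn ≤ y * nn := Nat.mul_le_mul_right nn h
  omega

section KeyLemmas
variable {k n : ℕ} {M : ℕ × ℕ → ℕ} {p q : ℕ × ℕ}

theorem key_lt_of_M_lt (hp1 : p.1 < k) (hp2 : p.2 < n) (h : M p < M q) :
    key k n M p < key k n M q :=
  base_lt hp2 (by
    have : M p * k + p.1 < (M p + 1) * k := by have : (M p + 1) * k = M p * k + k := by ring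
                                               omega
    have h2 : (M p + 1) * k ≤ M q * k := Nat.mul_le_mul_right k h
    omega)

theorem key_lt_of_row_lt (hp2 : p.2 < n) (hM : M p = M q) (h : p.1 < q.1) :
    key k n M p < key k n M q :=
  base_lt hp2 (by rw [hM]; omega)

theorem key_lt_of_col_lt (hM : M p = M q) (hr : p.1 = q.1) (h : p.2 < q.2) :
    key k n M p < key k n M q := by
  unfold key; rw [hM, hr]; omega

theorem M_le_of_key_le (hq1 : q.1 < k) (hq2 : q.2 < n)
    (h : key k n M p ≤ key k n M q) : M p ≤ M q := by
  by_contra hc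
  have := key_lt_of_M_lt (M := M) (p := q) (q := p) hq1 hq2 (by omega)
  omega

theorem row_le_of_key_le (hq2 : q.2 < n) (hM : M p = M q)
    (h : key k n M p ≤ key k n M q) : p.1 ≤ q.1 := by
  by_contra hc
  have := key_lt_of_row_lt (k := k) (M := M) (p := q) (q := p) hq2 hM.symm (by omega)
  omega

theorem col_le_of_key_le (hM : M p = M q) (hr : p.1 = q.1)
    (h : key k n M p ≤ key k n M q) : p.2 ≤ q.2 := by
  unfold key at h; rw [hM, hr] at h; omega

theorem key_injOn (hp1 : p.1 < k) (hp2 : p.2 < n) (hq1 : q.1 < k) (hq2 : q.2 < n)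
    (h : key k n M p = key k n M q) : p = q := by
  have hM : M p = M q :=
    le_antisymm (M_le_of_key_le hq1 hq2 h.le) (M_le_of_key_le hp1 hp2 h.ge)
  have hr : p.1 = q.1 :=
    le_antisymm (row_le_of_key_le hq2 hM h.le) (row_le_of_key_le hp2 hM.symm h.ge)
  have hc : p.2 = q.2 :=
    le_antisymm (col_le_of_key_le hM hr h.le) (col_le_of_key_le hM.symm hr.symm h.ge)
  exact Prod.ext hr hc

end KeyLemmas


variable {k n : ℕ} (T : SYT (List.replicate k n))

theorem entry_bounds {p : ℕ × ℕ} (h1 : p.1 < k) (h2 : p.2 < n) :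
    1 ≤ T.entry p ∧ T.entry p ≤ k * n := by
  have := T.bijOn.mapsTo (by rw [Finset.mem_coe, mem_ydCells_replicate]; exact ⟨h1, h2⟩)
  rwa [Set.mem_Icc, sum_replicate'] at this

theorem entry_surj {i : ℕ} (h1 : 1 ≤ i) (h2 : i ≤ k * n) :
    ∃ p : ℕ × ℕ, (p.1 < k ∧ p.2 < n) ∧ T.entry p = i := by
  have := T.bijOn.surjOn (by rw [Set.mem_Icc, sum_replicate']; exact ⟨h1, h2⟩)
  obtain ⟨p, hp, he⟩ := this
  rw [Finset.mem_coe, mem_ydCells_replicate] at hp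
  exact ⟨p, hp, he⟩

theorem entry_injOn {p q : ℕ × ℕ} (hp1 : p.1 < k) (hp2 : p.2 < n)
    (hq1 : q.1 < k) (hq2 : q.2 < n) (h : T.entry p = T.entry q) : p = q :=
  T.bijOn.injOn (by rw [Finset.mem_coe, mem_ydCells_replicate]; exact ⟨hp1, hp2⟩)
    (by rw [Finset.mem_coe, mem_ydCells_replicate]; exact ⟨hq1, hq2⟩) h

theorem row_ext {r c c' : ℕ} (hr : r < k) (hcc : c < c') (hc' : c' < n) :
    T.entry (r, c) < T.entry (r, c') := by
  induction c' with
  | zero => omega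
  | succ d ih =>
    have hmem : ((r, d + 1) : ℕ × ℕ) ∈ ydCells (List.replicate k n) := by
      rw [mem_ydCells_replicate]; exact ⟨hr, hc'⟩
    rcases Nat.lt_or_ge c d with h | h
    · exact lt_trans (ih (by omega) (by omega)) (T.row_incr r d hmem)
    · have : c = d := by omega
      subst this
      exact T.row_incr r c hmem

theorem mem_ascSet_iff {i : ℕ} :
    i ∈ ascSet (List.replicate k n) T ↔ (1 ≤ i ∧ i ≤ k * n - 1) ∧
      ∃ p ∈ ydCells (List.replicate k n), ∃ q ∈ ydCells (List.replicate k n),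
        T.entry p = i ∧ T.entry q = i + 1 ∧ q.1 < p.1 := by
  rw [ascSet, Finset.mem_filter, Finset.mem_Icc, sum_replicate']

/-- If `i` is not an ascent, rows weakly increase from `i` to `i+1`. -/
theorem not_asc_row_le {i : ℕ} (h1 : 1 ≤ i) (h2 : i + 1 ≤ k * n)
    (hna : i ∉ ascSet (List.replicate k n) T)
    {p q : ℕ × ℕ} (hp : p.1 < k ∧ p.2 < n) (hq : q.1 < k ∧ q.2 < n)
    (hep : T.entry p = i) (heq : T.entry q = i + 1) : p.1 ≤ q.1 := by
  by_contra hlt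
  apply hna
  rw [mem_ascSet_iff]
  exact ⟨⟨h1, by omega⟩, p, (mem_ydCells_replicate k n p).mpr hp,
    q, (mem_ydCells_replicate k n q).mpr hq, hep, heq, by omega⟩


/- ### The pair type and the forward map -/

def Pairs (k n m : ℕ) : Type :=
  Σ T : SYT (List.replicate k n), Adm (k * n) (ascSet (List.replicate k n) T) m

theorem isMon_comp {m : ℕ} (T : SYT (List.replicate k n)) (f : ℕ → ℕ)
    (hf : IsAdm (k * n) (ascSet (List.replicate k n) T) m f) :
    IsMon k n m (fun p => f (T.entry p)) := by
  refine ⟨?_, ?_, ?_, ?_⟩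
  · intro p h1 h2
    obtain ⟨e1, e2⟩ := entry_bounds T h1 h2
    exact hf.1 _ e1 e2
  · intro r c hr hc
    have hmem : ((r, c + 1) : ℕ × ℕ) ∈ ydCells (List.replicate k n) := by
      rw [mem_ydCells_replicate]; exact ⟨hr, hc⟩
    have hlt := T.row_incr r c hmem
    obtain ⟨e1, _⟩ := entry_bounds T (p := (r, c)) hr (by omega)
    obtain ⟨_, e2⟩ := entry_bounds T (p := (r, c + 1)) hr hc
    exact hf.mono e1 hlt.le e2
  · intro r c hr hc
    have hmem : ((r + 1, c) : ℕ × ℕ) ∈ ydCells (List.replicate k n) := by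
      rw [mem_ydCells_replicate]; exact ⟨hr, hc⟩
    have hlt := T.col_incr r c hmem
    obtain ⟨e1, _⟩ := entry_bounds T (p := (r, c)) (by omega) hc
    obtain ⟨_, e2⟩ := entry_bounds T (p := (r + 1, c)) hr hc
    exact hf.mono e1 hlt.le e2
  · intro p hp
    show f (T.entry p) = 0
    rw [T.zero_outside p (by rw [mem_ydCells_replicate]; exact hp)]
    exact hf.2.2.2 0 (by omega)

/-- one-step version of the chain lemma -/
theorem consec_row_le {m : ℕ} (T : SYT (List.replicate k n)) (f : ℕ → ℕ)
    (hf : IsAdm (k * n) (ascSet (List.replicate k n) T) m f)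
    {p q : ℕ × ℕ} (hp : p.1 < k ∧ p.2 < n) (hq : q.1 < k ∧ q.2 < n)
    (hstep : T.entry q = T.entry p + 1) (hqN : T.entry q ≤ k * n)
    (hfeq : f (T.entry p) = f (T.entry q)) : p.1 ≤ q.1 := by
  set i := T.entry p with hi
  have h1 : 1 ≤ i := (entry_bounds T hp.1 hp.2).1
  by_cases hasc : i ∈ ascSet (List.replicate k n) T
  · exfalso
    have := hf.2.2.1 i hasc
    rw [hfeq, hstep] at this
    omega
  · exact not_asc_row_le T h1 (by omega) hasc hp hq rfl (by omega)

theorem chain_row_le {m : ℕ} (T : SYT (List.replicate k n)) (f : ℕ → ℕ)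
    (hf : IsAdm (k * n) (ascSet (List.replicate k n) T) m f) :
    ∀ d : ℕ, ∀ p q : ℕ × ℕ, (p.1 < k ∧ p.2 < n) → (q.1 < k ∧ q.2 < n) →
    T.entry q = T.entry p + d + 1 → T.entry q ≤ k * n →
    f (T.entry p) = f (T.entry q) → p.1 ≤ q.1 := by
  intro d
  induction d with
  | zero =>
    intro p q hp hq hstep hqN hfeq
    exact consec_row_le T f hf hp hq hstep hqN hfeq
  | succ d ih =>
    intro p q hp hq hstep hqN hfeq
    have h1p : 1 ≤ T.entry p := (entry_bounds T hp.1 hp.2).1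
    obtain ⟨r, hr, her⟩ := entry_surj T (i := T.entry p + d + 1) (by omega) (by omega)
    have hle1 : f (T.entry p) ≤ f (T.entry r) := by
      rw [her]; exact hf.mono h1p (by omega) (by omega)
    have hle2 : f (T.entry r) ≤ f (T.entry q) := by
      rw [her]; exact hf.mono (by omega) (by omega) hqN
    have e1 : f (T.entry p) = f (T.entry r) := by omega
    have e2 : f (T.entry r) = f (T.entry q) := by omega
    have step1 : p.1 ≤ r.1 := ih p r hp hr (by omega) (by omega) e1
    have step2 : r.1 ≤ q.1 := consec_row_le T f hf hr hq (by omega) hqN e2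
    omega

theorem entry_lt_key_lt {m : ℕ} (T : SYT (List.replicate k n)) (f : ℕ → ℕ)
    (hf : IsAdm (k * n) (ascSet (List.replicate k n) T) m f)
    {p q : ℕ × ℕ} (hp : p.1 < k ∧ p.2 < n) (hq : q.1 < k ∧ q.2 < n) :
    T.entry p < T.entry q →
      key k n (fun x => f (T.entry x)) p < key k n (fun x => f (T.entry x)) q := by
  intro hlt
  show _
  · have h1p : 1 ≤ T.entry p := (entry_bounds T hp.1 hp.2).1
    have hqN : T.entry q ≤ k * n := (entry_bounds T hq.1 hq.2).2
    have hMle : f (T.entry p) ≤ f (T.entry q) := hf.mono h1p hlt.le hqN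
    rcases Nat.lt_or_ge (f (T.entry p)) (f (T.entry q)) with hM | hM
    · exact key_lt_of_M_lt hp.1 hp.2 hM
    · have hMeq : f (T.entry p) = f (T.entry q) := by omega
      have hrow : p.1 ≤ q.1 :=
        chain_row_le T f hf (T.entry q - T.entry p - 1) p q hp hq (by omega) hqN hMeq
      rcases Nat.lt_or_ge p.1 q.1 with hr | hr
      · exact key_lt_of_row_lt hp.2 hMeq hr
      · have hreq : p.1 = q.1 := by omega
        have hpq : p ≠ q := by
          intro hcontra; rw [hcontra] at hlt; omega
        have hcol : p.2 < q.2 := by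
          rcases Nat.lt_trichotomy p.2 q.2 with h | h | h
          · exact h
          · exfalso; exact hpq (Prod.ext hreq h)
          · exfalso
            have : T.entry (q.1, q.2) < T.entry (q.1, p.2) := row_ext T hq.1 h hp.2
            rw [← hreq] at this
            simp only [Prod.mk.eta] at this
            rw [hreq] at this
            have hh : T.entry (q.1, q.2) = T.entry q := by rw [Prod.mk.eta]
            have hh2 : T.entry (p.1, p.2) = T.entry p := by rw [Prod.mk.eta]
            omega
        exact key_lt_of_col_lt hMeq hreq hcol

theorem entry_lt_iff_key_lt {m : ℕ} (T : SYT (List.replicate k n)) (f : ℕ → ℕ)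
    (hf : IsAdm (k * n) (ascSet (List.replicate k n) T) m f)
    {p q : ℕ × ℕ} (hp : p.1 < k ∧ p.2 < n) (hq : q.1 < k ∧ q.2 < n) :
    T.entry p < T.entry q ↔
      key k n (fun x => f (T.entry x)) p < key k n (fun x => f (T.entry x)) q := by
  constructor
  · exact entry_lt_key_lt T f hf hp hq
  · intro hkey
    rcases Nat.lt_trichotomy (T.entry p) (T.entry q) with h | h | h
    · exact h
    · exfalso
      have : p = q := entry_injOn T hp.1 hp.2 hq.1 hq.2 h
      rw [this] at hkey; omega
    · exfalso
      have := entry_lt_key_lt T f hf hq hp h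
      omega

theorem entry_le_iff_key_le {m : ℕ} (T : SYT (List.replicate k n)) (f : ℕ → ℕ)
    (hf : IsAdm (k * n) (ascSet (List.replicate k n) T) m f)
    {p q : ℕ × ℕ} (hp : p.1 < k ∧ p.2 < n) (hq : q.1 < k ∧ q.2 < n) :
    T.entry p ≤ T.entry q ↔
      key k n (fun x => f (T.entry x)) p ≤ key k n (fun x => f (T.entry x)) q := by
  rw [← Nat.not_lt, ← Nat.not_lt, not_iff_not]
  exact entry_lt_iff_key_lt T f hf hq hp

/-- The rank characterization: entries are determined by the induced matrix. -/
theorem entry_eq_rank {m : ℕ} (T : SYT (List.replicate k n)) (f : ℕ → ℕ)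
    (hf : IsAdm (k * n) (ascSet (List.replicate k n) T) m f)
    {p : ℕ × ℕ} (hp : p.1 < k ∧ p.2 < n) :
    T.entry p = ((ydCells (List.replicate k n)).filter
      (fun q => key k n (fun x => f (T.entry x)) q ≤ key k n (fun x => f (T.entry x)) p)).card := by
  classical
  set κ := key k n (fun x => f (T.entry x)) with hκ
  set B := (ydCells (List.replicate k n)).filter (fun q => κ q ≤ κ p) with hB
  have himg : B.image T.entry = Finset.Icc 1 (T.entry p) := by
    ext j
    simp only [Finset.mem_image, Finset.mem_Icc, hB, Finset.mem_filter]
    constructor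
    · rintro ⟨q, ⟨hqc, hqk⟩, rfl⟩
      rw [mem_ydCells_replicate] at hqc
      exact ⟨(entry_bounds T hqc.1 hqc.2).1,
        (entry_le_iff_key_le T f hf hqc hp).mpr hqk⟩
    · rintro ⟨h1, h2⟩
      have hpN : T.entry p ≤ k * n := (entry_bounds T hp.1 hp.2).2
      obtain ⟨q, hq, hqe⟩ := entry_surj T h1 (le_trans h2 hpN)
      refine ⟨q, ⟨(mem_ydCells_replicate k n q).mpr hq, ?_⟩, hqe⟩
      exact (entry_le_iff_key_le T f hf hq hp).mp (by omega)
  have hinj : Set.InjOn T.entry ↑B := by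
    intro a ha b hb hab
    simp only [hB, Finset.coe_filter, Set.mem_setOf_eq] at ha hb
    rw [mem_ydCells_replicate] at ha hb
    exact entry_injOn T ha.1.1 ha.1.2 hb.1.1 hb.1.2 hab
  have hcard := Finset.card_image_of_injOn hinj
  rw [himg] at hcard
  rw [Nat.card_Icc] at hcard
  have h1p : 1 ≤ T.entry p := (entry_bounds T hp.1 hp.2).1
  omega

noncomputable def pairToMon (k n m : ℕ) : Pairs k n m → Mon k n m :=
  fun x => ⟨fun p => x.2.1 (x.1.entry p), isMon_comp x.1 x.2.1 x.2.2⟩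

theorem pairToMon_injective (k n m : ℕ) : Function.Injective (pairToMon k n m) := by
  rintro ⟨T, f, hf⟩ ⟨T', f', hf'⟩ h
  have hM : (fun p => f (T.entry p)) = (fun p => f' (T'.entry p)) :=
    congrArg Subtype.val h
  have hent : T.entry = T'.entry := by
    funext p
    by_cases hp : p.1 < k ∧ p.2 < n
    · rw [entry_eq_rank T f hf hp, entry_eq_rank T' f' hf' hp, hM]
    · rw [T.zero_outside p (by rw [mem_ydCells_replicate]; exact hp),
        T'.zero_outside p (by rw [mem_ydCells_replicate]; exact hp)]
  have hTT : T = T' := SYT.ext' hent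
  subst hTT
  have hff : f = f' := by
    funext i
    by_cases hi : 1 ≤ i ∧ i ≤ k * n
    · obtain ⟨p, hp, hpe⟩ := entry_surj T hi.1 hi.2
      have := congrFun hM p
      simp only [hpe] at this
      exact this
    · rw [hf.2.2.2 i hi, hf'.2.2.2 i hi]
  subst hff
  rfl

/- ### Surjectivity: standardization of a monotone matrix -/

theorem key_div {M : ℕ × ℕ → ℕ} {p : ℕ × ℕ} (hk : 1 ≤ k) (hn : 1 ≤ n)
    (hp1 : p.1 < k) (hp2 : p.2 < n) : key k n M p / n / k = M p := by
  unfold key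
  have h1 : (M p * k + p.1) * n + p.2 = n * (M p * k + p.1) + p.2 := by ring
  rw [h1, Nat.mul_add_div (by omega), Nat.div_eq_of_lt hp2, Nat.add_zero]
  have h2 : M p * k + p.1 = k * M p + p.1 := by ring
  rw [h2, Nat.mul_add_div (by omega), Nat.div_eq_of_lt hp1, Nat.add_zero]

theorem card_keyImage (M : ℕ × ℕ → ℕ) :
    ((ydCells (List.replicate k n)).image (key k n M)).card = k * n := by
  rw [Finset.card_image_of_injOn, card_ydCells_replicate]
  intro p hp q hq h
  rw [Finset.mem_coe, mem_ydCells_replicate] at hp hq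
  exact key_injOn hp.1 hp.2 hq.1 hq.2 h

noncomputable def rankIso (k n : ℕ) (M : ℕ × ℕ → ℕ) :
    Fin (k * n) ≃o ((ydCells (List.replicate k n)).image (key k n M)) :=
  ((ydCells (List.replicate k n)).image (key k n M)).orderIsoOfFin (card_keyImage M)

noncomputable def stdEntry (k n : ℕ) (M : ℕ × ℕ → ℕ) : ℕ × ℕ → ℕ :=
  fun p => if hp : p ∈ ydCells (List.replicate k n) then
    (((rankIso k n M).symm ⟨key k n M p, Finset.mem_image_of_mem _ hp⟩ : Fin (k * n)) : ℕ) + 1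
  else 0

theorem stdEntry_of_mem {M : ℕ × ℕ → ℕ} {p : ℕ × ℕ} (hp : p ∈ ydCells (List.replicate k n)) :
    stdEntry k n M p =
      (((rankIso k n M).symm ⟨key k n M p, Finset.mem_image_of_mem _ hp⟩ : Fin (k * n)) : ℕ) + 1 :=
  dif_pos hp

theorem stdEntry_bounds {M : ℕ × ℕ → ℕ} {p : ℕ × ℕ} (hp : p ∈ ydCells (List.replicate k n)) :
    1 ≤ stdEntry k n M p ∧ stdEntry k n M p ≤ k * n := by
  rw [stdEntry_of_mem hp]
  have := (((rankIso k n M).symm ⟨key k n M p, Finset.mem_image_of_mem _ hp⟩ : Fin (k * n))).isLt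
  omega

theorem stdEntry_lt_iff {M : ℕ × ℕ → ℕ} {p q : ℕ × ℕ}
    (hp : p ∈ ydCells (List.replicate k n)) (hq : q ∈ ydCells (List.replicate k n)) :
    stdEntry k n M p < stdEntry k n M q ↔ key k n M p < key k n M q := by
  rw [stdEntry_of_mem hp, stdEntry_of_mem hq]
  rw [Nat.add_lt_add_iff_right]
  rw [← Fin.lt_iff_val_lt_val]
  rw [(rankIso k n M).symm.lt_iff_lt]
  exact Subtype.mk_lt_mk

theorem stdEntry_surj {M : ℕ × ℕ → ℕ} {j : ℕ} (h1 : 1 ≤ j) (h2 : j ≤ k * n) :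
    ∃ p ∈ ydCells (List.replicate k n), stdEntry k n M p = j := by
  have hmem := ((rankIso k n M) ⟨j - 1, by omega⟩).2
  rw [Finset.mem_image] at hmem
  obtain ⟨p, hp, hkey⟩ := hmem
  refine ⟨p, hp, ?_⟩
  rw [stdEntry_of_mem hp]
  have : (⟨key k n M p, Finset.mem_image_of_mem _ hp⟩ :
      ((ydCells (List.replicate k n)).image (key k n M))) = (rankIso k n M) ⟨j - 1, by omega⟩ :=
    Subtype.ext hkey
  rw [this, OrderIso.symm_apply_apply]
  simp only []
  omega

theorem stdEntry_injOn {M : ℕ × ℕ → ℕ} {p q : ℕ × ℕ}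
    (hp : p ∈ ydCells (List.replicate k n)) (hq : q ∈ ydCells (List.replicate k n))
    (h : stdEntry k n M p = stdEntry k n M q) : p = q := by
  have h1 : key k n M p = key k n M q := by
    rcases Nat.lt_trichotomy (key k n M p) (key k n M q) with hh | hh | hh
    · exfalso; have := (stdEntry_lt_iff (M := M) hp hq).mpr hh; omega
    · exact hh
    · exfalso; have := (stdEntry_lt_iff (M := M) hq hp).mpr hh; omega
  rw [mem_ydCells_replicate] at hp hq
  exact key_injOn hp.1 hp.2 hq.1 hq.2 h1

noncomputable def stdSYT (m : ℕ) (M : Mon k n m) : SYT (List.replicate k n) where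
  entry := stdEntry k n M.1
  zero_outside := fun p hp => dif_neg hp
  bijOn := by
    rw [sum_replicate']
    refine ⟨?_, ?_, ?_⟩
    · intro p hp
      rw [Finset.mem_coe] at hp
      have := stdEntry_bounds (M := M.1) hp
      rw [Set.mem_Icc]; omega
    · intro p hp q hq h
      rw [Finset.mem_coe] at hp hq
      exact stdEntry_injOn hp hq h
    · intro j hj
      rw [Set.mem_Icc] at hj
      obtain ⟨p, hp, hpe⟩ := stdEntry_surj (M := M.1) hj.1 hj.2
      exact ⟨p, hp, hpe⟩
  row_incr := by
    intro r c hmem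
    have hc := (mem_ydCells_replicate k n (r, c + 1)).mp hmem
    have hmem' : ((r, c) : ℕ × ℕ) ∈ ydCells (List.replicate k n) := by
      rw [mem_ydCells_replicate]
      exact ⟨hc.1, by omega⟩
    rw [stdEntry_lt_iff hmem' hmem]
    have hle : M.1 (r, c) ≤ M.1 (r, c + 1) := M.2.2.1 r c hc.1 hc.2
    rcases Nat.lt_or_ge (M.1 (r, c)) (M.1 (r, c + 1)) with h | h
    · exact key_lt_of_M_lt hc.1 (by omega : ((r,c) : ℕ × ℕ).2 < n) h
    · exact key_lt_of_col_lt (by omega) rfl (by omega)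
  col_incr := by
    intro r c hmem
    have hc := (mem_ydCells_replicate k n (r + 1, c)).mp hmem
    have hmem' : ((r, c) : ℕ × ℕ) ∈ ydCells (List.replicate k n) := by
      rw [mem_ydCells_replicate]
      exact ⟨by omega, hc.2⟩
    rw [stdEntry_lt_iff hmem' hmem]
    have hle : M.1 (r, c) ≤ M.1 (r + 1, c) := M.2.2.2.1 r c hc.1 hc.2
    rcases Nat.lt_or_ge (M.1 (r, c)) (M.1 (r + 1, c)) with h | h
    · exact key_lt_of_M_lt (by omega : ((r,c) : ℕ × ℕ).1 < k) hc.2 h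
    · exact key_lt_of_row_lt hc.2 (by omega) (by omega)

noncomputable def stdF (k n : ℕ) (M : ℕ × ℕ → ℕ) : ℕ → ℕ :=
  fun i => if hi : 1 ≤ i ∧ i ≤ k * n then
    (((rankIso k n M) ⟨i - 1, by omega⟩ : ℕ) / n) / k
  else 0

theorem stdF_entry (hk : 1 ≤ k) (hn : 1 ≤ n) {M : ℕ × ℕ → ℕ} {p : ℕ × ℕ}
    (hp : p ∈ ydCells (List.replicate k n)) :
    stdF k n M (stdEntry k n M p) = M p := by
  have hb := stdEntry_bounds (M := M) hp
  rw [stdEntry_of_mem hp] at hb ⊢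
  set x : ((ydCells (List.replicate k n)).image (key k n M)) :=
    ⟨key k n M p, Finset.mem_image_of_mem _ hp⟩ with hx
  rw [stdF, dif_pos (by omega : 1 ≤ ((((rankIso k n M).symm x : Fin (k*n)) : ℕ) + 1) ∧
    ((((rankIso k n M).symm x : Fin (k*n)) : ℕ) + 1) ≤ k * n)]
  have hidx : (⟨(((rankIso k n M).symm x : Fin (k*n)) : ℕ) + 1 - 1, by omega⟩ : Fin (k * n)) =
      (rankIso k n M).symm x := by
    apply Fin.ext
    simp only []
    omega
  rw [hidx, OrderIso.apply_symm_apply]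
  rw [mem_ydCells_replicate] at hp
  exact key_div hk hn hp.1 hp.2

theorem isAdm_stdF (hk : 1 ≤ k) (hn : 1 ≤ n) (m : ℕ) (M : Mon k n m) :
    IsAdm (k * n) (ascSet (List.replicate k n) (stdSYT m M)) m (stdF k n M.1) := by
  have hval : ∀ i, 1 ≤ i → i ≤ k * n → ∃ p : ℕ × ℕ, (p.1 < k ∧ p.2 < n) ∧
      stdEntry k n M.1 p = i ∧ stdF k n M.1 i = M.1 p := by
    intro i h1 h2
    obtain ⟨p, hp, hpe⟩ := stdEntry_surj (M := M.1) h1 h2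
    refine ⟨p, (mem_ydCells_replicate k n p).mp hp, hpe, ?_⟩
    rw [← hpe, stdF_entry hk hn hp]
  refine ⟨?_, ?_, ?_, ?_⟩
  · intro i h1 h2
    obtain ⟨p, hp, _, hfe⟩ := hval i h1 h2
    rw [hfe]
    exact M.2.1 p hp.1 hp.2
  · intro i h1 h2
    obtain ⟨p, hp, hpe, hfe⟩ := hval i h1 (by omega)
    obtain ⟨q, hq, hqe, hge⟩ := hval (i + 1) (by omega) h2
    rw [hfe, hge]
    have hlt : stdEntry k n M.1 p < stdEntry k n M.1 q := by omega
    rw [stdEntry_lt_iff (by rw [mem_ydCells_replicate]; exact hp)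
      (by rw [mem_ydCells_replicate]; exact hq)] at hlt
    exact M_le_of_key_le hq.1 hq.2 hlt.le
  · intro i hi
    rw [mem_ascSet_iff] at hi
    obtain ⟨⟨h1, h2⟩, p, hpc, q, hqc, hpe, hqe, hrow⟩ := hi
    have h2' : i + 1 ≤ k * n := by
      have := stdEntry_bounds (M := M.1) hqc
      rw [show (stdSYT m M).entry = stdEntry k n M.1 from rfl] at hqe
      omega
    obtain ⟨p', hp', hpe', hfe⟩ := hval i h1 (by omega)
    obtain ⟨q', hq', hqe', hge⟩ := hval (i + 1) (by omega) h2'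
    rw [hfe, hge]
    -- identify p = p', q = q'
    have hpp : p = p' := stdEntry_injOn (M := M.1) hpc
      (by rw [mem_ydCells_replicate]; exact hp') (hpe.trans hpe'.symm)
    have hqq : q = q' := stdEntry_injOn (M := M.1) hqc
      (by rw [mem_ydCells_replicate]; exact hq') (hqe.trans hqe'.symm)
    subst hpp; subst hqq
    have hlt : stdEntry k n M.1 p < stdEntry k n M.1 q := by omega
    rw [stdEntry_lt_iff hpc hqc] at hlt
    have hMle : M.1 p ≤ M.1 q := M_le_of_key_le hq'.1 hq'.2 hlt.le
    rcases Nat.lt_or_ge (M.1 p) (M.1 q) with h | h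
    · exact h
    · exfalso
      have hMeq : M.1 p = M.1 q := by omega
      have := row_le_of_key_le hq'.2 hMeq hlt.le
      omega
  · intro i hi
    exact dif_neg hi

theorem pairToMon_surjective (hk : 1 ≤ k) (hn : 1 ≤ n) (m : ℕ) :
    Function.Surjective (pairToMon k n m) := by
  intro M
  refine ⟨⟨stdSYT m M, ⟨stdF k n M.1, isAdm_stdF hk hn m M⟩⟩, ?_⟩
  apply Subtype.ext
  funext p
  show stdF k n M.1 ((stdSYT m M).entry p) = M.1 p
  by_cases hp : p ∈ ydCells (List.replicate k n)
  · exact stdF_entry hk hn hp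
  · have h1 : (stdSYT m M).entry p = 0 := dif_neg hp
    rw [h1]
    have h2 : stdF k n M.1 0 = 0 := dif_neg (by omega)
    rw [h2]
    rw [mem_ydCells_replicate] at hp
    exact (M.2.2.2.2 p hp).symm

theorem pairs_card_eq_mon (hk : 1 ≤ k) (hn : 1 ≤ n) (m : ℕ) :
    Nat.card (Pairs k n m) = Nat.card (Mon k n m) :=
  Nat.card_congr (Equiv.ofBijective (pairToMon k n m)
    ⟨pairToMon_injective k n m, pairToMon_surjective hk hn m⟩)

/-- `cA A i` = number of elements of `A` that are `< i` (and `≥ 1`). -/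
def cA (A : Finset ℕ) (i : ℕ) : ℕ := (A ∩ Finset.Icc 1 (i - 1)).card

theorem cA_le_card (A : Finset ℕ) (i : ℕ) : cA A i ≤ A.card :=
  Finset.card_le_card Finset.inter_subset_left

theorem cA_one (A : Finset ℕ) : cA A 1 = 0 := by
  unfold cA
  simp

theorem cA_mono (A : Finset ℕ) {i j : ℕ} (h : i ≤ j) : cA A i ≤ cA A j := by
  apply Finset.card_le_card
  apply Finset.inter_subset_inter_left
  apply Finset.Icc_subset_Icc_right
  omega

theorem cA_succ_le (A : Finset ℕ) (i : ℕ) (hi : 1 ≤ i) : cA A (i + 1) ≤ cA A i + 1 := by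
  unfold cA
  have h : A ∩ Finset.Icc 1 (i + 1 - 1) ⊆ insert i (A ∩ Finset.Icc 1 (i - 1)) := by
    intro x hx
    rw [Finset.mem_inter, Finset.mem_Icc] at hx
    rw [Finset.mem_insert, Finset.mem_inter, Finset.mem_Icc]
    rcases Nat.eq_or_lt_of_le hx.2.2 with h | h
    · left; omega
    · right; exact ⟨hx.1, hx.2.1, by omega⟩
  calc (A ∩ Finset.Icc 1 (i + 1 - 1)).card ≤ (insert i (A ∩ Finset.Icc 1 (i - 1))).card :=
        Finset.card_le_card h
    _ ≤ (A ∩ Finset.Icc 1 (i - 1)).card + 1 := Finset.card_insert_le _ _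
  
theorem cA_succ_of_mem {A : Finset ℕ} {a : ℕ} (ha : a ∈ A) (h1 : 1 ≤ a) :
    cA A a + 1 ≤ cA A (a + 1) := by
  unfold cA
  have h : insert a (A ∩ Finset.Icc 1 (a - 1)) ⊆ A ∩ Finset.Icc 1 (a + 1 - 1) := by
    intro x hx
    rw [Finset.mem_insert, Finset.mem_inter, Finset.mem_Icc] at hx
    rw [Finset.mem_inter, Finset.mem_Icc]
    rcases hx with rfl | hx
    · exact ⟨ha, h1, by omega⟩
    · exact ⟨hx.1, hx.2.1, by omega⟩
  have hcard := Finset.card_le_card h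
  rw [Finset.card_insert_of_notMem (by rw [Finset.mem_inter, Finset.mem_Icc]; omega)] at hcard
  omega

theorem cA_succ_of_not_mem {A : Finset ℕ} {i : ℕ} (hi : i ∉ A) (h1 : 1 ≤ i) :
    cA A (i + 1) = cA A i := by
  unfold cA
  congr 1
  ext x
  rw [Finset.mem_inter, Finset.mem_Icc, Finset.mem_inter, Finset.mem_Icc]
  constructor
  · rintro ⟨hx1, hx2, hx3⟩
    refine ⟨hx1, hx2, ?_⟩
    rcases Nat.eq_or_lt_of_le hx3 with h | h
    · exfalso; apply hi; rwa [show i = x by omega]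
    · omega
  · rintro ⟨hx1, hx2, hx3⟩
    exact ⟨hx1, hx2, by omega⟩

theorem cA_split {N : ℕ} {A : Finset ℕ} (hA : A ⊆ Finset.Icc 1 (N - 1)) {i : ℕ} (hi : 1 ≤ i) :
    cA A i + (A ∩ Finset.Icc i (N - 1)).card = A.card := by
  unfold cA
  rw [← Finset.card_union_of_disjoint]
  · congr 1
    ext x
    rw [Finset.mem_union, Finset.mem_inter, Finset.mem_inter, Finset.mem_Icc, Finset.mem_Icc]
    constructor
    · rintro (⟨h, _⟩ | ⟨h, _⟩) <;> exact h
    · intro hx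
      have := hA hx
      rw [Finset.mem_Icc] at this
      rcases Nat.lt_or_ge x i with h | h
      · left; exact ⟨hx, this.1, by omega⟩
      · right; exact ⟨hx, h, this.2⟩
  · rw [Finset.disjoint_left]
    intro x hx1 hx2
    rw [Finset.mem_inter, Finset.mem_Icc] at hx1 hx2
    omega

theorem adm_lb {N : ℕ} {A : Finset ℕ} {m : ℕ} {f : ℕ → ℕ}
    (hA : A ⊆ Finset.Icc 1 (N - 1)) (hf : IsAdm N A m f) :
    ∀ i, 1 ≤ i → i ≤ N → cA A i + 1 ≤ f i := by
  intro i
  induction i with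
  | zero => omega
  | succ j ih =>
    intro _ hjN
    rcases Nat.eq_zero_or_pos j with rfl | hj
    · rw [show (0 + 1) = 1 by rfl, cA_one]
      have := hf.1 1 le_rfl hjN
      omega
    · have hstep := hf.2.1 j hj hjN
      have hIH := ih hj (by omega)
      by_cases hjA : j ∈ A
      · have := hf.2.2.1 j hjA
        have := cA_succ_le A j hj
        omega
      · have := cA_succ_of_not_mem hjA hj
        omega

theorem adm_ub {N : ℕ} {A : Finset ℕ} {m : ℕ} {f : ℕ → ℕ} (hN : 1 ≤ N)
    (hA : A ⊆ Finset.Icc 1 (N - 1)) (hf : IsAdm N A m f) :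
    ∀ j i, i + j = N → 1 ≤ i → f i + (A ∩ Finset.Icc i (N - 1)).card ≤ f N := by
  intro j
  induction j with
  | zero =>
    intro i hiN h1
    have : A ∩ Finset.Icc i (N - 1) = ∅ := by
      rw [Finset.eq_empty_iff_forall_notMem]
      intro x hx
      rw [Finset.mem_inter, Finset.mem_Icc] at hx
      omega
    have hiN' : i = N := by omega
    subst hiN'
    rw [this]
    simp
  | succ j ih =>
    intro i hiN h1
    have hIH := ih (i + 1) (by omega) (by omega)
    have hstep := hf.2.1 i h1 (by omega)
    by_cases hiA : i ∈ A
    · have hstrict := hf.2.2.1 i hiA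
      have hsub : A ∩ Finset.Icc i (N - 1) ⊆ insert i (A ∩ Finset.Icc (i + 1) (N - 1)) := by
        intro x hx
        rw [Finset.mem_inter, Finset.mem_Icc] at hx
        rw [Finset.mem_insert, Finset.mem_inter, Finset.mem_Icc]
        rcases Nat.eq_or_lt_of_le hx.2.1 with h | h
        · left; omega
        · right; exact ⟨hx.1, by omega, hx.2.2⟩
      have hcard := Finset.card_le_card hsub
      have := Finset.card_insert_le i (A ∩ Finset.Icc (i + 1) (N - 1))
      omega
    · have heq : A ∩ Finset.Icc i (N - 1) = A ∩ Finset.Icc (i + 1) (N - 1) := by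
        ext x
        rw [Finset.mem_inter, Finset.mem_Icc, Finset.mem_inter, Finset.mem_Icc]
        constructor
        · rintro ⟨hx1, hx2, hx3⟩
          refine ⟨hx1, ?_, hx3⟩
          rcases Nat.eq_or_lt_of_le hx2 with h | h
          · exfalso; apply hiA; rwa [← h] at hx1
          · omega
        · rintro ⟨hx1, hx2, hx3⟩
          exact ⟨hx1, by omega, hx3⟩
      rw [heq]
      omega


theorem adm_empty_zero_isEmpty {N : ℕ} (hN : 1 ≤ N) : IsEmpty (Adm N ∅ 0) := by
  constructor
  intro f
  have := f.2.1 1 le_rfl hN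
  omega

theorem card_adm_shift {N m : ℕ} {A : Finset ℕ} (hN : 1 ≤ N)
    (hA : A ⊆ Finset.Icc 1 (N - 1)) :
    Nat.card (Adm N A m) = Nat.card (Adm N ∅ (m - A.card)) := by
  rcases Nat.lt_or_ge m A.card with hm | hm
  · -- both sides empty
    have h1 : IsEmpty (Adm N A m) := by
      constructor
      intro f
      have hlb := adm_lb hA f.2 N hN le_rfl
      have : cA A N = A.card := by
        unfold cA
        congr 1
        exact Finset.inter_eq_left.mpr hA
      have hub := (f.2.1 N hN le_rfl).2
      omega
    have h2 : m - A.card = 0 := by omega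
    rw [h2]
    have h3 := adm_empty_zero_isEmpty hN
    rw [Nat.card_of_isEmpty, Nat.card_of_isEmpty]
  · -- equivalence
    apply Nat.card_congr
    symm
    refine ⟨fun g => ⟨fun i => if 1 ≤ i ∧ i ≤ N then g.1 i + cA A i else 0, ?_⟩,
      fun f => ⟨fun i => if 1 ≤ i ∧ i ≤ N then f.1 i - cA A i else 0, ?_⟩, ?_, ?_⟩
    · obtain ⟨g, hg1, hg2, hg3, hg4⟩ := g
      refine ⟨?_, ?_, ?_, ?_⟩
      · intro i h1 h2
        dsimp only; rw [if_pos ⟨h1, h2⟩]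
        have := hg1 i h1 h2
        have := cA_le_card A i
        omega
      · intro i h1 h2
        dsimp only; rw [if_pos ⟨h1, by omega⟩, if_pos (⟨by omega, h2⟩ : 1 ≤ i + 1 ∧ i + 1 ≤ N)]
        have := hg2 i h1 h2
        have := cA_mono A (show i ≤ i + 1 by omega)
        omega
      · intro a ha
        have haI := hA ha
        rw [Finset.mem_Icc] at haI
        dsimp only; rw [if_pos ⟨haI.1, by omega⟩, if_pos (⟨by omega, by omega⟩ : 1 ≤ a + 1 ∧ a + 1 ≤ N)]
        have h5 := cA_succ_of_mem ha haI.1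
        have := hg2 a haI.1 (by omega)
        omega
      · intro i hi
        dsimp only; rw [if_neg hi]
    · obtain ⟨f, hf1, hf2, hf3, hf4⟩ := f
      have hlb := adm_lb hA ⟨hf1, hf2, hf3, hf4⟩
      have hub := adm_ub hN hA ⟨hf1, hf2, hf3, hf4⟩
      refine ⟨?_, ?_, ?_, ?_⟩
      · intro i h1 h2
        dsimp only; rw [if_pos ⟨h1, h2⟩]
        have hl := hlb i h1 h2
        have hu := hub (N - i) i (by omega) h1
        have hsplit := cA_split hA h1 (A := A) (N := N)
        have hfN := (hf1 N hN le_rfl).2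
        omega
      · intro i h1 h2
        dsimp only; rw [if_pos ⟨h1, by omega⟩, if_pos (⟨by omega, h2⟩ : 1 ≤ i + 1 ∧ i + 1 ≤ N)]
        have hl := hlb i h1 (by omega)
        have hstep := hf2 i h1 h2
        by_cases hiA : i ∈ A
        · have := hf3 i hiA
          have := cA_succ_le A i h1
          omega
        · have := cA_succ_of_not_mem hiA h1
          omega
      · intro a ha
        exact absurd ha (Finset.notMem_empty a)
      · intro i hi
        dsimp only; rw [if_neg hi]
    · intro g
      apply Subtype.ext
      funext i
      by_cases hi : 1 ≤ i ∧ i ≤ N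
      · simp only [if_pos hi]
        omega
      · simp only [if_neg hi]
        exact (g.2.2.2.2 i hi).symm
    · intro f
      apply Subtype.ext
      funext i
      by_cases hi : 1 ≤ i ∧ i ≤ N
      · simp only [if_pos hi]
        have hl := adm_lb hA f.2 i hi.1 hi.2
        omega
      · simp only [if_neg hi]
        exact (f.2.2.2.2 i hi).symm


/- ### the d function -/
noncomputable def dF (N j : ℕ) : ℕ := Nat.card (Adm N ∅ j)

theorem dF_zero {N : ℕ} (hN : 1 ≤ N) : dF N 0 = 0 := by
  have := adm_empty_zero_isEmpty hN
  exact Nat.card_of_isEmpty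

theorem dF_one {N : ℕ} (hN : 1 ≤ N) : dF N 1 = 1 := by
  have hu : Unique (Adm N ∅ 1) := by
    refine ⟨⟨⟨fun i => if 1 ≤ i ∧ i ≤ N then 1 else 0, ?_, ?_, ?_, ?_⟩⟩, ?_⟩
    · intro i h1 h2; dsimp only; rw [if_pos ⟨h1, h2⟩]; omega
    · intro i h1 h2
      dsimp only
      rw [if_pos ⟨h1, by omega⟩, if_pos (⟨by omega, h2⟩ : 1 ≤ i + 1 ∧ i + 1 ≤ N)]
    · intro a ha; exact absurd ha (Finset.notMem_empty a)
    · intro i hi; dsimp only; rw [if_neg hi]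
    · intro f
      apply Subtype.ext
      funext i
      show f.1 i = if 1 ≤ i ∧ i ≤ N then 1 else 0
      by_cases hi : 1 ≤ i ∧ i ≤ N
      · rw [if_pos hi]
        have := f.2.1 i hi.1 hi.2
        omega
      · rw [if_neg hi]
        exact f.2.2.2.2 i hi
  rw [dF, Nat.card_unique]

/- ### grouping -/
theorem ascSet_subset {k n : ℕ} (T : SYT (List.replicate k n)) :
    ascSet (List.replicate k n) T ⊆ Finset.Icc 1 (k * n - 1) := by
  rw [ascSet]
  intro x hx
  have := Finset.filter_subset _ _ hx
  rwa [sum_replicate'] at this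

theorem ascNum_eq_card {lam : List ℕ} (T : SYT lam) :
    ascNum lam T = (ascSet lam T).card := rfl

theorem phi_eq {k n : ℕ} (hk : 1 ≤ k) (hn : 1 ≤ n) (m : ℕ) :
    Nat.card (Pairs k n m) = ∑ h ∈ Finset.range m,
      (Nat.card {T : SYT (List.replicate k n) // ascNum (List.replicate k n) T = h}) *
        dF (k * n) (m - h) := by
  classical
  letI : Fintype (SYT (List.replicate k n)) := Fintype.ofFinite _
  letI : ∀ T : SYT (List.replicate k n),
      Fintype (Adm (k * n) (ascSet (List.replicate k n) T) m) := fun T => Fintype.ofFinite _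
  have hkn : 1 ≤ k * n := Nat.one_le_iff_ne_zero.mpr (by positivity)
  have step1 : Nat.card (Pairs k n m) =
      ∑ T : SYT (List.replicate k n), dF (k * n) (m - ascNum (List.replicate k n) T) := by
    rw [Pairs, Nat.card_eq_fintype_card, Fintype.card_sigma]
    apply Finset.sum_congr rfl
    intro T _
    rw [← Nat.card_eq_fintype_card, card_adm_shift hkn (ascSet_subset T), ← ascNum_eq_card]
    rfl
  rw [step1]
  rw [← Finset.sum_filter_add_sum_filter_not Finset.univ
    (fun T => ascNum (List.replicate k n) T < m)]
  have hzero : ∑ T ∈ Finset.univ.filter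
      (fun T => ¬ ascNum (List.replicate k n) T < m),
      dF (k * n) (m - ascNum (List.replicate k n) T) = 0 := by
    apply Finset.sum_eq_zero
    intro T hT
    rw [Finset.mem_filter] at hT
    have : m - ascNum (List.replicate k n) T = 0 := by omega
    rw [this, dF_zero hkn]
  rw [hzero, Nat.add_zero]
  rw [← Finset.sum_fiberwise_of_maps_to (g := fun T => ascNum (List.replicate k n) T)
    (t := Finset.range m) (fun T hT => by
      rw [Finset.mem_filter] at hT
      exact Finset.mem_range.mpr hT.2)]
  apply Finset.sum_congr rfl
  intro h hh
  rw [Finset.mem_range] at hh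
  have hfil : (Finset.univ.filter (fun T => ascNum (List.replicate k n) T < m)).filter
      (fun T => ascNum (List.replicate k n) T = h) =
      Finset.univ.filter (fun T => ascNum (List.replicate k n) T = h) := by
    ext T
    simp only [Finset.mem_filter, Finset.mem_univ, true_and]
    constructor
    · rintro ⟨_, h2⟩; exact h2
    · intro h2; exact ⟨by omega, h2⟩
  rw [hfil]
  have hconst : ∀ T ∈ Finset.univ.filter (fun T => ascNum (List.replicate k n) T = h),
      dF (k * n) (m - ascNum (List.replicate k n) T) = dF (k * n) (m - h) :=
    fun T hT => by rw [(Finset.mem_filter.mp hT).2]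
  rw [Finset.sum_congr rfl hconst, Finset.sum_const, smul_eq_mul, Nat.card_eq_fintype_card,
    Fintype.card_subtype]

/- ### final extraction -/
theorem narayana_symm_aux : ∀ h : ℕ, ∀ k n : ℕ, 1 ≤ k → 1 ≤ n →
    Nat.card {T : SYT (List.replicate k n) // ascNum (List.replicate k n) T = h} =
      Nat.card {T : SYT (List.replicate n k) // ascNum (List.replicate n k) T = h} := by
  intro h
  induction h using Nat.strong_induction_on with
  | _ h ih =>
    intro k n hk hn
    have hphi : Nat.card (Pairs k n (h + 1)) = Nat.card (Pairs n k (h + 1)) := by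
      rw [pairs_card_eq_mon hk hn, pairs_card_eq_mon hn hk, mon_card_symm]
    rw [phi_eq hk hn, phi_eq hn hk] at hphi
    rw [Finset.sum_range_succ, Finset.sum_range_succ] at hphi
    have hnk : n * k = k * n := Nat.mul_comm n k
    rw [hnk] at hphi
    have hsums : ∑ x ∈ Finset.range h,
        (Nat.card {T : SYT (List.replicate k n) // ascNum (List.replicate k n) T = x}) *
          dF (k * n) (h + 1 - x) =
        ∑ x ∈ Finset.range h,
        (Nat.card {T : SYT (List.replicate n k) // ascNum (List.replicate n k) T = x}) *
          dF (k * n) (h + 1 - x) := by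
      apply Finset.sum_congr rfl
      intro x hx
      rw [Finset.mem_range] at hx
      rw [ih x hx k n hk hn]
    rw [hsums] at hphi
    have hd1 : dF (k * n) (h + 1 - h) = 1 := by
      rw [show h + 1 - h = 1 by omega]
      exact dF_one (Nat.one_le_iff_ne_zero.mpr (by positivity))
    rw [hd1, Nat.mul_one, Nat.mul_one] at hphi
    omega


end Nara

/-- Theorem: `N(k,n,h) = N(n,k,h)`: the number of standard Young tableaux of shape
`(n^k)` with `h` ascents equals the number of those of shape `(k^n)` with `h` ascents. -/
theorem narayana_swap (k n h : ℕ) (hk : 1 ≤ k) (hn : 1 ≤ n)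
    (hh : h ≤ (k - 1) * (n - 1)) :
    Nat.card {T : SYT (List.replicate k n) // ascNum (List.replicate k n) T = h} =
      Nat.card {T : SYT (List.replicate n k) // ascNum (List.replicate n k) T = h} :=
  Nara.narayana_symm_aux h k n hk hn
end

section
/- Let P be a finite partially ordered set with p elements, and let ω and ω′ be two linear extensions of P (natural labelings). Then there exists a bijection f : L(P) → L(P) on the set of linear extensions of P such that for every linear extension σ, Des_ω(σ) = Des_{ω′}(f(σ)). -/
/-- A linear extension of a finite poset `P`: an order-preserving bijection from `P` to
`Fin (card P)` (thought of as `{1, …, p}`). -/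
structure LinExt (P : Type*) [PartialOrder P] [Fintype P] where
  toEquiv : P ≃ Fin (Fintype.card P)
  strictMono : ∀ x y : P, x < y → toEquiv x < toEquiv y

/-- The descent set of the linear extension `σ` with respect to the natural labeling
`ω`: indices `1 ≤ i ≤ p-1` with `ω(σ⁻¹(i)) > ω(σ⁻¹(i+1))` (positions are 1-indexed, so
the element in position `i` is `σ.toEquiv.symm ⟨i-1, _⟩`). -/
def DesSet {P : Type*} [PartialOrder P] [Fintype P] (ω σ : LinExt P) : Set ℕ :=
  { i : ℕ | ∃ h : i < Fintype.card P, 1 ≤ i ∧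
      ω.toEquiv (σ.toEquiv.symm ⟨i, h⟩) <
        ω.toEquiv (σ.toEquiv.symm ⟨i - 1, Nat.lt_of_le_of_lt (Nat.sub_le i 1) h⟩) }

namespace DesAux

variable {P : Type*} [PartialOrder P] [Fintype P]

theorem linext_ext {σ τ : LinExt P} (h : σ.toEquiv = τ.toEquiv) : σ = τ := by
  cases σ; cases τ; simp_all

theorem desSet_congr {ω₁ σ₁ ω₂ σ₂ : LinExt P}
    (h : ∀ i : Fin (Fintype.card P),
      ω₁.toEquiv (σ₁.toEquiv.symm i) = ω₂.toEquiv (σ₂.toEquiv.symm i)) :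
    DesSet ω₁ σ₁ = DesSet ω₂ σ₂ := by
  ext i
  simp only [DesSet, Set.mem_setOf_eq]
  constructor
  · rintro ⟨h1, h2, h3⟩
    refine ⟨h1, h2, ?_⟩
    rw [← h, ← h]; exact h3
  · rintro ⟨h1, h2, h3⟩
    refine ⟨h1, h2, ?_⟩
    rw [h, h]; exact h3

theorem swap_lt_iff {n : ℕ} {k k1 : Fin n} (hk : (k : ℕ) + 1 = (k1 : ℕ)) (i j : Fin n)
    (h1 : ¬(i = k ∧ j = k1)) (h2 : ¬(i = k1 ∧ j = k)) :
    Equiv.swap k k1 i < Equiv.swap k k1 j ↔ i < j := by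
  rw [Equiv.swap_apply_def, Equiv.swap_apply_def]
  simp only [Fin.ext_iff] at h1 h2
  split_ifs <;>
    simp only [Fin.lt_def, Fin.ext_iff] at * <;> omega

/-- Number of inversions of a permutation of `Fin n`. -/
def inv {n : ℕ} (u : Fin n ≃ Fin n) : ℕ :=
  ((Finset.univ : Finset (Fin n × Fin n)).filter fun q => q.1 < q.2 ∧ u q.2 < u q.1).card

theorem inv_decrease {n : ℕ} {k k1 : Fin n} (hk : (k : ℕ) + 1 = (k1 : ℕ))
    (u : Fin n ≃ Fin n) (hdes : u k1 < u k) :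
    inv ((Equiv.swap k k1).trans u) < inv u := by
  classical
  set S : Finset (Fin n × Fin n) :=
    (Finset.univ.filter fun q => q.1 < q.2 ∧ u q.2 < u q.1) with hS
  set S' : Finset (Fin n × Fin n) :=
    (Finset.univ.filter fun q => q.1 < q.2 ∧
      ((Equiv.swap k k1).trans u) q.2 < ((Equiv.swap k k1).trans u) q.1) with hS'
  set ψ : Fin n × Fin n → Fin n × Fin n :=
    fun q => (Equiv.swap k k1 q.1, Equiv.swap k k1 q.2) with hψ
  have hinj : Function.Injective ψ := by
    intro q r h
    have h1 : Equiv.swap k k1 q.1 = Equiv.swap k k1 r.1 := congrArg Prod.fst h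
    have h2 : Equiv.swap k k1 q.2 = Equiv.swap k k1 r.2 := congrArg Prod.snd h
    exact Prod.ext ((Equiv.swap k k1).injective h1) ((Equiv.swap k k1).injective h2)
  have himg : S'.image ψ ⊆ S := by
    intro q hq
    rcases Finset.mem_image.mp hq with ⟨r, hr, rfl⟩
    rw [hS', Finset.mem_filter] at hr
    simp only [Finset.mem_univ, true_and, Equiv.trans_apply] at hr
    obtain ⟨hlt, hu⟩ := hr
    simp only [hS, Finset.mem_filter, Finset.mem_univ, true_and, hψ]
    refine ⟨?_, hu⟩
    rw [swap_lt_iff hk r.1 r.2 ?_ ?_]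
    · exact hlt
    · rintro ⟨hr1, hr2⟩
      rw [hr1, hr2, Equiv.swap_apply_left, Equiv.swap_apply_right] at hu
      exact absurd hu (not_lt.mpr hdes.le)
    · rintro ⟨hr1, hr2⟩
      rw [hr1, hr2] at hlt
      simp only [Fin.lt_def] at hlt
      omega
  have hmemS : (k, k1) ∈ S := by
    simp only [hS, Finset.mem_filter, Finset.mem_univ, true_and]
    exact ⟨by simp only [Fin.lt_def]; omega, hdes⟩
  have hnot : (k, k1) ∉ S'.image ψ := by
    intro hmem
    rcases Finset.mem_image.mp hmem with ⟨r, hr, heq⟩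
    have e1 : Equiv.swap k k1 r.1 = k := congrArg Prod.fst heq
    have e2 : Equiv.swap k k1 r.2 = k1 := congrArg Prod.snd heq
    have hr1 : r.1 = k1 := by
      apply (Equiv.swap k k1).injective
      rw [e1, Equiv.swap_apply_right]
    have hr2 : r.2 = k := by
      apply (Equiv.swap k k1).injective
      rw [e2, Equiv.swap_apply_left]
    simp only [hS', Finset.mem_filter, Finset.mem_univ, true_and] at hr
    rw [hr1, hr2] at hr
    have := hr.1
    simp only [Fin.lt_def] at this
    omega
  have hssub : S'.image ψ ⊂ S := ⟨himg, fun hsub => hnot (hsub hmemS)⟩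
  have hcard : S'.card = (S'.image ψ).card := (Finset.card_image_of_injective _ hinj).symm
  have : inv ((Equiv.swap k k1).trans u) = S'.card := rfl
  rw [this, hcard]
  exact Finset.card_lt_card hssub

theorem eq_id_of_strictMono {n : ℕ} (u : Fin n ≃ Fin n) (h : StrictMono u) :
    ∀ i, u i = i := by
  have hr : Set.range (⇑u) = Set.range (id : Fin n → Fin n) := by
    rw [Set.range_id, Set.range_eq_univ]
    exact u.surjective
  have inst : WellFoundedLT (Fin n) := inferInstance
  have h2 : ⇑u = (id : Fin n → Fin n) :=
    ((@Set.range_injOn_strictMono (Fin n) (Fin n) _ _ inst).eq_iff h strictMono_id).mp hr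
  intro i
  exact congrFun h2 i

theorem eq_id_of_inv_eq_zero {n : ℕ} (u : Fin n ≃ Fin n) (h : inv u = 0) :
    ∀ i, u i = i := by
  apply eq_id_of_strictMono
  intro i j hij
  by_contra hnot
  have hle : u j ≤ u i := not_lt.mp hnot
  have hne : u i ≠ u j := fun he => (ne_of_lt hij) (u.injective he)
  have hlt : u j < u i := lt_of_le_of_ne hle (Ne.symm hne)
  have hmem : (i, j) ∈ ((Finset.univ : Finset (Fin n × Fin n)).filter
      fun q => q.1 < q.2 ∧ u q.2 < u q.1) := by
    simp only [Finset.mem_filter, Finset.mem_univ, true_and]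
    exact ⟨hij, hlt⟩
  rw [inv, Finset.card_eq_zero] at h
  rw [h] at hmem
  exact absurd hmem (Finset.notMem_empty _)

theorem exists_descent_of_ne {n : ℕ} (u : Fin n ≃ Fin n) (h : ¬ ∀ i, u i = i) :
    ∃ k k1 : Fin n, (k : ℕ) + 1 = (k1 : ℕ) ∧ u k1 < u k := by
  by_contra hc
  push_neg at hc
  apply h
  apply eq_id_of_strictMono
  have hadj : ∀ (m : ℕ) (hm : m + 1 < n), u ⟨m, by omega⟩ < u ⟨m + 1, hm⟩ := by
    intro m hm
    have h1 := hc ⟨m, by omega⟩ ⟨m + 1, hm⟩ rfl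
    have h2 : u ⟨m, by omega⟩ ≠ u ⟨m + 1, hm⟩ := by
      intro he
      have := u.injective he
      simp only [Fin.ext_iff] at this
      omega
    exact lt_of_le_of_ne h1 h2
  have hmono : ∀ (d : ℕ), ∀ i j : Fin n, (j : ℕ) = (i : ℕ) + d + 1 → u i < u j := by
    intro d
    induction d with
    | zero =>
      intro i j hij
      have hm : (i : ℕ) + 1 < n := by omega
      have hj : j = ⟨(i : ℕ) + 1, hm⟩ := Fin.ext (by simp only [Fin.val_mk]; omega)
      rw [hj]
      exact hadj (i : ℕ) hm
    | succ d ih =>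
      intro i j hij
      have hm : (i : ℕ) + d + 1 < n := by omega
      have h1 : u i < u ⟨(i : ℕ) + d + 1, hm⟩ := ih i ⟨(i : ℕ) + d + 1, hm⟩ rfl
      have h2 : u ⟨(i : ℕ) + d + 1, hm⟩ < u j := by
        have hm2 : (i : ℕ) + d + 1 + 1 < n := by omega
        have hj : j = ⟨(i : ℕ) + d + 1 + 1, hm2⟩ := Fin.ext (by simp only [Fin.val_mk]; omega)
        rw [hj]
        exact hadj ((i : ℕ) + d + 1) hm2
      exact h1.trans h2
  intro i j hij
  have : (j : ℕ) = (i : ℕ) + ((j : ℕ) - (i : ℕ) - 1) + 1 := by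
    simp only [Fin.lt_def] at hij; omega
  exact hmono _ i j this

theorem step (ω ω' : LinExt P) {k k1 : Fin (Fintype.card P)}
    (hk : (k : ℕ) + 1 = (k1 : ℕ))
    (hdes : ω'.toEquiv (ω.toEquiv.symm k1) < ω'.toEquiv (ω.toEquiv.symm k)) :
    ∃ ω'' : LinExt P, ω''.toEquiv = ω.toEquiv.trans (Equiv.swap k k1) ∧
      ∃ g : LinExt P → LinExt P, Function.Bijective g ∧
        ∀ σ, DesSet ω σ = DesSet ω'' (g σ) := by
  classical
  set a := ω.toEquiv.symm k with ha
  set b := ω.toEquiv.symm k1 with hb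
  have hωa : ω.toEquiv a = k := ω.toEquiv.apply_symm_apply k
  have hωb : ω.toEquiv b = k1 := ω.toEquiv.apply_symm_apply k1
  have hkval : (k : ℕ) ≠ (k1 : ℕ) := by omega
  have hkne : k ≠ k1 := fun h => hkval (congrArg Fin.val h)
  have habne : a ≠ b := fun h => hkne (by rw [← hωa, h, hωb])
  have hnab : ¬ a < b := fun h => absurd (ω'.strictMono a b h) (not_lt.mpr hdes.le)
  have hnba : ¬ b < a := by
    intro h
    have := ω.strictMono b a h
    rw [hωa, hωb] at this
    simp only [Fin.lt_def] at this
    omega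
  -- the relabeled poset labeling ω''
  have hsm : ∀ x y : P, x < y →
      (ω.toEquiv.trans (Equiv.swap k k1)) x < (ω.toEquiv.trans (Equiv.swap k k1)) y := by
    intro x y hxy
    simp only [Equiv.trans_apply]
    rw [swap_lt_iff hk _ _ ?_ ?_]
    · exact ω.strictMono x y hxy
    · rintro ⟨hx, hy⟩
      apply hnab
      have hxa : x = a := by rw [ha, ← hx, Equiv.symm_apply_apply]
      have hyb : y = b := by rw [hb, ← hy, Equiv.symm_apply_apply]
      rw [← hxa, ← hyb]; exact hxy
    · rintro ⟨hx, hy⟩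
      apply hnba
      have hxb : x = b := by rw [hb, ← hx, Equiv.symm_apply_apply]
      have hya : y = a := by rw [ha, ← hy, Equiv.symm_apply_apply]
      rw [← hxb, ← hya]; exact hxy
  set Ω : LinExt P := ⟨ω.toEquiv.trans (Equiv.swap k k1), hsm⟩ with hΩ
  -- conjugation identity
  have hconj : ∀ z : P, ω.toEquiv (Equiv.swap a b z) = Equiv.swap k k1 (ω.toEquiv z) := by
    intro z
    rcases eq_or_ne z a with rfl | hza
    · rw [Equiv.swap_apply_left, hωb, hωa, Equiv.swap_apply_left]
    rcases eq_or_ne z b with rfl | hzb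
    · rw [Equiv.swap_apply_right, hωa, hωb, Equiv.swap_apply_right]
    · rw [Equiv.swap_apply_of_ne_of_ne hza hzb,
        Equiv.swap_apply_of_ne_of_ne
          (fun h => hza (by rw [ha, ← h, Equiv.symm_apply_apply]))
          (fun h => hzb (by rw [hb, ← h, Equiv.symm_apply_apply]))]
  -- adjacency predicate
  set adj : LinExt P → Prop := fun σ =>
    ((σ.toEquiv a : ℕ) + 1 = (σ.toEquiv b : ℕ)) ∨
      ((σ.toEquiv b : ℕ) + 1 = (σ.toEquiv a : ℕ)) with hadjdef
  have hswapsm : ∀ (σ : LinExt P), adj σ → ∀ x y : P, x < y →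
      ((Equiv.swap a b).trans σ.toEquiv) x < ((Equiv.swap a b).trans σ.toEquiv) y := by
    intro σ hadj x y hxy
    have hval : ∀ z w : P, z ≠ w → (σ.toEquiv z : ℕ) ≠ (σ.toEquiv w : ℕ) :=
      fun z w hzw h => hzw (σ.toEquiv.injective (Fin.ext h))
    have hlt : (σ.toEquiv x : ℕ) < (σ.toEquiv y : ℕ) := σ.strictMono x y hxy
    simp only [Equiv.trans_apply]
    rcases eq_or_ne x a with rfl | hxa
    · have hyb : y ≠ b := fun h => hnab (h ▸ hxy)
      have hya : y ≠ a := fun h => lt_irrefl _ (h ▸ hxy)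
      rw [Equiv.swap_apply_left, Equiv.swap_apply_of_ne_of_ne hya hyb]
      have h2 := hval y b hyb
      simp only [Fin.lt_def]
      rcases hadj with h3 | h3 <;> omega
    rcases eq_or_ne x b with rfl | hxb
    · have hya : y ≠ a := fun h => hnba (h ▸ hxy)
      have hyb : y ≠ b := fun h => lt_irrefl _ (h ▸ hxy)
      rw [Equiv.swap_apply_right, Equiv.swap_apply_of_ne_of_ne hya hyb]
      have h2 := hval y a hya
      simp only [Fin.lt_def]
      rcases hadj with h3 | h3 <;> omega
    rcases eq_or_ne y a with rfl | hya
    · have hxb' := hxb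
      rw [Equiv.swap_apply_left, Equiv.swap_apply_of_ne_of_ne hxa hxb]
      have h2 := hval x b hxb
      simp only [Fin.lt_def]
      rcases hadj with h3 | h3 <;> omega
    rcases eq_or_ne y b with rfl | hyb
    · rw [Equiv.swap_apply_right, Equiv.swap_apply_of_ne_of_ne hxa hxb]
      have h2 := hval x a hxa
      simp only [Fin.lt_def]
      rcases hadj with h3 | h3 <;> omega
    · rw [Equiv.swap_apply_of_ne_of_ne hxa hxb, Equiv.swap_apply_of_ne_of_ne hya hyb]
      exact σ.strictMono x y hxy
  set g : LinExt P → LinExt P := fun σ =>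
    if h : adj σ then ⟨(Equiv.swap a b).trans σ.toEquiv, hswapsm σ h⟩ else σ with hgdef
  have hg_adj : ∀ (σ : LinExt P) (h : adj σ),
      adj (⟨(Equiv.swap a b).trans σ.toEquiv, hswapsm σ h⟩ : LinExt P) := by
    intro σ h
    simp only [hadjdef, Equiv.trans_apply, Equiv.swap_apply_left, Equiv.swap_apply_right]
    exact h.symm
  have hinvol : Function.Involutive g := by
    intro σ
    by_cases h : adj σ
    · have e1 : g σ = ⟨(Equiv.swap a b).trans σ.toEquiv, hswapsm σ h⟩ := dif_pos h
      have h2 := hg_adj σ h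
      rw [e1]
      have e2 : g ⟨(Equiv.swap a b).trans σ.toEquiv, hswapsm σ h⟩ =
          ⟨(Equiv.swap a b).trans ((Equiv.swap a b).trans σ.toEquiv), hswapsm _ h2⟩ :=
        dif_pos h2
      rw [e2]
      apply linext_ext
      ext x
      simp [Equiv.swap_apply_self]
    · have e1 : g σ = σ := dif_neg h
      rw [e1, e1]
  refine ⟨Ω, rfl, g, hinvol.bijective, ?_⟩
  intro σ
  by_cases h : adj σ
  · have e1 : g σ = ⟨(Equiv.swap a b).trans σ.toEquiv, hswapsm σ h⟩ := dif_pos h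
    rw [e1]
    apply desSet_congr
    intro i
    show ω.toEquiv (σ.toEquiv.symm i) =
      (ω.toEquiv.trans (Equiv.swap k k1)) (((Equiv.swap a b).trans σ.toEquiv).symm i)
    simp only [Equiv.symm_trans_apply, Equiv.trans_apply, Equiv.symm_swap]
    rw [hconj, Equiv.swap_apply_self]
  · have e1 : g σ = σ := dif_neg h
    rw [e1]
    have key : ∀ (j : ℕ) (hj : j < Fintype.card P), 1 ≤ j →
        ((Ω.toEquiv (σ.toEquiv.symm ⟨j, hj⟩) <
          Ω.toEquiv (σ.toEquiv.symm ⟨j - 1, Nat.lt_of_le_of_lt (Nat.sub_le j 1) hj⟩)) ↔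
         (ω.toEquiv (σ.toEquiv.symm ⟨j, hj⟩) <
          ω.toEquiv (σ.toEquiv.symm ⟨j - 1, Nat.lt_of_le_of_lt (Nat.sub_le j 1) hj⟩))) := by
      intro j hj h1j
      show (Equiv.swap k k1) (ω.toEquiv _) < (Equiv.swap k k1) (ω.toEquiv _) ↔ _
      apply swap_lt_iff hk
      · rintro ⟨hx, hy⟩
        apply h
        have hxa : σ.toEquiv.symm ⟨j, hj⟩ = a := by
          rw [ha, ← hx, Equiv.symm_apply_apply]
        have hyb : σ.toEquiv.symm ⟨j - 1, Nat.lt_of_le_of_lt (Nat.sub_le j 1) hj⟩ = b := by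
          rw [hb, ← hy, Equiv.symm_apply_apply]
        have e2 : σ.toEquiv a = ⟨j, hj⟩ := by rw [← hxa, Equiv.apply_symm_apply]
        have e3 : σ.toEquiv b = ⟨j - 1, Nat.lt_of_le_of_lt (Nat.sub_le j 1) hj⟩ := by
          rw [← hyb, Equiv.apply_symm_apply]
        right
        rw [e2, e3]
        simp only
        omega
      · rintro ⟨hx, hy⟩
        apply h
        have hxb : σ.toEquiv.symm ⟨j, hj⟩ = b := by
          rw [hb, ← hx, Equiv.symm_apply_apply]
        have hya : σ.toEquiv.symm ⟨j - 1, Nat.lt_of_le_of_lt (Nat.sub_le j 1) hj⟩ = a := by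
          rw [ha, ← hy, Equiv.symm_apply_apply]
        have e2 : σ.toEquiv b = ⟨j, hj⟩ := by rw [← hxb, Equiv.apply_symm_apply]
        have e3 : σ.toEquiv a = ⟨j - 1, Nat.lt_of_le_of_lt (Nat.sub_le j 1) hj⟩ := by
          rw [← hya, Equiv.apply_symm_apply]
        left
        rw [e2, e3]
        simp only
        omega
    ext i
    simp only [DesSet, Set.mem_setOf_eq]
    constructor
    · rintro ⟨h1, h2, h3⟩
      exact ⟨h1, h2, (key i h1 h2).mpr h3⟩
    · rintro ⟨h1, h2, h3⟩
      exact ⟨h1, h2, (key i h1 h2).mp h3⟩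

theorem main (n : ℕ) : ∀ (ω ω' : LinExt P),
    inv (ω.toEquiv.symm.trans ω'.toEquiv) ≤ n →
    ∃ f : LinExt P → LinExt P, Function.Bijective f ∧
      ∀ σ, DesSet ω σ = DesSet ω' (f σ) := by
  have base : ∀ (ω ω' : LinExt P), (∀ i, (ω.toEquiv.symm.trans ω'.toEquiv) i = i) →
      ∃ f : LinExt P → LinExt P, Function.Bijective f ∧
        ∀ σ, DesSet ω σ = DesSet ω' (f σ) := by
    intro ω ω' hid
    refine ⟨id, Function.bijective_id, fun σ => desSet_congr fun i => ?_⟩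
    have := hid (ω.toEquiv (σ.toEquiv.symm i))
    simp only [Equiv.trans_apply, Equiv.symm_apply_apply] at this
    exact this.symm
  induction n with
  | zero =>
    intro ω ω' hle
    exact base ω ω' (eq_id_of_inv_eq_zero _ (Nat.le_zero.mp hle))
  | succ n ih =>
    intro ω ω' hle
    by_cases hid : ∀ i, (ω.toEquiv.symm.trans ω'.toEquiv) i = i
    · exact base ω ω' hid
    · obtain ⟨k, k1, hk, hdes⟩ := exists_descent_of_ne _ hid
      have hdes' : ω'.toEquiv (ω.toEquiv.symm k1) < ω'.toEquiv (ω.toEquiv.symm k) := hdes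
      obtain ⟨ω'', hΩ, g, hgbij, hgdes⟩ := step ω ω' hk hdes'
      have he : ω''.toEquiv.symm.trans ω'.toEquiv =
          (Equiv.swap k k1).trans (ω.toEquiv.symm.trans ω'.toEquiv) := by
        rw [hΩ]
        ext i
        simp [Equiv.symm_swap]
      have hless : inv (ω''.toEquiv.symm.trans ω'.toEquiv) ≤ n := by
        rw [he]
        have := inv_decrease hk (ω.toEquiv.symm.trans ω'.toEquiv) hdes
        omega
      obtain ⟨f, hfbij, hfdes⟩ := ih ω'' ω' hless
      exact ⟨f ∘ g, hfbij.comp hgbij, fun σ => (hgdes σ).trans (hfdes (g σ))⟩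

end DesAux

/-- Theorem: for any finite poset `P` and any two natural labelings `ω`, `ω′`, there is
a bijection `f` on the set of linear extensions of `P` with
`Des_ω(σ) = Des_{ω′}(f(σ))` for all `σ`. -/
theorem exists_bijection_des_natural_labelings (P : Type*) [PartialOrder P] [Fintype P]
    (ω ω' : LinExt P) :
    ∃ f : LinExt P → LinExt P, Function.Bijective f ∧
      ∀ σ : LinExt P, DesSet ω σ = DesSet ω' (f σ) := by
  exact DesAux.main _ ω ω' le_rfl
end

section
/- For every partition λ of N, there exists a bijection f : SYT(λ) → SYT(λ) such that for every T ∈ SYT(λ), Asc(T) = HDes(f(T)); in particular, the set-valued statistics Asc and HDes are equidistributed over SYT(λ). -/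
open Finset

namespace AscHdes
variable (S : Finset ℕ)

lemma exU (v : ℕ) : ∃ k, v + k ∉ S := by
  rcases S.exists_nat_subset_range with ⟨n, hn⟩
  exact ⟨n, fun h => by have := Finset.mem_range.1 (hn h); omega⟩

lemma exD (hS0 : 0 ∉ S) (v : ℕ) : ∃ k, v - 1 - k ∉ S :=
  ⟨v, by simpa using hS0⟩

variable (hS0 : 0 ∉ S)

noncomputable def uu (v : ℕ) : ℕ := Nat.find (exU S v)
noncomputable def dd (v : ℕ) : ℕ := Nat.find (exD S hS0 v)

lemma uu_spec (v : ℕ) : v + uu S v ∉ S := Nat.find_spec (exU S v)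
lemma uu_mem (v j : ℕ) (h : j < uu S v) : v + j ∈ S := by
  have := Nat.find_min (exU S v) h; simpa using this
lemma uu_le (v k : ℕ) (h : v + k ∉ S) : uu S v ≤ k := Nat.find_le h
lemma dd_spec (v : ℕ) : v - 1 - dd S hS0 v ∉ S := Nat.find_spec (exD S hS0 v)
lemma dd_mem (v j : ℕ) (h : j < dd S hS0 v) : v - 1 - j ∈ S := by
  have := Nat.find_min (exD S hS0 v) h; simpa using this
lemma dd_le' (v k : ℕ) (h : v - 1 - k ∉ S) : dd S hS0 v ≤ k := Nat.find_le h

lemma dd_le (v : ℕ) : dd S hS0 v ≤ v - 1 := dd_le' S hS0 v _ (by simpa using hS0)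

noncomputable def sigma (v : ℕ) : ℕ := v + uu S v - dd S hS0 v

lemma block_mem (v t : ℕ) (h1 : v - dd S hS0 v ≤ t) (h2 : t < v + uu S v) : t ∈ S := by
  rcases le_or_gt v t with hvt | hvt
  · have : t = v + (t - v) := by omega
    rw [this]; exact uu_mem S v _ (by omega)
  · have hd := dd_le S hS0 v
    have : t = v - 1 - (v - 1 - t) := by omega
    rw [this]; exact dd_mem S hS0 v _ (by omega)

lemma block_dd_uu (v w : ℕ) (h1 : v - dd S hS0 v ≤ w) (h2 : w ≤ v + uu S v) :
    dd S hS0 w = w - (v - dd S hS0 v) ∧ uu S w = (v + uu S v) - w := by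
  set a := v - dd S hS0 v with ha
  set b := v + uu S v with hb
  have hdv := dd_le S hS0 v
  have huS : b ∉ S := uu_spec S v
  have hA : a - 1 ∉ S := by
    have := dd_spec S hS0 v
    rcases Nat.eq_zero_or_pos a with h0 | h0
    · rw [h0]; simpa using hS0
    · have : v - 1 - dd S hS0 v = a - 1 := by omega
      rw [← this]; exact dd_spec S hS0 v
  constructor
  · refine le_antisymm (dd_le' S hS0 w _ (by rw [show w - 1 - (w - a) = a - 1 from by omega]; exact hA)) ?_
    by_contra hlt
    push_neg at hlt
    exact dd_spec S hS0 w (block_mem S hS0 v (w - 1 - dd S hS0 w) (by omega) (by omega))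
  · refine le_antisymm (uu_le S w _ (by rw [show w + (b - w) = b from by omega]; exact huS)) ?_
    by_contra hlt
    push_neg at hlt
    exact uu_spec S w (block_mem S hS0 v (w + uu S w) (by omega) (by omega))

end AscHdes

namespace AscHdes
variable (S : Finset ℕ) (hS0 : 0 ∉ S)

lemma sigma_invol (v : ℕ) : sigma S hS0 (sigma S hS0 v) = v := by
  have hdv := dd_le S hS0 v
  have h1 : v - dd S hS0 v ≤ sigma S hS0 v := by unfold sigma; omega
  have h2 : sigma S hS0 v ≤ v + uu S v := by unfold sigma; omega
  obtain ⟨e1, e2⟩ := block_dd_uu S hS0 v (sigma S hS0 v) h1 h2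
  unfold sigma at *
  omega

lemma sigma_inj : Function.Injective (sigma S hS0) := by
  intro x y h
  rw [← sigma_invol S hS0 x, h, sigma_invol]

lemma sigma_mem_Icc (N : ℕ) (hSN : ∀ s ∈ S, s + 1 ≤ N) (v : ℕ) (h1 : 1 ≤ v) (h2 : v ≤ N) :
    1 ≤ sigma S hS0 v ∧ sigma S hS0 v ≤ N := by
  have hdv := dd_le S hS0 v
  constructor
  · unfold sigma; omega
  · rcases Nat.eq_zero_or_pos (uu S v) with h0 | h0
    · unfold sigma; omega
    · have : v + (uu S v - 1) ∈ S := uu_mem S v _ (by omega)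
      have := hSN _ this
      unfold sigma; omega

lemma sigma_bijOn (N : ℕ) (hSN : ∀ s ∈ S, s + 1 ≤ N) : Set.BijOn (sigma S hS0) (Set.Icc 1 N) (Set.Icc 1 N) := by
  refine ⟨fun v hv => ?_, fun x _ y _ h => sigma_inj S hS0 h, fun w hw => ?_⟩
  · obtain ⟨a, b⟩ := sigma_mem_Icc S hS0 N hSN v hv.1 hv.2
    exact ⟨a, b⟩
  · obtain ⟨a, b⟩ := sigma_mem_Icc S hS0 N hSN w hw.1 hw.2
    exact ⟨sigma S hS0 w, ⟨a, b⟩, sigma_invol S hS0 w⟩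

lemma cross_block (x y z : ℕ) (hxz : x ≤ z) (hzy : z < y) (hz : z ∉ S) :
    sigma S hS0 x ≤ z ∧ z < sigma S hS0 y := by
  have hux : uu S x ≤ z - x := uu_le S x _ (by rw [show x + (z - x) = z from by omega]; exact hz)
  have hdy : dd S hS0 y ≤ y - 1 - z := dd_le' S hS0 y _ (by rw [show y - 1 - (y - 1 - z) = z from by omega]; exact hz)
  have := dd_le S hS0 x
  have := dd_le S hS0 y
  constructor <;> (unfold sigma; omega)

lemma sigma_step (i : ℕ) (hi : i ∈ S) :
    sigma S hS0 i = sigma S hS0 (i + 1) + 1 ∧ sigma S hS0 (i + 1) ∈ S := by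
  have hi1 : 1 ≤ i := by
    rcases Nat.eq_zero_or_pos i with h | h
    · exact absurd (h ▸ hi) hS0
    · exact h
  have hu : 1 ≤ uu S i := by
    by_contra h
    push_neg at h
    have h0 : uu S i = 0 := by omega
    have := uu_spec S i
    rw [h0] at this; simp at this; exact this hi
  have hdv := dd_le S hS0 i
  obtain ⟨e1, e2⟩ := block_dd_uu S hS0 i (i + 1) (by omega) (by omega)
  have hstep : sigma S hS0 i = sigma S hS0 (i + 1) + 1 := by unfold sigma; omega
  refine ⟨hstep, ?_⟩
  refine block_mem S hS0 i (sigma S hS0 (i + 1)) ?_ ?_ <;> (unfold sigma at *; omega)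

end AscHdes

namespace AscHdes

lemma mem_ydCells {lam : List ℕ} {r c : ℕ} :
    (r, c) ∈ ydCells lam ↔ r < lam.length ∧ c < lam.getD r 0 := by
  simp only [ydCells, Finset.mem_biUnion, Finset.mem_range, Finset.mem_image]
  constructor
  · rintro ⟨r', hr', c', hc', h⟩
    obtain ⟨rfl, rfl⟩ : r' = r ∧ c' = c := by
      constructor <;> [exact (Prod.mk.injEq _ _ _ _ ▸ h).1; exact (Prod.mk.injEq _ _ _ _ ▸ h).2]
    exact ⟨hr', hc'⟩
  · rintro ⟨h1, h2⟩
    exact ⟨r, h1, c, h2, rfl⟩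

lemma cell_up {lam : List ℕ} (hlam : IsPartition lam) {r c r' : ℕ}
    (hr : r' ≤ r) (h : (r, c) ∈ ydCells lam) : (r', c) ∈ ydCells lam := by
  rw [mem_ydCells] at h ⊢
  refine ⟨lt_of_le_of_lt hr h.1, lt_of_lt_of_le h.2 ?_⟩
  have hr' : r' < lam.length := lt_of_le_of_lt hr h.1
  have := hlam.1.rel_get_of_le (a := ⟨r', hr'⟩) (b := ⟨r, h.1⟩) (by exact hr)
  rw [List.getD_eq_getElem _ _ h.1, List.getD_eq_getElem _ _ hr']
  simpa using this

lemma cell_left {lam : List ℕ} {r c c' : ℕ}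
    (hc : c' ≤ c) (h : (r, c) ∈ ydCells lam) : (r, c') ∈ ydCells lam := by
  rw [mem_ydCells] at h ⊢
  exact ⟨h.1, lt_of_le_of_lt (by omega) h.2⟩

lemma SYT.ext' {lam : List ℕ} {T U : SYT lam} (h : T.entry = U.entry) : T = U := by
  cases T; cases U; simpa using h

/-- entry is strictly increasing going down a column (not just one step). -/
lemma entry_lt_of_row_lt {lam : List ℕ} (hlam : IsPartition lam) (T : SYT lam)
    {r r' c : ℕ} (hrr : r' < r) (h : (r, c) ∈ ydCells lam) :
    T.entry (r', c) < T.entry (r, c) := by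
  induction r with
  | zero => omega
  | succ n ih =>
    have hmem : (n, c) ∈ ydCells lam := cell_up hlam (by omega) h
    have hstep : T.entry (n, c) < T.entry (n + 1, c) := T.col_incr n c h
    rcases Nat.lt_or_ge r' n with h' | h'
    · exact lt_trans (ih h' hmem) hstep
    · have : r' = n := by omega
      rw [this]; exact hstep

lemma entry_lt_of_col_lt {lam : List ℕ} (T : SYT lam)
    {r c c' : ℕ} (hcc : c' < c) (h : (r, c) ∈ ydCells lam) :
    T.entry (r, c') < T.entry (r, c) := by
  induction c with
  | zero => omega
  | succ n ih =>
    have hmem : (r, n) ∈ ydCells lam := cell_left (by omega) h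
    have hstep : T.entry (r, n) < T.entry (r, n + 1) := T.row_incr r n h
    rcases Nat.lt_or_ge c' n with h' | h'
    · exact lt_trans (ih h' hmem) hstep
    · have : c' = n := by omega
      rw [this]; exact hstep

/-- An ascent step goes strictly up AND strictly right. -/
lemma ascent_col {lam : List ℕ} (hlam : IsPartition lam) (T : SYT lam)
    {p q : ℕ × ℕ} (hp : p ∈ ydCells lam) (hq : q ∈ ydCells lam)
    (hqp : T.entry q = T.entry p + 1) (hrow : q.1 < p.1) : p.2 < q.2 := by
  by_contra hcol
  push_neg at hcol
  obtain ⟨r, c⟩ := p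
  obtain ⟨r', c'⟩ := q
  simp only at hrow hcol hqp ⊢
  have hmem : (r', c) ∈ ydCells lam := cell_up hlam (le_of_lt hrow) hp
  have h1 : T.entry (r', c) < T.entry (r, c) := entry_lt_of_row_lt hlam T hrow hp
  rcases Nat.lt_or_ge c' c with h' | h'
  · have h2 : T.entry (r', c') < T.entry (r', c) := entry_lt_of_col_lt T h' hmem
    omega
  · have : c' = c := by omega
    subst this
    omega

end AscHdes

namespace AscHdes

variable {lam : List ℕ}

noncomputable def posv (T : SYT lam) (v : ℕ) : ℕ × ℕ :=
  if h : ∃ p ∈ ydCells lam, T.entry p = v then h.choose else (0, 0)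

lemma posv_spec (T : SYT lam) {v : ℕ} (h1 : 1 ≤ v) (h2 : v ≤ lam.sum) :
    posv T v ∈ ydCells lam ∧ T.entry (posv T v) = v := by
  have hex : ∃ p ∈ ydCells lam, T.entry p = v := by
    have hv : v ∈ Set.Icc 1 lam.sum := Set.mem_Icc.2 ⟨h1, h2⟩
    obtain ⟨p, hp, hep⟩ := T.bijOn.2.2 hv
    exact ⟨p, hp, hep⟩
  rw [posv, dif_pos hex]
  exact ⟨hex.choose_spec.1, hex.choose_spec.2⟩

lemma entry_mem (T : SYT lam) {p : ℕ × ℕ} (hp : p ∈ ydCells lam) :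
    1 ≤ T.entry p ∧ T.entry p ≤ lam.sum := T.bijOn.1 hp

lemma posv_entry (T : SYT lam) {p : ℕ × ℕ} (hp : p ∈ ydCells lam) :
    posv T (T.entry p) = p := by
  obtain ⟨h1, h2⟩ := entry_mem T hp
  obtain ⟨hq, he⟩ := posv_spec T h1 h2
  exact T.bijOn.2.1 hq hp he

lemma mem_ascSet_iff (T : SYT lam) {i : ℕ} :
    i ∈ ascSet lam T ↔ (1 ≤ i ∧ i ≤ lam.sum - 1) ∧ (posv T (i + 1)).1 < (posv T i).1 := by
  classical
  rw [ascSet, Finset.mem_filter, Finset.mem_Icc]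
  constructor
  · rintro ⟨⟨h1, h2⟩, p, hp, q, hq, hep, heq, hlt⟩
    have hpp : posv T i = p := by rw [← hep]; exact posv_entry T hp
    have hqq : posv T (i + 1) = q := by rw [← heq]; exact posv_entry T hq
    rw [hpp, hqq]
    exact ⟨⟨h1, h2⟩, hlt⟩
  · rintro ⟨⟨h1, h2⟩, hlt⟩
    have hN : i + 1 ≤ lam.sum := by omega
    obtain ⟨hpm, hpe⟩ := posv_spec T h1 (by omega)
    obtain ⟨hqm, hqe⟩ := posv_spec T (v := i + 1) (by omega) hN
    exact ⟨⟨h1, h2⟩, posv T i, hpm, posv T (i + 1), hqm, hpe, hqe, hlt⟩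

lemma mem_hdesSet_iff (T : SYT lam) {i : ℕ} :
    i ∈ hdesSet lam T ↔ (1 ≤ i ∧ i ≤ lam.sum - 1) ∧
      (posv T i).1 < (posv T (i + 1)).1 ∧ (posv T (i + 1)).2 < (posv T i).2 := by
  classical
  rw [hdesSet, Finset.mem_filter, Finset.mem_Icc]
  constructor
  · rintro ⟨⟨h1, h2⟩, p, hp, q, hq, hep, heq, hlt1, hlt2⟩
    have hpp : posv T i = p := by rw [← hep]; exact posv_entry T hp
    have hqq : posv T (i + 1) = q := by rw [← heq]; exact posv_entry T hq
    rw [hpp, hqq]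
    exact ⟨⟨h1, h2⟩, hlt1, hlt2⟩
  · rintro ⟨⟨h1, h2⟩, hlt1, hlt2⟩
    have hN : i + 1 ≤ lam.sum := by omega
    obtain ⟨hpm, hpe⟩ := posv_spec T h1 (by omega)
    obtain ⟨hqm, hqe⟩ := posv_spec T (v := i + 1) (by omega) hN
    exact ⟨⟨h1, h2⟩, posv T i, hpm, posv T (i + 1), hqm, hpe, hqe, hlt1, hlt2⟩

/-- Along a run of ascents, rows strictly decrease and columns strictly increase. -/
lemma chainA (hlam : IsPartition lam) (T : SYT lam) {x y : ℕ}
    (hxy : x < y) (hy : y ≤ lam.sum)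
    (h : ∀ t, x ≤ t → t < y → t ∈ ascSet lam T) :
    (posv T y).1 < (posv T x).1 ∧ (posv T x).2 < (posv T y).2 := by
  induction y with
  | zero => omega
  | succ n ih =>
    have hstep : n ∈ ascSet lam T := h n (by omega) (by omega)
    obtain ⟨⟨hn1, hn2⟩, hrow⟩ := (mem_ascSet_iff T).1 hstep
    have hnN : n + 1 ≤ lam.sum := by omega
    obtain ⟨hqm, hqe⟩ := posv_spec T (v := n + 1) (by omega) hnN
    obtain ⟨hpm, hpe⟩ := posv_spec T (v := n) hn1 (by omega)
    have hcol : (posv T n).2 < (posv T (n + 1)).2 :=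
      ascent_col hlam T hpm hqm (by rw [hpe, hqe]) hrow
    rcases Nat.lt_or_ge x n with h' | h'
    · obtain ⟨ih1, ih2⟩ := ih h' (by omega) (fun t ht1 ht2 => h t ht1 (by omega))
      exact ⟨lt_trans hrow ih1, lt_trans ih2 hcol⟩
    · have : x = n := by omega
      subst this
      exact ⟨hrow, hcol⟩

/-- Along a run of high descents, rows strictly increase and columns strictly decrease. -/
lemma chainH (T : SYT lam) {x y : ℕ}
    (hxy : x < y)
    (h : ∀ t, x ≤ t → t < y → t ∈ hdesSet lam T) :
    (posv T x).1 < (posv T y).1 ∧ (posv T y).2 < (posv T x).2 := by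
  induction y with
  | zero => omega
  | succ n ih =>
    have hstep : n ∈ hdesSet lam T := h n (by omega) (by omega)
    obtain ⟨⟨hn1, hn2⟩, hrow, hcol⟩ := (mem_hdesSet_iff T).1 hstep
    rcases Nat.lt_or_ge x n with h' | h'
    · obtain ⟨ih1, ih2⟩ := ih h' (fun t ht1 ht2 => h t ht1 (by omega))
      exact ⟨lt_trans ih1 hrow, lt_trans hcol ih2⟩
    · have : x = n := by omega
      subst this
      exact ⟨hrow, hcol⟩

instance : Finite (SYT lam) := by
  have hinj : Function.Injective
      (fun T : SYT lam => (fun p : {x // x ∈ ydCells lam} =>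
        (⟨T.entry p.1, Nat.lt_succ_of_le (entry_mem T p.2).2⟩ : Fin (lam.sum + 1)))) := by
    intro T U h
    apply SYT.ext'
    funext p
    by_cases hp : p ∈ ydCells lam
    · have := congrFun h ⟨p, hp⟩
      simpa using congrArg Fin.val this
    · rw [T.zero_outside p hp, U.zero_outside p hp]
  exact Finite.of_injective _ hinj

end AscHdes

namespace AscHdes

variable {lam : List ℕ}

section Phi

variable (S : Finset ℕ)

lemma hS_zero (hS : S ⊆ Finset.Icc 1 (lam.sum - 1)) : 0 ∉ S := fun h => by simpa using hS h

lemma hS_N (hS : S ⊆ Finset.Icc 1 (lam.sum - 1)) : ∀ s ∈ S, s + 1 ≤ lam.sum := by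
  intro s hs
  have := Finset.mem_Icc.1 (hS hs)
  omega

lemma sigma_zero (hS : S ⊆ Finset.Icc 1 (lam.sum - 1)) : sigma S (hS_zero S hS) 0 = 0 := by
  have h1 : uu S 0 = 0 := Nat.le_zero.1 (uu_le S 0 0 (by simpa using hS_zero S hS))
  unfold sigma
  omega

lemma sigma_mono (hS : S ⊆ Finset.Icc 1 (lam.sum - 1)) (hlam : IsPartition lam) (T : SYT lam)
    (hsub : S ⊆ ascSet lam T ∨ S ⊆ hdesSet lam T)
    {p q : ℕ × ℕ} (hp : p ∈ ydCells lam) (hq : q ∈ ydCells lam)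
    (hxy : T.entry p < T.entry q)
    (hadj : (q.1 = p.1 ∧ q.2 = p.2 + 1) ∨ (q.1 = p.1 + 1 ∧ q.2 = p.2)) :
    sigma S (hS_zero S hS) (T.entry p) < sigma S (hS_zero S hS) (T.entry q) := by
  set x := T.entry p with hx
  set y := T.entry q with hy
  by_cases hall : ∀ t, x ≤ t → t < y → t ∈ S
  · exfalso
    have hpx : posv T x = p := posv_entry T hp
    have hqy : posv T y = q := posv_entry T hq
    rcases hsub with hA | hH
    · obtain ⟨h1, _⟩ := chainA hlam T hxy (entry_mem T hq).2
        (fun t ht1 ht2 => hA (hall t ht1 ht2))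
      rw [hpx, hqy] at h1
      omega
    · obtain ⟨_, h2⟩ := chainH T hxy (fun t ht1 ht2 => hH (hall t ht1 ht2))
      rw [hpx, hqy] at h2
      omega
  · push_neg at hall
    obtain ⟨z, hz1, hz2, hz3⟩ := hall
    obtain ⟨ha, hb⟩ := cross_block S (hS_zero S hS) x y z hz1 hz2 hz3
    omega

noncomputable def Phi (hS : S ⊆ Finset.Icc 1 (lam.sum - 1)) (hlam : IsPartition lam) (T : SYT lam)
    (hsub : S ⊆ ascSet lam T ∨ S ⊆ hdesSet lam T) : SYT lam where
  entry := sigma S (hS_zero S hS) ∘ T.entry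
  zero_outside p hp := by
    simp only [Function.comp_apply, T.zero_outside p hp]
    exact sigma_zero S hS
  bijOn := (sigma_bijOn S (hS_zero S hS) lam.sum (hS_N S hS)).comp T.bijOn
  row_incr r c h :=
    sigma_mono S hS hlam T hsub (cell_left (Nat.le_succ c) h) h (T.row_incr r c h) (by simp)
  col_incr r c h :=
    sigma_mono S hS hlam T hsub (cell_up hlam (Nat.le_succ r) h) h (T.col_incr r c h) (by simp)

lemma Phi_Phi (hS : S ⊆ Finset.Icc 1 (lam.sum - 1)) (hlam : IsPartition lam) (T : SYT lam) (h1 h2) :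
    Phi S hS hlam (Phi S hS hlam T h1) h2 = T := by
  apply SYT.ext'
  funext p
  exact sigma_invol S (hS_zero S hS) (T.entry p)

lemma Phi_hdes (hS : S ⊆ Finset.Icc 1 (lam.sum - 1)) (hlam : IsPartition lam) (T : SYT lam) (hA : S ⊆ ascSet lam T) :
    S ⊆ hdesSet lam (Phi S hS hlam T (Or.inl hA)) := by
  classical
  intro i hi
  have hiIcc := Finset.mem_Icc.1 (hS hi)
  obtain ⟨hstep, hmem⟩ := sigma_step S (hS_zero S hS) i hi
  set x := sigma S (hS_zero S hS) (i + 1) with hxdef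
  have hxIcc := Finset.mem_Icc.1 (hS hmem)
  have hx1 : 1 ≤ x := hxIcc.1
  have hxN : x + 1 ≤ lam.sum := by omega
  obtain ⟨hr, hc⟩ := chainA hlam T (show x < x + 1 by omega) hxN
    (fun t ht1 ht2 => by
      have : t = x := by omega
      exact hA (this ▸ hmem))
  obtain ⟨hpm, hpe⟩ := posv_spec T (v := x + 1) (by omega) hxN
  obtain ⟨hqm, hqe⟩ := posv_spec T (v := x) hx1 (by omega)
  rw [hdesSet, Finset.mem_filter, Finset.mem_Icc]
  refine ⟨⟨hiIcc.1, hiIcc.2⟩, posv T (x + 1), hpm, posv T x, hqm, ?_, ?_, hr, hc⟩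
  · show sigma S (hS_zero S hS) (T.entry (posv T (x + 1))) = i
    rw [hpe, ← hstep, sigma_invol]
  · show sigma S (hS_zero S hS) (T.entry (posv T x)) = i + 1
    rw [hqe, hxdef, sigma_invol]

lemma Phi_asc (hS : S ⊆ Finset.Icc 1 (lam.sum - 1)) (hlam : IsPartition lam) (T : SYT lam) (hH : S ⊆ hdesSet lam T) :
    S ⊆ ascSet lam (Phi S hS hlam T (Or.inr hH)) := by
  classical
  intro i hi
  have hiIcc := Finset.mem_Icc.1 (hS hi)
  obtain ⟨hstep, hmem⟩ := sigma_step S (hS_zero S hS) i hi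
  set x := sigma S (hS_zero S hS) (i + 1) with hxdef
  have hxIcc := Finset.mem_Icc.1 (hS hmem)
  have hx1 : 1 ≤ x := hxIcc.1
  have hxN : x + 1 ≤ lam.sum := by omega
  obtain ⟨hr, hc⟩ := chainH T (show x < x + 1 by omega)
    (fun t ht1 ht2 => by
      have : t = x := by omega
      exact hH (this ▸ hmem))
  obtain ⟨hpm, hpe⟩ := posv_spec T (v := x + 1) (by omega) hxN
  obtain ⟨hqm, hqe⟩ := posv_spec T (v := x) hx1 (by omega)
  rw [ascSet, Finset.mem_filter, Finset.mem_Icc]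
  refine ⟨⟨hiIcc.1, hiIcc.2⟩, posv T (x + 1), hpm, posv T x, hqm, ?_, ?_, hr⟩
  · show sigma S (hS_zero S hS) (T.entry (posv T (x + 1))) = i
    rw [hpe, ← hstep, sigma_invol]
  · show sigma S (hS_zero S hS) (T.entry (posv T x)) = i + 1
    rw [hqe, hxdef, sigma_invol]

end Phi

end AscHdes

namespace AscHdes

section Counting

open Classical

variable {lam : List ℕ} [Fintype (SYT lam)]

lemma card_superset_eq (hlam : IsPartition lam) (S : Finset ℕ)
    (hS : S ⊆ Finset.Icc 1 (lam.sum - 1)) :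
    (Finset.univ.filter (fun T : SYT lam => S ⊆ ascSet lam T)).card =
      (Finset.univ.filter (fun T : SYT lam => S ⊆ hdesSet lam T)).card := by
  refine Finset.card_bij'
    (i := fun T hT => Phi S hS hlam T (Or.inl (Finset.mem_filter.1 hT).2))
    (j := fun T hT => Phi S hS hlam T (Or.inr (Finset.mem_filter.1 hT).2))
    ?_ ?_ ?_ ?_
  · intro T hT
    exact Finset.mem_filter.2
      ⟨Finset.mem_univ _, Phi_hdes S hS hlam T (Finset.mem_filter.1 hT).2⟩
  · intro T hT
    exact Finset.mem_filter.2
      ⟨Finset.mem_univ _, Phi_asc S hS hlam T (Finset.mem_filter.1 hT).2⟩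
  · intro T hT
    exact Phi_Phi S hS hlam T _ _
  · intro T hT
    exact Phi_Phi S hS hlam T _ _

lemma ascSet_subset (T : SYT lam) :
    ascSet lam T ⊆ Finset.Icc 1 (lam.sum - 1) := Finset.filter_subset _ _

lemma hdesSet_subset (T : SYT lam) :
    hdesSet lam T ⊆ Finset.Icc 1 (lam.sum - 1) := Finset.filter_subset _ _

lemma sum_fibers (g : SYT lam → Finset ℕ)
    (hg : ∀ T, g T ⊆ Finset.Icc 1 (lam.sum - 1)) (S : Finset ℕ)
    (hS : S ⊆ Finset.Icc 1 (lam.sum - 1)) :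
    (Finset.univ.filter (fun T : SYT lam => S ⊆ g T)).card =
      ∑ S' ∈ (Finset.Icc 1 (lam.sum - 1)).powerset.filter (fun S' => S ⊆ S'),
        (Finset.univ.filter (fun T : SYT lam => g T = S')).card := by
  rw [Finset.card_eq_sum_card_fiberwise (f := fun T => g T)
    (t := (Finset.Icc 1 (lam.sum - 1)).powerset.filter (fun S' => S ⊆ S'))
    (fun T hT => Finset.mem_filter.2
      ⟨Finset.mem_powerset.2 (hg T), (Finset.mem_filter.1 hT).2⟩)]
  apply Finset.sum_congr rfl
  intro S' hS'
  congr 1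
  rw [Finset.filter_filter]
  apply Finset.filter_congr
  intro T _
  have hsub : S ⊆ S' := (Finset.mem_filter.1 hS').2
  constructor
  · rintro ⟨_, h⟩; exact h
  · intro h
    refine ⟨?_, h⟩
    show S ⊆ g T
    rw [h]; exact hsub

lemma card_fiber_eq (hlam : IsPartition lam) (S : Finset ℕ) :
    (Finset.univ.filter (fun T : SYT lam => ascSet lam T = S)).card =
      (Finset.univ.filter (fun T : SYT lam => hdesSet lam T = S)).card := by
  set I := Finset.Icc 1 (lam.sum - 1) with hI
  by_cases hS : S ⊆ I
  case neg =>
    rw [Finset.filter_false_of_mem, Finset.filter_false_of_mem]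
    · exact fun T _ h => hS (h ▸ hdesSet_subset T)
    · exact fun T _ h => hS (h ▸ ascSet_subset T)
  case pos =>
    have key : ∀ k : ℕ, ∀ S : Finset ℕ, S ⊆ I → I.card - S.card ≤ k →
        (Finset.univ.filter (fun T : SYT lam => ascSet lam T = S)).card =
          (Finset.univ.filter (fun T : SYT lam => hdesSet lam T = S)).card := by
      intro k
      induction k with
      | zero =>
        intro S hSsub hcard
        have hSI : S = I := Finset.eq_of_subset_of_card_le hSsub (by
          have := Finset.card_le_card hSsub
          omega)
        have e1 : (Finset.univ.filter (fun T : SYT lam => ascSet lam T = S)) =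
            (Finset.univ.filter (fun T : SYT lam => S ⊆ ascSet lam T)) := by
          apply Finset.filter_congr
          intro T _
          exact ⟨fun h => by rw [h], fun h => Finset.Subset.antisymm (hSI ▸ ascSet_subset T) h⟩
        have e2 : (Finset.univ.filter (fun T : SYT lam => hdesSet lam T = S)) =
            (Finset.univ.filter (fun T : SYT lam => S ⊆ hdesSet lam T)) := by
          apply Finset.filter_congr
          intro T _
          exact ⟨fun h => by rw [h], fun h => Finset.Subset.antisymm (hSI ▸ hdesSet_subset T) h⟩
        rw [e1, e2]
        exact card_superset_eq hlam S hSsub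
      | succ n ih =>
        intro S hSsub hcard
        by_cases hle : I.card - S.card ≤ n
        · exact ih S hSsub hle
        set P := I.powerset.filter (fun S' => S ⊆ S') with hP
        have hSP : S ∈ P :=
          Finset.mem_filter.2 ⟨Finset.mem_powerset.2 hSsub, Finset.Subset.refl _⟩
        have hF := sum_fibers (fun T => ascSet lam T) ascSet_subset S hSsub
        have hG := sum_fibers (fun T => hdesSet lam T) hdesSet_subset S hSsub
        have hFG := card_superset_eq hlam S hSsub
        beta_reduce at hF hG
        rw [← Finset.add_sum_erase _ _ hSP] at hF hG
        have hrest : ∑ S' ∈ P.erase S,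
            (Finset.univ.filter (fun T : SYT lam => ascSet lam T = S')).card =
            ∑ S' ∈ P.erase S,
            (Finset.univ.filter (fun T : SYT lam => hdesSet lam T = S')).card := by
          apply Finset.sum_congr rfl
          intro S' hS'
          have hne : S' ≠ S := (Finset.mem_erase.1 hS').1
          have hS'P := (Finset.mem_erase.1 hS').2
          have hS'I : S' ⊆ I := Finset.mem_powerset.1 (Finset.mem_filter.1 hS'P).1
          have hSS' : S ⊆ S' := (Finset.mem_filter.1 hS'P).2
          have hlt : S.card < S'.card :=
            Finset.card_lt_card (Finset.ssubset_iff_subset_ne.2 ⟨hSS', (Ne.symm hne)⟩)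
          have hcard' : I.card - S'.card ≤ n := by
            have := Finset.card_le_card hS'I
            omega
          exact ih S' hS'I hcard'
        omega
    exact key (I.card - S.card) S hS le_rfl

end Counting

end AscHdes

namespace AscHdes

open Classical in
lemma exists_bij_aux {lam : List ℕ} [Fintype (SYT lam)] (hlam : IsPartition lam) :
    ∃ f : SYT lam → SYT lam, Function.Bijective f ∧
      ∀ T : SYT lam, ascSet lam T = hdesSet lam (f T) := by
  have hcard : ∀ S : Finset ℕ,
      Fintype.card {T : SYT lam // ascSet lam T = S} =
        Fintype.card {T : SYT lam // hdesSet lam T = S} := by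
    intro S
    rw [Fintype.card_subtype, Fintype.card_subtype]
    exact card_fiber_eq hlam S
  let e1 : SYT lam ≃ Σ S : Finset ℕ, {T : SYT lam // ascSet lam T = S} :=
    (Equiv.sigmaFiberEquiv (fun T : SYT lam => ascSet lam T)).symm
  let e2 : (Σ S : Finset ℕ, {T : SYT lam // ascSet lam T = S}) ≃
      Σ S : Finset ℕ, {T : SYT lam // hdesSet lam T = S} :=
    Equiv.sigmaCongrRight (fun S => Fintype.equivOfCardEq (hcard S))
  let e3 : (Σ S : Finset ℕ, {T : SYT lam // hdesSet lam T = S}) ≃ SYT lam :=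
    Equiv.sigmaFiberEquiv (fun T : SYT lam => hdesSet lam T)
  refine ⟨(e1.trans e2).trans e3, ((e1.trans e2).trans e3).bijective, fun T => ?_⟩
  have h3 : ∀ x : Σ S : Finset ℕ, {T : SYT lam // hdesSet lam T = S},
      hdesSet lam (e3 x) = x.1 := fun x => x.2.2
  have h2 : ∀ x : Σ S : Finset ℕ, {T : SYT lam // ascSet lam T = S},
      (e2 x).1 = x.1 := fun x => rfl
  have h1 : (e1 T).1 = ascSet lam T := rfl
  calc ascSet lam T = (e2 (e1 T)).1 := by rw [h2, h1]
    _ = hdesSet lam (e3 (e2 (e1 T))) := (h3 _).symm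
    _ = hdesSet lam (((e1.trans e2).trans e3) T) := rfl

end AscHdes

/-- Theorem: for every partition `λ` there is a bijection `f` on `SYT(λ)` such that
`Asc(T) = HDes(f(T))` for every `T`; in particular `Asc` and `HDes` are equidistributed
over `SYT(λ)`. -/
theorem exists_bijection_Asc_HDes (lam : List ℕ) (hlam : IsPartition lam) :
    ∃ f : SYT lam → SYT lam, Function.Bijective f ∧
      ∀ T : SYT lam, ascSet lam T = hdesSet lam (f T) := by
  letI : Fintype (SYT lam) := Fintype.ofFinite _
  exact AscHdes.exists_bij_aux hlam
end
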